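/- arXiv:1512.08141 — 5 statements merged into one kernel-verified Lean document; each statement's English description precedes it below -/
import Mathlib

section
/- Let n and d be integers with n ≥ 2d ≥ 2, and let G = C_n(1,2,...,d) be the circulant graph with generating set {1,2,...,d}. Then G satisfies Serre's condition S_2 if and only if (n ≤ 3d+2 and n ≠ 2d+2) or n = 4d+3. -/
/-- The circulant graph `C_n(S)` on vertex set `ZMod n`: `i` and `j` are adjacent
iff `i ≠ j` and `|i-j| ∈ S` or `n - |i-j| ∈ S` (encoded via `ZMod` subtraction). -/
def circulantGraph (n : ℕ) (S : Set ℕ) : SimpleGraph (ZMod n) where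
  Adj i j := i ≠ j ∧ ((i - j).val ∈ S ∨ (j - i).val ∈ S)
  symm := ⟨fun i j h => ⟨h.1.symm, h.2.symm⟩⟩
  loopless := ⟨fun i h => h.1 rfl⟩

/-- An (abstract) simplicial complex on vertex type `V`, as a downward closed
family of finite subsets of `V`. -/
def IsComplex {V : Type*} (Δ : Set (Finset V)) : Prop :=
  ∀ F ∈ Δ, ∀ G ⊆ F, G ∈ Δ

/-- The link of a face `F` in the complex `Δ`. -/
def linkC {V : Type*} [DecidableEq V] (Δ : Set (Finset V)) (F : Finset V) : Set (Finset V) :=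
  {G | Disjoint G F ∧ G ∪ F ∈ Δ}

/-- A complex is connected if any two of its vertices can be joined by a path
of 1-dimensional faces. -/
def ComplexConnected {V : Type*} [DecidableEq V] (Δ : Set (Finset V)) : Prop :=
  ∀ u, ({u} : Finset V) ∈ Δ → ∀ w, ({w} : Finset V) ∈ Δ →
    Relation.ReflTransGen (fun a b => a ≠ b ∧ ({a, b} : Finset V) ∈ Δ) u w

/-- Serre's condition `S₂` for a simplicial complex: the link of every face of the
complex whose link has dimension at least `1` is connected. -/
def IsS2 {V : Type*} [DecidableEq V] (Δ : Set (Finset V)) : Prop :=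
  ∀ F ∈ Δ, (∃ G ∈ linkC Δ F, 2 ≤ G.card) → ComplexConnected (linkC Δ F)

/-- The independence complex of a graph: faces are the (finite) independent sets. -/
def IndComplex {V : Type*} (G : SimpleGraph V) : Set (Finset V) :=
  {F | ∀ u ∈ F, ∀ v ∈ F, ¬ G.Adj u v}

/-- A graph is `S₂` if its independence complex is `S₂`. -/
def GraphS2 {V : Type*} [DecidableEq V] (G : SimpleGraph V) : Prop :=
  IsS2 (IndComplex G)

/-- The facets (maximal faces) of a complex. -/
def facetsOf {V : Type*} (Δ : Set (Finset V)) : Set (Finset V) :=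
  {F | F ∈ Δ ∧ ∀ G ∈ Δ, F ⊆ G → F = G}

/-- A graph is well-covered if all its maximal independent sets have the same cardinality. -/
def WellCovered {V : Type*} (G : SimpleGraph V) : Prop :=
  ∀ A ∈ facetsOf (IndComplex G), ∀ B ∈ facetsOf (IndComplex G), A.card = B.card

/-- A complex is pure if all its facets have the same cardinality. -/
def IsPure {V : Type*} (Δ : Set (Finset V)) : Prop :=
  ∀ F ∈ facetsOf Δ, ∀ G ∈ facetsOf Δ, F.card = G.card

/-- `L` is a shelling order of `Δ`: a linear order `F₁, …, Fₛ` of all the facets of `Δ`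
such that for all `i < j` there are `v ∈ Fⱼ \ Fᵢ` and `l < j` with `Fⱼ \ F_l = {v}`. -/
def IsShellingOrder {V : Type*} [DecidableEq V] (Δ : Set (Finset V)) (L : List (Finset V)) : Prop :=
  L.Nodup ∧ (∀ F, F ∈ facetsOf Δ ↔ F ∈ L) ∧
    ∀ i j : Fin L.length, i < j →
      ∃ v ∈ L.get j \ L.get i, ∃ l : Fin L.length, l < j ∧ L.get j \ L.get l = {v}

/-- A complex is shellable if its facets admit a shelling order. -/
def IsShellable {V : Type*} [DecidableEq V] (Δ : Set (Finset V)) : Prop :=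
  ∃ L : List (Finset V), IsShellingOrder Δ L

/-- A pure complex is strongly connected if any two facets are joined by a sequence of
facets in which consecutive facets intersect in one element fewer than their cardinality. -/
def StronglyConnectedComplex {V : Type*} [DecidableEq V] (Δ : Set (Finset V)) : Prop :=
  ∀ F ∈ facetsOf Δ, ∀ F' ∈ facetsOf Δ,
    Relation.ReflTransGen
      (fun A B => A ∈ facetsOf Δ ∧ B ∈ facetsOf Δ ∧ (A ∩ B).card = A.card - 1) F F'

/-- The join of two simplicial complexes (on disjoint vertex sets). -/
def joinC {V : Type*} [DecidableEq V] (Δ₁ Δ₂ : Set (Finset V)) : Set (Finset V) :=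
  {F | ∃ F₁ ∈ Δ₁, ∃ F₂ ∈ Δ₂, F = F₁ ∪ F₂}

/-- The generating set of the one-paired circulant graph `C(n; a, b)`. -/
def onePairedSet (n a b : ℕ) : Set ℕ :=
  {d | 1 ≤ d ∧ d ≤ n / 2 ∧ a ∣ d ∧ ¬ (a * b ∣ d)}


namespace CircAux
open Finset

variable {n d : ℕ}

lemma cast_val_self (hn : 0 < n) (a : ZMod n) : ((a.val : ℕ) : ZMod n) = a := by
  haveI : NeZero n := ⟨hn.ne'⟩
  exact ZMod.natCast_rightInverse a

lemma val_cast_lt (hn : 0 < n) {p : ℕ} (hp : p < n) : ((p : ZMod n)).val = p := by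
  haveI : NeZero n := ⟨hn.ne'⟩
  rw [ZMod.val_natCast]; exact Nat.mod_eq_of_lt hp

lemma castinj (hn : 0 < n) {p q : ℕ} (hp : p < n) (hq : q < n) (h : (p : ZMod n) = q) : p = q := by
  have := val_cast_lt (n := n) hn hp
  rw [h, val_cast_lt hn hq] at this; omega

lemma val_lt' (hn : 0 < n) (a : ZMod n) : a.val < n := by
  haveI : NeZero n := ⟨hn.ne'⟩; exact ZMod.val_lt a

lemma sub_cast_val (hn : 0 < n) (z : ZMod n) {p : ℕ} (hp : p ≤ z.val) :
    (z - (p : ZMod n)).val = z.val - p := by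
  haveI : NeZero n := ⟨hn.ne'⟩
  have h1 : z - (p : ZMod n) = ((z.val - p : ℕ) : ZMod n) := by
    rw [Nat.cast_sub hp, cast_val_self hn]
  rw [h1, val_cast_lt hn]
  have := val_lt' hn z; omega

lemma cast_sub_val (hn : 0 < n) (z : ZMod n) {q : ℕ} (h1 : z.val ≤ q) (h2 : q < n) :
    ((q : ZMod n) - z).val = q - z.val := by
  haveI : NeZero n := ⟨hn.ne'⟩
  have h3 : (q : ZMod n) - z = ((q - z.val : ℕ) : ZMod n) := by
    rw [Nat.cast_sub h1, cast_val_self hn]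
  rw [h3, val_cast_lt hn]; omega

lemma adj_iff {a b : ZMod n} : (circulantGraph n (Set.Icc 1 d)).Adj a b ↔
    a ≠ b ∧ ((1 ≤ (a-b).val ∧ (a-b).val ≤ d) ∨ (1 ≤ (b-a).val ∧ (b-a).val ≤ d)) := by
  simp [circulantGraph, Set.mem_Icc]

lemma val_sub_pos (hn : 0 < n) {a b : ZMod n} (hab : a ≠ b) :
    1 ≤ (a - b).val ∧ (a-b).val < n ∧ (b - a).val = n - (a-b).val := by
  haveI : NeZero n := ⟨hn.ne'⟩
  have hne : a - b ≠ 0 := sub_ne_zero.mpr hab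
  have h1 : (a - b).val ≠ 0 := fun h => hne ((ZMod.val_eq_zero _).mp h)
  have h2 : (a - b).val < n := val_lt' hn _
  have h3 : b - a = -(a - b) := by ring
  rw [h3, ZMod.neg_val, if_neg hne]
  omega

lemma not_adj_iff (hn : 0 < n) {a b : ZMod n} (hab : a ≠ b) :
    ¬ (circulantGraph n (Set.Icc 1 d)).Adj a b ↔
      (d+1 ≤ (a-b).val ∧ (a-b).val + (d+1) ≤ n) := by
  obtain ⟨h1, h2, h3⟩ := val_sub_pos (n := n) hn hab
  rw [adj_iff]
  simp only [hab, true_and, ne_eq, not_false_iff]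
  rw [h3]
  omega

lemma mem_ind {F : Finset (ZMod n)} : F ∈ IndComplex (circulantGraph n (Set.Icc 1 d)) ↔
    ∀ u ∈ F, ∀ v ∈ F, ¬ (circulantGraph n (Set.Icc 1 d)).Adj u v := Iff.rfl

lemma ind_subset {E F : Finset (ZMod n)} (h : F ∈ IndComplex (circulantGraph n (Set.Icc 1 d)))
    (hE : E ⊆ F) : E ∈ IndComplex (circulantGraph n (Set.Icc 1 d)) :=
  fun u hu v hv => h u (hE hu) v (hE hv)

lemma singleton_ind (v : ZMod n) : ({v} : Finset (ZMod n)) ∈ IndComplex (circulantGraph n (Set.Icc 1 d)) := by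
  intro u hu w hw
  simp only [Finset.mem_singleton] at hu hw
  subst hu; subst hw
  exact (circulantGraph n (Set.Icc 1 d)).loopless.irrefl _

lemma not_adj_nat (hn : 0 < n) {p q : ℕ} (hpq : p < q) (h1 : d+1 ≤ q - p)
    (h2 : q - p + (d+1) ≤ n) : ¬ (circulantGraph n (Set.Icc 1 d)).Adj (p : ZMod n) (q : ZMod n) := by
  have hqp : ((q : ZMod n) - p) = ((q - p : ℕ) : ZMod n) := by
    rw [Nat.cast_sub hpq.le]
  have hv : ((q : ZMod n) - p).val = q - p := by
    rw [hqp, val_cast_lt hn]; omega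
  have hne : (q : ZMod n) ≠ p := by
    intro h
    rw [h] at hv
    simp at hv
    omega
  intro hadj
  exact ((not_adj_iff hn hne).mpr (by omega)) hadj.symm


lemma chain_indep (hn : 0 < n) (T : Finset ℕ)
    (hgap : ∀ p ∈ T, ∀ q ∈ T, p < q → d+1 ≤ q - p)
    (hspan : ∀ p ∈ T, ∀ q ∈ T, p < q → q - p + (d+1) ≤ n) :
    (T.image (Nat.cast : ℕ → ZMod n)) ∈ IndComplex (circulantGraph n (Set.Icc 1 d)) := by
  intro u hu v hv
  simp only [Finset.mem_image] at hu hv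
  obtain ⟨p, hp, rfl⟩ := hu
  obtain ⟨q, hq, rfl⟩ := hv
  rcases lt_trichotomy p q with h | h | h
  · exact not_adj_nat hn h (hgap p hp q hq h) (hspan p hp q hq h)
  · subst h; exact (circulantGraph n (Set.Icc 1 d)).loopless.irrefl _
  · intro hadj
    exact not_adj_nat hn h (hgap q hq p hp h) (hspan q hq p hp h) hadj.symm

lemma val_ne (hn : 0 < n) {a b : ZMod n} (h : a ≠ b) : a.val ≠ b.val := by
  intro e
  apply h
  rw [← cast_val_self hn a, ← cast_val_self hn b, e]

lemma val_sub_eq (hn : 0 < n) (a b : ZMod n) :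
    (a - b).val = if b.val ≤ a.val then a.val - b.val else a.val + n - b.val := by
  haveI : NeZero n := ⟨hn.ne'⟩
  have ha := val_lt' hn a
  have hb := val_lt' hn b
  have key : a - b = ((a.val + (n - b.val) : ℕ) : ZMod n) := by
    rw [Nat.cast_add, Nat.cast_sub hb.le, ZMod.natCast_self, cast_val_self hn, cast_val_self hn]
    ring
  rw [key, ZMod.val_natCast]
  split_ifs with h
  · have e : a.val + (n - b.val) = (a.val - b.val) + n := by omega
    rw [e, Nat.add_mod_right, Nat.mod_eq_of_lt (by omega)]
  · rw [Nat.mod_eq_of_lt (by omega)]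
    omega

lemma pair_ind {a b : ZMod n} (h : ¬ (circulantGraph n (Set.Icc 1 d)).Adj a b) :
    ({a, b} : Finset (ZMod n)) ∈ IndComplex (circulantGraph n (Set.Icc 1 d)) := by
  intro u hu v hv
  simp only [Finset.mem_insert, Finset.mem_singleton] at hu hv
  rcases hu with rfl | rfl <;> rcases hv with rfl | rfl
  · exact (circulantGraph n (Set.Icc 1 d)).loopless.irrefl _
  · exact h
  · exact fun ha => h ha.symm
  · exact (circulantGraph n (Set.Icc 1 d)).loopless.irrefl _

lemma pair_ind_val (hn : 0 < n) {a b : ZMod n} (h1 : d+1 ≤ (a-b).val)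
    (h2 : (a-b).val + (d+1) ≤ n) :
    ({a, b} : Finset (ZMod n)) ∈ IndComplex (circulantGraph n (Set.Icc 1 d)) := by
  haveI : NeZero n := ⟨hn.ne'⟩
  have hne : a ≠ b := by
    intro e; rw [e, sub_self, ZMod.val_zero] at h1; omega
  exact pair_ind ((not_adj_iff hn hne).mpr ⟨h1, h2⟩)

lemma conn_all (hn : 2*d+3 ≤ n) :
    ComplexConnected (IndComplex (circulantGraph n (Set.Icc 1 d))) := by
  have hn0 : 0 < n := by omega
  set Δ := IndComplex (circulantGraph n (Set.Icc 1 d)) with hΔ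
  set R : ZMod n → ZMod n → Prop :=
    fun a b => a ≠ b ∧ ({a, b} : Finset (ZMod n)) ∈ Δ with hR
  have key : ∀ (u : ZMod n) (c : ℕ), d+1 ≤ c → c + (d+1) ≤ n → R u (u + (c : ZMod n)) := by
    intro u c h1 h2
    have hval : ((u + (c : ZMod n)) - u).val = c := by
      have e : (u + (c : ZMod n)) - u = (c : ZMod n) := by ring
      rw [e, val_cast_lt hn0 (by omega)]
    have hne : u + (c : ZMod n) ≠ u := by
      intro h
      rw [h, sub_self] at hval
      haveI : NeZero n := ⟨hn0.ne'⟩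
      rw [ZMod.val_zero] at hval; omega
    refine ⟨hne.symm, ?_⟩
    have := pair_ind_val (d := d) (a := u + (c : ZMod n)) (b := u) hn0 (by omega) (by omega)
    rwa [Finset.pair_comm] at this
  have Rsymm : ∀ a b, R a b → R b a := by
    rintro a b ⟨h1, h2⟩
    exact ⟨h1.symm, by rwa [Finset.pair_comm]⟩
  have succ : ∀ u : ZMod n, Relation.ReflTransGen R u (u + 1) := by
    intro u
    have s1 : R u (u + ((d+2 : ℕ) : ZMod n)) := key u (d+2) (by omega) (by omega)
    have s2 : R (u + 1) ((u + 1) + ((d+1 : ℕ) : ZMod n)) := key (u+1) (d+1) le_rfl (by omega)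
    have e : (u + 1) + ((d+1 : ℕ) : ZMod n) = u + ((d+2 : ℕ) : ZMod n) := by
      push_cast; ring
    rw [e] at s2
    exact Relation.ReflTransGen.head s1 (Relation.ReflTransGen.single (Rsymm _ _ s2))
  have steps : ∀ (m : ℕ) (u : ZMod n), Relation.ReflTransGen R u (u + (m : ZMod n)) := by
    intro m
    induction m with
    | zero => intro u; simp only [Nat.cast_zero, add_zero]; exact Relation.ReflTransGen.refl
    | succ k ih =>
        intro u
        have e : u + ((k+1 : ℕ) : ZMod n) = (u + (k : ℕ)) + 1 := by push_cast; ring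
        rw [e]
        exact (ih u).trans (succ _)
  intro u _ w _
  have := steps ((w - u).val) u
  rwa [cast_val_self hn0, add_sub_cancel] at this

lemma card_le_two (hn : 0 < n) (h3 : n ≤ 3*d+2) {F : Finset (ZMod n)}
    (hF : F ∈ IndComplex (circulantGraph n (Set.Icc 1 d))) : F.card ≤ 2 := by
  by_contra h
  rw [not_le] at h
  obtain ⟨a, ha, b, hb, c, hc, hab, hac, hbc⟩ := Finset.two_lt_card.mp h
  have h1 := (not_adj_iff hn hab).mp (hF a ha b hb)
  have h2 := (not_adj_iff hn hac).mp (hF a ha c hc)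
  have h3' := (not_adj_iff hn hbc).mp (hF b hb c hc)
  rw [val_sub_eq hn] at h1 h2 h3'
  have e1 := val_ne hn hab
  have e2 := val_ne hn hac
  have e3 := val_ne hn hbc
  have l1 := val_lt' hn a
  have l2 := val_lt' hn b
  have l3 := val_lt' hn c
  split_ifs at h1 h2 h3' <;> omega

lemma card_le_three (hn : 0 < n) (h4 : n ≤ 4*d+3) {F : Finset (ZMod n)}
    (hF : F ∈ IndComplex (circulantGraph n (Set.Icc 1 d))) : F.card ≤ 3 := by
  by_contra h
  rw [not_le] at h
  obtain ⟨t, hts, ht4⟩ := Finset.exists_subset_card_eq (show 4 ≤ F.card by omega)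
  obtain ⟨a, ha⟩ := Finset.card_pos.mp (show 0 < t.card by omega)
  have h3 : 2 < (t.erase a).card := by rw [Finset.card_erase_of_mem ha]; omega
  obtain ⟨b, hb, c, hc, e, he, hbc, hbe, hce⟩ := Finset.two_lt_card.mp h3
  have hab : a ≠ b := fun h => (Finset.mem_erase.mp hb).1 h.symm
  have hac : a ≠ c := fun h => (Finset.mem_erase.mp hc).1 h.symm
  have hae : a ≠ e := fun h => (Finset.mem_erase.mp he).1 h.symm
  have ha' : a ∈ F := hts ha
  have hb' : b ∈ F := hts (Finset.mem_of_mem_erase hb)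
  have hc' : c ∈ F := hts (Finset.mem_of_mem_erase hc)
  have he' : e ∈ F := hts (Finset.mem_of_mem_erase he)
  have q1 := (not_adj_iff hn hab).mp (hF a ha' b hb')
  have q2 := (not_adj_iff hn hac).mp (hF a ha' c hc')
  have q3 := (not_adj_iff hn hae).mp (hF a ha' e he')
  have q4 := (not_adj_iff hn hbc).mp (hF b hb' c hc')
  have q5 := (not_adj_iff hn hbe).mp (hF b hb' e he')
  have q6 := (not_adj_iff hn hce).mp (hF c hc' e he')
  rw [val_sub_eq hn] at q1 q2 q3 q4 q5 q6
  have e1 := val_ne hn hab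
  have e2 := val_ne hn hac
  have e3 := val_ne hn hae
  have e4 := val_ne hn hbc
  have e5 := val_ne hn hbe
  have e6 := val_ne hn hce
  have l1 := val_lt' hn a
  have l2 := val_lt' hn b
  have l3 := val_lt' hn c
  have l4 := val_lt' hn e
  split_ifs at q1 q2 q3 q4 q5 q6 <;> omega

lemma linkC_empty {V : Type*} [DecidableEq V] (Δ : Set (Finset V)) : linkC Δ ∅ = Δ := by
  ext F; simp [linkC]

lemma empty_ind : (∅ : Finset (ZMod n)) ∈ IndComplex (circulantGraph n (Set.Icc 1 d)) := by
  intro u hu; exact absurd hu (Finset.notMem_empty u)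


lemma s2_small (hn1 : 0 < n) (h2 : n ≤ 2*d+1) :
    GraphS2 (circulantGraph n (Set.Icc 1 d)) := by
  intro F _ hG
  exfalso
  obtain ⟨G, ⟨_, hun⟩, hcard⟩ := hG
  obtain ⟨a, ha, b, hb, hab⟩ := Finset.one_lt_card.mp (by omega : 1 < G.card)
  have h1 := (not_adj_iff hn1 hab).mp
    (hun a (Finset.mem_union_left F ha) b (Finset.mem_union_left F hb))
  omega


lemma not_s2_2d2 (hd : 1 ≤ d) (h : n = 2*d+2) :
    ¬ GraphS2 (circulantGraph n (Set.Icc 1 d)) := by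
  intro hs2
  have hn0 : 0 < n := by omega
  set Δ := IndComplex (circulantGraph n (Set.Icc 1 d)) with hΔ
  have hv1 : (((d+1 : ℕ) : ZMod n) - 0).val = d + 1 := by
    rw [sub_zero, val_cast_lt hn0 (by omega)]
  have hG : ({((d+1:ℕ) : ZMod n), 0} : Finset (ZMod n)) ∈ Δ :=
    pair_ind_val hn0 (by omega) (by omega)
  have hcc := hs2 ∅ empty_ind ⟨{((d+1:ℕ) : ZMod n), 0}, by
    rw [linkC_empty]; exact hG, by
    rw [Finset.card_insert_of_notMem (by
      simp only [Finset.mem_singleton]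
      intro e
      rw [e, sub_zero, ZMod.val_zero] at hv1
      omega), Finset.card_singleton]⟩
  rw [linkC_empty] at hcc
  have hreach := hcc 0 (singleton_ind 0) 1 (singleton_ind 1)
  have inv : ∀ z : ZMod n, Relation.ReflTransGen
      (fun a b => a ≠ b ∧ ({a, b} : Finset (ZMod n)) ∈ Δ) 0 z →
      (z = 0 ∨ z = ((d+1:ℕ) : ZMod n)) := by
    intro z h
    induction h with
    | refl => exact Or.inl rfl
    | @tail b c _ step ih =>
        obtain ⟨hne, hpair⟩ := step
        have hnadj : ¬ (circulantGraph n (Set.Icc 1 d)).Adj b c :=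
          hpair b (Finset.mem_insert_self b {c}) c
            (Finset.mem_insert_of_mem (Finset.mem_singleton_self c))
        have hval := (not_adj_iff hn0 hne).mp hnadj
        have hbc : b - c = ((d+1 : ℕ) : ZMod n) := by
          rw [← cast_val_self hn0 (b - c)]
          have : (b - c).val = d + 1 := by omega
          rw [this]
        have hdd : ((d+1:ℕ) : ZMod n) + ((d+1:ℕ) : ZMod n) = 0 := by
          rw [← Nat.cast_add, show (d+1) + (d+1) = 2*d+2 by ring, ← h, ZMod.natCast_self]
        rcases ih with rfl | hb2
        · right
          have : c = -((d+1:ℕ) : ZMod n) := by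
            rw [← hbc]; ring
          rw [this, neg_eq_of_add_eq_zero_left hdd]
        · left
          rw [hb2] at hbc
          exact sub_eq_self.mp hbc
  rcases inv 1 hreach with h1 | h1
  · have : (1 : ZMod n).val = 0 := by rw [h1, ZMod.val_zero]
    rw [show (1 : ZMod n) = ((1:ℕ) : ZMod n) by norm_cast, val_cast_lt hn0 (by omega)] at this
    omega
  · have : (1 : ZMod n).val = d + 1 := by
      rw [h1, val_cast_lt hn0 (by omega)]
    rw [show (1 : ZMod n) = ((1:ℕ) : ZMod n) by norm_cast, val_cast_lt hn0 (by omega)] at this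
    omega

lemma s2_mid (h1 : 2*d+3 ≤ n) (h2 : n ≤ 3*d+2) :
    GraphS2 (circulantGraph n (Set.Icc 1 d)) := by
  intro F hF hG
  obtain ⟨G, ⟨hdis, hun⟩, hcard⟩ := hG
  have hn0 : 0 < n := by omega
  have hc : (G ∪ F).card ≤ 2 := card_le_two hn0 h2 hun
  rw [Finset.card_union_of_disjoint hdis] at hc
  have hF0 : F = ∅ := Finset.card_eq_zero.mp (by omega)
  subst hF0
  rw [linkC_empty]
  exact conn_all h1


lemma s2_43 (hd : 1 ≤ d) (hn : n = 4*d+3) :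
    GraphS2 (circulantGraph n (Set.Icc 1 d)) := by
  intro F hF hG
  have hn0 : 0 < n := by omega
  set Δ := IndComplex (circulantGraph n (Set.Icc 1 d)) with hΔ
  obtain ⟨G, ⟨hdis, hun⟩, hcard⟩ := hG
  have hc3 : (G ∪ F).card ≤ 3 := card_le_three hn0 (by omega) hun
  rw [Finset.card_union_of_disjoint hdis] at hc3
  have hF1 : F.card ≤ 1 := by omega
  rcases Nat.le_one_iff_eq_zero_or_eq_one.mp hF1 with h0 | h1
  · rw [Finset.card_eq_zero.mp h0, linkC_empty]
    exact conn_all (by omega)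
  obtain ⟨v, rfl⟩ := Finset.card_eq_one.mp h1
  -- connectivity of the link of a vertex
  intro u hu w hw
  set R : ZMod n → ZMod n → Prop :=
    fun a b => a ≠ b ∧ ({a, b} : Finset (ZMod n)) ∈ linkC Δ {v} with hR
  have Rsymm : Symmetric R := by
    rintro a b ⟨x1, x2⟩
    exact ⟨x1.symm, by rwa [Finset.pair_comm]⟩
  -- vertices of the link
  have hvert : ∀ z : ZMod n, ({z} : Finset (ZMod n)) ∈ linkC Δ {v} →
      d+1 ≤ (z - v).val ∧ (z - v).val + (d+1) ≤ n := by
    intro z hz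
    obtain ⟨hzd, hzu⟩ := hz
    have hzv : z ≠ v := by
      intro e
      exact (Finset.disjoint_singleton.mp hzd) e
    have hzz : ({z} ∪ {v} : Finset (ZMod n)) = {z, v} := by
      ext a; simp [Finset.mem_union, Finset.mem_insert]
    rw [hzz] at hzu
    exact (not_adj_iff hn0 hzv).mp
      (hzu z (Finset.mem_insert_self _ _) v (Finset.mem_insert_of_mem (Finset.mem_singleton_self v)))
  -- edges of the link
  have edge : ∀ p q : ZMod n, d+1 ≤ (p - v).val → (p - v).val + (d+1) ≤ n →
      d+1 ≤ (q - v).val → (q - v).val + (d+1) ≤ n →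
      (q - v).val + (d+1) ≤ (p - v).val → R p q := by
    intro p q hp1 hp2 hq1 hq2 hpq
    have hne : p ≠ q := by
      intro e; rw [e] at hpq; omega
    have hpv : p ≠ v := by
      intro e; rw [e, sub_self, ZMod.val_zero] at hp1; omega
    have hqv : q ≠ v := by
      intro e; rw [e, sub_self, ZMod.val_zero] at hq1; omega
    have hd1 : (p - q).val = (p - v).val - (q - v).val := by
      have e : p - q = (p - v) - (q - v) := by ring
      rw [e, val_sub_eq hn0, if_pos (by omega)]
    refine ⟨hne, ?_, ?_⟩
    · rw [Finset.disjoint_left]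
      intro a ha
      simp only [Finset.mem_insert, Finset.mem_singleton] at ha ⊢
      rcases ha with rfl | rfl
      · simpa using hpv
      · simpa using hqv
    · have hmem : ({p, q} : Finset (ZMod n)) ∪ {v} = {p, q, v} := by
        rw [Finset.union_comm]
        ext z
        simp only [Finset.mem_union, Finset.mem_insert, Finset.mem_singleton]
        tauto
      rw [hmem]
      have npq : ¬ (circulantGraph n (Set.Icc 1 d)).Adj p q :=
        (not_adj_iff hn0 hne).mpr ⟨by omega, by omega⟩
      have npv : ¬ (circulantGraph n (Set.Icc 1 d)).Adj p v :=
        (not_adj_iff hn0 hpv).mpr ⟨hp1, hp2⟩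
      have nqv : ¬ (circulantGraph n (Set.Icc 1 d)).Adj q v :=
        (not_adj_iff hn0 hqv).mpr ⟨hq1, hq2⟩
      intro x hx y hy
      simp only [Finset.mem_insert, Finset.mem_singleton] at hx hy
      rcases hx with rfl | rfl | rfl <;> rcases hy with rfl | rfl | rfl
      · exact (circulantGraph n (Set.Icc 1 d)).loopless.irrefl _
      · exact npq
      · exact npv
      · exact fun h => npq h.symm
      · exact (circulantGraph n (Set.Icc 1 d)).loopless.irrefl _
      · exact nqv
      · exact fun h => npv h.symm
      · exact fun h => nqv h.symm
      · exact (circulantGraph n (Set.Icc 1 d)).loopless.irrefl _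
  -- hubs
  have hub1 : ((v + ((d+1:ℕ) : ZMod n)) - v).val = d+1 := by
    rw [show (v + ((d+1:ℕ) : ZMod n)) - v = ((d+1:ℕ) : ZMod n) by ring,
      val_cast_lt hn0 (by omega)]
  have hub2 : ((v + ((3*d+2:ℕ) : ZMod n)) - v).val = 3*d+2 := by
    rw [show (v + ((3*d+2:ℕ) : ZMod n)) - v = ((3*d+2:ℕ) : ZMod n) by ring,
      val_cast_lt hn0 (by omega)]
  set H1 := v + ((d+1:ℕ) : ZMod n)
  set H2 := v + ((3*d+2:ℕ) : ZMod n)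
  have reach : ∀ z : ZMod n, ({z} : Finset (ZMod n)) ∈ linkC Δ {v} →
      Relation.ReflTransGen R z H2 := by
    intro z hz
    obtain ⟨hz1, hz2⟩ := hvert z hz
    rcases le_or_gt ((z - v).val) (2*d+1) with hle | hgt
    · exact Relation.ReflTransGen.single
        (Rsymm (edge H2 z (by omega) (by omega) hz1 hz2 (by omega)))
    · have s1 : R z H1 := edge z H1 hz1 hz2 (by omega) (by omega) (by omega)
      have s2 : R H2 H1 := edge H2 H1 (by omega) (by omega) (by omega) (by omega) (by omega)
      exact (Relation.ReflTransGen.single s1).trans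
        (Relation.ReflTransGen.single (Rsymm s2))
  haveI : Std.Symm R := ⟨fun a b h => Rsymm h⟩
  exact (reach u hu).trans (Relation.ReflTransGen.symmetric.symm _ _ (reach w hw))

lemma exists_k (hd : 1 ≤ d) (h1 : 3*d+3 ≤ n) (h2 : n ≠ 4*d+3) :
    ∃ k, 2 ≤ k ∧ (k+1)*(d+1) ≤ n ∧ n ≤ k*(2*d+1) := by
  have hd1 : 0 < d + 1 := by omega
  have he := Nat.div_add_mod n (d+1)
  have hr := Nat.mod_lt n hd1
  set q := n / (d+1) with hq
  set r := n % (d+1) with hrr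
  have hq3 : 3 ≤ q := by
    rw [hq, Nat.le_div_iff_mul_le hd1]
    omega
  refine ⟨q - 1, by omega, ?_, ?_⟩
  · have e : q - 1 + 1 = q := by omega
    rw [e]
    calc q * (d+1) = (d+1) * q := by ring
    _ ≤ n := by omega
  · by_contra hcon
    rw [not_le] at hcon
    set K := q - 1 with hK
    have hqK : q = K + 1 := by omega
    rw [hqK] at he
    have e1 : K*(2*d+1) = 2*(K*d) + K := by ring
    have e2 : (d+1)*(K+1) = K*d + K + d + 1 := by ring
    have hK2 : 2 ≤ K := by omega
    rcases Nat.lt_or_ge K 3 with h3 | h3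
    · have hKe : K = 2 := by omega
      have : K * d = 2 * d := by rw [hKe]
      omega
    · have : 3*d ≤ K*d := Nat.mul_le_mul_right d h3
      omega

set_option maxHeartbeats 1000000 in
lemma not_s2_big (hd : 1 ≤ d) (h1 : 3*d+3 ≤ n) (h2 : n ≠ 4*d+3) :
    ¬ GraphS2 (circulantGraph n (Set.Icc 1 d)) := by
  obtain ⟨k, hk2, hkl, hkr⟩ := exists_k hd h1 h2
  have hn0 : 0 < n := by omega
  set Δ := IndComplex (circulantGraph n (Set.Icc 1 d)) with hΔ
  set s := n - (k+1)*(d+1) with hs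
  set t := min s ((k-2)*d) with ht
  set u := s - t with hu
  set P : ℕ → ℕ := fun i => i*(d+1) + min (i*d) t with hP
  set M := P (k-2) with hM
  -- basic arithmetic
  have hkd : (k-2)*d + 2*d = k*d := by
    have e : k - 2 + 2 = k := by omega
    calc (k-2)*d + 2*d = (k-2+2)*d := by ring
    _ = k*d := by rw [e]
  have hs_le : s + d + 1 ≤ k*d := by
    have e1 : k*(2*d+1) = 2*(k*d) + k := by ring
    have e2 : (k+1)*(d+1) = k*d + k + d + 1 := by ring
    have hdlow : 2*d ≤ k*d := Nat.mul_le_mul_right d hk2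
    omega
  have hu_le : u + 1 ≤ d := by
    have hdlow : 2*d ≤ k*d := Nat.mul_le_mul_right d hk2
    omega
  have hMval : M = (k-2)*(d+1) + t := by
    rw [hM]
    simp only [hP]
    omega
  have hyval : M + (2*d+2) + ((d+1) + u) = n := by
    have e : (k+1)*(d+1) = (k-2)*(d+1) + 3*(d+1) := by
      have e2 : k + 1 = (k-2) + 3 := by omega
      rw [e2]; ring
    omega
  -- chain step facts
  have hPstep : ∀ i, P i + (d+1) ≤ P (i+1) ∧ P (i+1) ≤ P i + (2*d+1) := by
    intro i
    have e : (i+1)*d = i*d + d := by ring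
    have e2 : (i+1)*(d+1) = i*(d+1) + (d+1) := by ring
    simp only [hP]
    omega
  have hPmono : Monotone P := monotone_nat_of_le_succ (fun i => by
    have := (hPstep i).1; omega)
  have hPgap : ∀ i j, i < j → P i + (d+1) ≤ P j := by
    intro i j hij
    have h1' := (hPstep i).1
    have h2' := hPmono (show i+1 ≤ j by omega)
    omega
  have hP0 : P 0 = 0 := by simp [hP]
  -- the finsets
  set Tc : Finset ℕ := (Finset.range (k-1)).image P with hTc
  set TA : Finset ℕ := insert (M + (2*d+1)) Tc with hTA
  set TB : Finset ℕ := insert (M + (d+1)) (insert (M + (2*d+2)) Tc) with hTB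
  have hbound : ∀ p ∈ Tc, p ≤ M := by
    intro p hp
    obtain ⟨i, hi, rfl⟩ := Finset.mem_image.mp hp
    rw [Finset.mem_range] at hi
    exact hPmono (show i ≤ k-2 by omega)
  have hchain_gap : ∀ p ∈ Tc, ∀ q ∈ Tc, p < q → d+1 ≤ q - p := by
    intro p hp q hq hpq
    obtain ⟨i, hi, rfl⟩ := Finset.mem_image.mp hp
    obtain ⟨j, hj, rfl⟩ := Finset.mem_image.mp hq
    rcases lt_trichotomy i j with h | h | h
    · have := hPgap i j h; omega
    · subst h; omega
    · have := hPgap j i h; omega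
  -- gap and span conditions
  have hgapA : ∀ p ∈ TA, ∀ q ∈ TA, p < q → d+1 ≤ q - p := by
    intro p hp q hq hpq
    rw [hTA, Finset.mem_insert] at hp hq
    rcases hp with rfl | hp
    · rcases hq with rfl | hq
      · omega
      · have := hbound q hq; omega
    · rcases hq with rfl | hq
      · have := hbound p hp; omega
      · exact hchain_gap p hp q hq hpq
  have hgapB : ∀ p ∈ TB, ∀ q ∈ TB, p < q → d+1 ≤ q - p := by
    intro p hp q hq hpq
    rw [hTB, Finset.mem_insert, Finset.mem_insert] at hp hq
    rcases hp with rfl | rfl | hp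
    · rcases hq with rfl | rfl | hq
      · omega
      · omega
      · have := hbound q hq; omega
    · rcases hq with rfl | rfl | hq
      · omega
      · omega
      · have := hbound q hq; omega
    · rcases hq with rfl | rfl | hq
      · have := hbound p hp; omega
      · have := hbound p hp; omega
      · exact hchain_gap p hp q hq hpq
  have hleA : ∀ p ∈ TA, p ≤ M + (2*d+1) := by
    intro p hp
    rw [hTA, Finset.mem_insert] at hp
    rcases hp with rfl | hp
    · omega
    · have := hbound p hp; omega
  have hleB : ∀ p ∈ TB, p ≤ M + (2*d+2) := by
    intro p hp
    rw [hTB, Finset.mem_insert, Finset.mem_insert] at hp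
    rcases hp with rfl | rfl | hp
    · omega
    · omega
    · have := hbound p hp; omega
  have hspanA : ∀ p ∈ TA, ∀ q ∈ TA, p < q → q - p + (d+1) ≤ n := by
    intro p _ q hq hpq
    have := hleA q hq; omega
  have hspanB : ∀ p ∈ TB, ∀ q ∈ TB, p < q → q - p + (d+1) ≤ n := by
    intro p _ q hq hpq
    have := hleB q hq; omega
  have hltA : ∀ p ∈ TA, p < n := by
    intro p hp; have := hleA p hp; omega
  have hA : (TA.image (Nat.cast : ℕ → ZMod n)) ∈ Δ := chain_indep hn0 TA hgapA hspanA
  have hB : (TB.image (Nat.cast : ℕ → ZMod n)) ∈ Δ := chain_indep hn0 TB hgapB hspanB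
  -- chain memberships
  have hMTc : M ∈ Tc := by
    rw [hTc]
    exact Finset.mem_image_of_mem P (Finset.mem_range.mpr (by omega))
  have h0Tc : 0 ∈ Tc := by
    rw [hTc, ← hP0]
    exact Finset.mem_image_of_mem P (Finset.mem_range.mpr (by omega))
  -- maximality of TA
  have hmax : ∀ z : ZMod n, z ∉ TA.image (Nat.cast : ℕ → ZMod n) →
      ∃ w ∈ TA.image (Nat.cast : ℕ → ZMod n), (circulantGraph n (Set.Icc 1 d)).Adj z w := by
    intro z hz
    have hmn : z.val < n := val_lt' hn0 z
    have hzm : z = ((z.val : ℕ) : ZMod n) := (cast_val_self hn0 z).symm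
    have hmemA : ∀ p : ℕ, p ∈ TA → z.val ≠ p := by
      intro p hp he
      exact hz (Finset.mem_image.mpr ⟨p, hp, by rw [← he, ← hzm]⟩)
    have adj_up : ∀ p : ℕ, p ∈ TA → p ≤ z.val → z.val ≤ p + d →
        ∃ w ∈ TA.image (Nat.cast : ℕ → ZMod n), (circulantGraph n (Set.Icc 1 d)).Adj z w := by
      intro p hp hpm hmd
      have hne := hmemA p hp
      refine ⟨(p : ZMod n), Finset.mem_image_of_mem _ hp, ?_⟩
      have hv : (z - (p:ZMod n)).val = z.val - p := sub_cast_val hn0 z hpm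
      have hzp : z ≠ (p : ZMod n) := fun e =>
        hne (by rw [e, val_cast_lt hn0 (hltA p hp)])
      rw [adj_iff]
      exact ⟨hzp, Or.inl ⟨by omega, by omega⟩⟩
    have adj_down : ∀ p : ℕ, p ∈ TA → z.val ≤ p → p ≤ z.val + d →
        ∃ w ∈ TA.image (Nat.cast : ℕ → ZMod n), (circulantGraph n (Set.Icc 1 d)).Adj z w := by
      intro p hp hpm hmd
      have hne := hmemA p hp
      refine ⟨(p : ZMod n), Finset.mem_image_of_mem _ hp, ?_⟩
      have hv : ((p : ZMod n) - z).val = p - z.val := cast_sub_val hn0 z hpm (hltA p hp)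
      have hzp : z ≠ (p : ZMod n) := fun e =>
        hne (by rw [e, val_cast_lt hn0 (hltA p hp)])
      rw [adj_iff]
      exact ⟨hzp, Or.inr ⟨by omega, by omega⟩⟩
    set i0 := Nat.findGreatest (fun i => P i ≤ z.val) (k-2) with hi0
    have hspec : P i0 ≤ z.val :=
      Nat.findGreatest_spec (P := fun i => P i ≤ z.val) (Nat.zero_le _)
        (by show P 0 ≤ z.val; omega)
    have hi0le : i0 ≤ k-2 := Nat.findGreatest_le _
    have hchainTA : ∀ i, i ≤ k-2 → P i ∈ TA := by
      intro i hi
      rw [hTA]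
      exact Finset.mem_insert_of_mem
        (Finset.mem_image_of_mem P (Finset.mem_range.mpr (by omega)))
    rcases Nat.lt_or_ge i0 (k-2) with hlt' | hge
    · have hnext : z.val < P (i0+1) := by
        have h := Nat.findGreatest_is_greatest (P := fun i => P i ≤ z.val)
          (k := i0+1) (n := k-2) (by omega) (by omega)
        simpa only [not_le] using h
      have hgap := hPstep i0
      have hPiTA : P i0 ∈ TA := hchainTA i0 (by omega)
      have hPi1TA : P (i0+1) ∈ TA := hchainTA (i0+1) (by omega)
      have hne0 := hmemA _ hPiTA
      rcases le_or_gt z.val (P i0 + d) with hc | hc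
      · exact adj_up (P i0) hPiTA hspec hc
      · exact adj_down (P (i0+1)) hPi1TA (by omega) (by omega)
    · have hi0eq : i0 = k - 2 := by omega
      rw [hi0eq, ← hM] at hspec
      have haTA : (M + (2*d+1)) ∈ TA := by rw [hTA]; exact Finset.mem_insert_self _ _
      have hMTA : M ∈ TA := by rw [hTA]; exact Finset.mem_insert_of_mem hMTc
      have h0TA : (0:ℕ) ∈ TA := by rw [hTA]; exact Finset.mem_insert_of_mem h0Tc
      rcases le_or_gt z.val (M + d) with hc1 | hc1
      · exact adj_up M hMTA hspec hc1
      rcases le_or_gt z.val (M + 2*d) with hc2 | hc2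
      · exact adj_down (M + (2*d+1)) haTA (by omega) (by omega)
      rcases le_or_gt z.val (M + (2*d+1) + d) with hc3 | hc3
      · exact adj_up (M + (2*d+1)) haTA (by omega) (by omega)
      · -- wrap around : adjacent to 0
        refine ⟨((0:ℕ) : ZMod n), Finset.mem_image_of_mem _ h0TA, ?_⟩
        have hz0 : z ≠ ((0:ℕ) : ZMod n) := by
          intro e
          rw [hzm] at e
          have := castinj hn0 hmn hn0 e
          omega
        have hzz0 : z ≠ 0 := by rwa [Nat.cast_zero] at hz0
        have hneg : (((0:ℕ) : ZMod n) - z).val = n - z.val := by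
          haveI : NeZero n := ⟨hn0.ne'⟩
          rw [Nat.cast_zero, zero_sub, ZMod.neg_val, if_neg hzz0]
        rw [adj_iff]
        exact ⟨fun e => hz0 e, Or.inr ⟨by omega, by omega⟩⟩
  -- final assembly
  set F : Finset (ZMod n) := Tc.image (Nat.cast : ℕ → ZMod n) with hFdef
  have hFA : TA.image (Nat.cast : ℕ → ZMod n)
      = insert (((M + (2*d+1) : ℕ)) : ZMod n) F := by
    rw [hTA, Finset.image_insert]
  have hFB : TB.image (Nat.cast : ℕ → ZMod n)
      = insert ((((M + (d+1)) : ℕ)) : ZMod n) (insert ((((M + (2*d+2)) : ℕ)) : ZMod n) F) := by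
    rw [hTB, Finset.image_insert, Finset.image_insert]
  have hnotF : ∀ q : ℕ, M < q → q < n → ((q:ℕ) : ZMod n) ∉ F := by
    intro q hq hqn hmem
    rw [hFdef] at hmem
    obtain ⟨p, hp, he⟩ := Finset.mem_image.mp hmem
    have hpM := hbound p hp
    have := castinj hn0 (by omega) hqn he
    omega
  have hxF := hnotF (M + (d+1)) (by omega) (by omega)
  have hyF := hnotF (M + (2*d+2)) (by omega) (by omega)
  have haF := hnotF (M + (2*d+1)) (by omega) (by omega)
  have hxa : (((M + (d+1) : ℕ)) : ZMod n) ≠ (((M + (2*d+1) : ℕ)) : ZMod n) := by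
    intro e; have := castinj hn0 (by omega) (by omega) e; omega
  have hxy : (((M + (d+1) : ℕ)) : ZMod n) ≠ (((M + (2*d+2) : ℕ)) : ZMod n) := by
    intro e; have := castinj hn0 (by omega) (by omega) e; omega
  have hFmem : F ∈ Δ := ind_subset hA (by rw [hFA]; exact Finset.subset_insert _ _)
  have hunionB : ({(((M + (d+1) : ℕ)) : ZMod n), (((M + (2*d+2) : ℕ)) : ZMod n)} : Finset (ZMod n)) ∪ F
      = TB.image (Nat.cast : ℕ → ZMod n) := by
    rw [hFB]
    ext w
    simp only [Finset.mem_union, Finset.mem_insert, Finset.mem_singleton]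
    tauto
  have hlink2 : ({(((M + (d+1) : ℕ)) : ZMod n), (((M + (2*d+2) : ℕ)) : ZMod n)} : Finset (ZMod n))
      ∈ linkC Δ F := by
    refine ⟨?_, by rw [hunionB]; exact hB⟩
    rw [Finset.disjoint_left]
    intro w hw
    simp only [Finset.mem_insert, Finset.mem_singleton] at hw
    rcases hw with rfl | rfl
    · exact hxF
    · exact hyF
  intro hs2
  have hcc := hs2 F hFmem ⟨_, hlink2, by
    rw [Finset.card_insert_of_notMem (by simpa using hxy), Finset.card_singleton]⟩
  have hXs : ({(((M + (d+1) : ℕ)) : ZMod n)} : Finset (ZMod n)) ∈ linkC Δ F := by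
    refine ⟨by simpa [Finset.disjoint_singleton_left] using hxF, ?_⟩
    refine ind_subset hB ?_
    rw [hFB]
    intro w hw
    simp only [Finset.mem_union, Finset.mem_singleton, Finset.mem_insert] at hw ⊢
    tauto
  have hAs : ({(((M + (2*d+1) : ℕ)) : ZMod n)} : Finset (ZMod n)) ∈ linkC Δ F := by
    refine ⟨by simpa [Finset.disjoint_singleton_left] using haF, ?_⟩
    have e : ({(((M + (2*d+1) : ℕ)) : ZMod n)} : Finset (ZMod n)) ∪ F
        = TA.image (Nat.cast : ℕ → ZMod n) := by
      rw [hFA]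
      ext w
      simp only [Finset.mem_union, Finset.mem_insert, Finset.mem_singleton]
    rw [e]; exact hA
  have hreach := hcc _ hXs _ hAs
  have inv : ∀ zz : ZMod n, Relation.ReflTransGen
      (fun a b => a ≠ b ∧ ({a, b} : Finset (ZMod n)) ∈ linkC Δ F) (((M + (d+1) : ℕ)) : ZMod n) zz
      → zz ≠ (((M + (2*d+1) : ℕ)) : ZMod n) := by
    intro zz h
    induction h with
    | refl => exact hxa
    | @tail b c _ step ih =>
        intro hceq
        obtain ⟨hnebc, hdisj, hmemu⟩ := step
        rw [hceq] at hnebc hdisj hmemu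
        have hbF : b ∉ F := Finset.disjoint_left.mp hdisj (Finset.mem_insert_self _ _)
        have hbTA : b ∉ TA.image (Nat.cast : ℕ → ZMod n) := by
          rw [hFA]
          simp only [Finset.mem_insert]
          rintro (he | he)
          · exact hnebc he
          · exact hbF he
        have hins : insert b (TA.image (Nat.cast : ℕ → ZMod n)) ∈ Δ := by
          rw [hFA]
          have e : insert b (insert ((((M + (2*d+1)) : ℕ)) : ZMod n) F)
              = ({b, (((M + (2*d+1) : ℕ)) : ZMod n)} : Finset (ZMod n)) ∪ F := by
            ext w
            simp only [Finset.mem_union, Finset.mem_insert, Finset.mem_singleton]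
            tauto
          rw [e]
          exact hmemu
        obtain ⟨w, hw, hadj⟩ := hmax b hbTA
        exact hins b (Finset.mem_insert_self _ _) w (Finset.mem_insert_of_mem hw) hadj
  exact inv _ hreach rfl

end CircAux

/-- Let `n ≥ 2d ≥ 2`. The circulant graph `C_n(1,2,…,d)` is `S₂` iff
(`n ≤ 3d+2` and `n ≠ 2d+2`) or `n = 4d+3`. -/
theorem circulant_powerOfCycle_S2_iff (n d : ℕ) (hd : 1 ≤ d) (hnd : 2 * d ≤ n) :
    GraphS2 (circulantGraph n (Set.Icc 1 d)) ↔
      (n ≤ 3 * d + 2 ∧ n ≠ 2 * d + 2) ∨ n = 4 * d + 3 := by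
  constructor
  · intro hs2
    by_contra hcon
    rcases Classical.em (n = 2*d+2) with he | he
    · exact CircAux.not_s2_2d2 hd he hs2
    · have h2 : n ≠ 4*d+3 := fun hh => hcon (Or.inr (by omega))
      have h3 : 3*d+3 ≤ n := by
        by_contra hh
        exact hcon (Or.inl ⟨by omega, by omega⟩)
      exact CircAux.not_s2_big hd h3 h2 hs2
  · intro h
    rcases h with ⟨h1, h2⟩ | h3
    · rcases Nat.lt_or_ge n (2*d+2) with hs | hs
      · exact CircAux.s2_small (by omega) (by omega)
      · exact CircAux.s2_mid (by omega) (by omega)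
    · exact CircAux.s2_43 hd (by omega)
end

section
/- The cycle graph C_n of length n ≥ 3 satisfies Serre's condition S_2 if and only if n = 3, 5, or 7. -/
namespace CycAux

lemma cast_injn {n : ℕ} {a b : ℕ} (ha : a < n) (hb : b < n)
    (h : (a : ZMod n) = b) : a = b := by
  have := congrArg ZMod.val h
  rwa [ZMod.val_cast_of_lt ha, ZMod.val_cast_of_lt hb] at this

lemma adj_iff {n : ℕ} (hn : 2 ≤ n) (i j : ZMod n) :
    (circulantGraph n ({1} : Set ℕ)).Adj i j ↔ (i - j = 1 ∨ j - i = 1) := by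
  haveI : NeZero n := ⟨by omega⟩
  have hval : ∀ x : ZMod n, x.val = 1 ↔ x = 1 := by
    intro x
    constructor
    · intro h
      have h2 : ((x.val : ℕ) : ZMod n) = ((1 : ℕ) : ZMod n) := by rw [h]
      rwa [ZMod.natCast_rightInverse x, Nat.cast_one] at h2
    · rintro rfl
      have : ((1 : ℕ) : ZMod n).val = 1 := ZMod.val_cast_of_lt (by omega)
      simpa using this
  have hne : ∀ a b : ZMod n, a - b = 1 → a ≠ b := by
    intro a b h hab
    rw [hab, sub_self] at h
    have h01 : ((0 : ℕ) : ZMod n) = ((1 : ℕ) : ZMod n) := by simpa using h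
    have := cast_injn (n := n) (by omega : (0:ℕ) < n) (by omega : (1:ℕ) < n) h01
    omega
  constructor
  · rintro ⟨-, h | h⟩
    · exact Or.inl ((hval _).1 h)
    · exact Or.inr ((hval _).1 h)
  · rintro (h | h)
    · exact ⟨hne _ _ h, Or.inl ((hval _).2 h)⟩
    · exact ⟨fun hh => (hne _ _ h) hh.symm, Or.inr ((hval _).2 h)⟩

lemma mem_ind_iff {n : ℕ} (hn : 2 ≤ n) (F : Finset (ZMod n)) :
    F ∈ IndComplex (circulantGraph n ({1} : Set ℕ)) ↔ ∀ a ∈ F, ∀ b ∈ F, a - b ≠ 1 := by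
  show (∀ u ∈ F, ∀ v ∈ F, ¬ _) ↔ _
  constructor
  · intro h a ha b hb hab
    exact h a ha b hb ((adj_iff hn a b).2 (Or.inl hab))
  · intro h a ha b hb hadj
    rcases (adj_iff hn a b).1 hadj with h1 | h1
    · exact h a ha b hb h1
    · exact h b hb a ha h1

lemma linkC_empty {V : Type*} [DecidableEq V] (Δ : Set (Finset V)) :
    linkC Δ (∅ : Finset V) = Δ := by
  ext G; simp [linkC]

lemma zero_ne_one' {n : ℕ} (hn : 2 ≤ n) : (0 : ZMod n) ≠ 1 := by
  intro h
  have h01 : ((0 : ℕ) : ZMod n) = ((1 : ℕ) : ZMod n) := by simpa using h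
  have := cast_injn (n := n) (by omega : (0:ℕ) < n) (by omega : (1:ℕ) < n) h01
  omega

/-- A generic "step" in the independence complex of the cycle. -/
lemma step_lemma {n : ℕ} (hn : 2 ≤ n) (a d : ZMod n) (h0 : d ≠ 0) (h1 : d ≠ 1)
    (h2 : -d ≠ 1) :
    a ≠ a + d ∧ ({a, a + d} : Finset (ZMod n)) ∈ IndComplex (circulantGraph n ({1} : Set ℕ)) := by
  have hz := zero_ne_one' hn
  constructor
  · intro h
    exact h0 (by rw [show d = a + d - a from by ring, ← h, sub_self])
  · rw [mem_ind_iff hn]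
    intro x hx y hy
    simp only [Finset.mem_insert, Finset.mem_singleton] at hx hy
    rcases hx with rfl | rfl <;> rcases hy with rfl | rfl <;> intro hq
    · exact hz (by rw [← hq]; ring)
    · exact h2 (by rw [← hq]; ring)
    · exact h1 (by rw [← hq]; ring)
    · exact hz (by rw [← hq]; ring)

/-- A generic edge of the link of a single vertex `v` in the independence complex. -/
lemma link_edge {n : ℕ} (hn : 2 ≤ n) (v c e : ZMod n) (hce : c ≠ e) (hc0 : c ≠ 0)
    (he0 : e ≠ 0) (h1 : c - e ≠ 1) (h2 : e - c ≠ 1) (h3 : c ≠ 1) (h4 : -c ≠ 1)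
    (h5 : e ≠ 1) (h6 : -e ≠ 1) :
    v + c ≠ v + e ∧
      ({v + c, v + e} : Finset (ZMod n)) ∈ linkC (IndComplex (circulantGraph n ({1} : Set ℕ))) {v} := by
  have hz := zero_ne_one' hn
  refine ⟨fun h => hce (add_left_cancel h), ?_, ?_⟩
  · rw [Finset.disjoint_left]
    intro x hx hx'
    simp only [Finset.mem_insert, Finset.mem_singleton] at hx hx'
    rcases hx with rfl | rfl
    · exact hc0 (by rw [show c = v + c - v from by ring, hx', sub_self])
    · exact he0 (by rw [show e = v + e - v from by ring, hx', sub_self])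
  · rw [mem_ind_iff hn]
    intro x hx y hy
    simp only [Finset.mem_union, Finset.mem_insert, Finset.mem_singleton] at hx hy
    rcases hx with (rfl | rfl) | rfl <;> rcases hy with (rfl | rfl) | rfl <;> intro hq
    · exact hz (by rw [← hq]; ring)
    · exact h1 (by rw [← hq]; ring)
    · exact h3 (by rw [← hq]; ring)
    · exact h2 (by rw [← hq]; ring)
    · exact hz (by rw [← hq]; ring)
    · exact h5 (by rw [← hq]; ring)
    · exact h4 (by rw [← hq]; ring)
    · exact h6 (by rw [← hq]; ring)
    · exact hz (by rw [← hq]; ring)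

lemma pair_symm_rel {V : Type*} [DecidableEq V] (Δ : Set (Finset V)) :
    Symmetric (fun a b : V => a ≠ b ∧ ({a, b} : Finset V) ∈ Δ) := by
  intro a b ⟨h1, h2⟩
  exact ⟨h1.symm, by rwa [Finset.pair_comm]⟩

lemma s2_three : GraphS2 (circulantGraph 3 ({1} : Set ℕ)) := by
  intro F hF hEx u hu w hw
  exfalso
  obtain ⟨G, hG, hcard⟩ := hEx
  obtain ⟨a, ha, b, hb, hab⟩ := Finset.one_lt_card.mp hcard
  have hmem := hG.2
  rw [mem_ind_iff (by norm_num)] at hmem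
  exact (by decide : ∀ a b : ZMod 3, a ≠ b → a - b ≠ 1 → b - a ≠ 1 → False) a b hab
    (hmem a (Finset.mem_union_left _ ha) b (Finset.mem_union_left _ hb))
    (hmem b (Finset.mem_union_left _ hb) a (Finset.mem_union_left _ ha))

lemma s2_five : GraphS2 (circulantGraph 5 ({1} : Set ℕ)) := by
  intro F hF hEx u hu w hw
  rcases Finset.eq_empty_or_nonempty F with rfl | ⟨c, hc⟩
  · simp only [linkC_empty] at hu hw ⊢
    have hstep : ∀ a : ZMod 5,
        Relation.ReflTransGen
          (fun a b : ZMod 5 => a ≠ b ∧ ({a, b} : Finset (ZMod 5)) ∈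
            IndComplex (circulantGraph 5 ({1} : Set ℕ))) a (a + 2) := fun a =>
      Relation.ReflTransGen.single
        (step_lemma (by norm_num) a 2 (by decide) (by decide) (by decide))
    have r2 := hstep u
    have r4 := r2.trans (hstep _)
    have r6 := r4.trans (hstep _)
    have r8 := r6.trans (hstep _)
    have hw0 : u + (w - u) = w := by ring
    rcases (by decide : ∀ d : ZMod 5, d = 0 ∨ d = 2 ∨ d = 2 + 2 ∨ d = 2 + 2 + 2 ∨
        d = 2 + 2 + 2 + 2) (w - u) with h | h | h | h | h
    · rw [← hw0, h, add_zero]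
    · rw [← hw0, h]; exact r2
    · rw [← hw0, h, show u + (2 + 2 : ZMod 5) = u + 2 + 2 from by ring]; exact r4
    · rw [← hw0, h, show u + (2 + 2 + 2 : ZMod 5) = u + 2 + 2 + 2 from by ring]; exact r6
    · rw [← hw0, h, show u + (2 + 2 + 2 + 2 : ZMod 5) = u + 2 + 2 + 2 + 2 from by ring]
      exact r8
  · exfalso
    obtain ⟨G, hG, hcard⟩ := hEx
    obtain ⟨a, ha, b, hb, hab⟩ := Finset.one_lt_card.mp hcard
    have hmem := hG.2
    rw [mem_ind_iff (by norm_num)] at hmem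
    have hac : a ≠ c := fun h => Finset.disjoint_left.mp hG.1 ha (h ▸ hc)
    have hbc : b ≠ c := fun h => Finset.disjoint_left.mp hG.1 hb (h ▸ hc)
    have ma := Finset.mem_union_left F ha
    have mb := Finset.mem_union_left F hb
    have mc := Finset.mem_union_right G hc
    rcases (by decide : ∀ a b c : ZMod 5, a ≠ b → a ≠ c → b ≠ c → (a - b = 1 ∨ b - a = 1 ∨
        a - c = 1 ∨ c - a = 1 ∨ b - c = 1 ∨ c - b = 1)) a b c hab hac hbc with
      h | h | h | h | h | h
    · exact hmem _ ma _ mb h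
    · exact hmem _ mb _ ma h
    · exact hmem _ ma _ mc h
    · exact hmem _ mc _ ma h
    · exact hmem _ mb _ mc h
    · exact hmem _ mc _ mb h

lemma s2_seven : GraphS2 (circulantGraph 7 ({1} : Set ℕ)) := by
  intro F hF hEx u hu w hw
  by_cases hc2 : 2 ≤ F.card
  · exfalso
    obtain ⟨G, hG, hcard⟩ := hEx
    obtain ⟨a, ha, b, hb, hab⟩ := Finset.one_lt_card.mp hcard
    obtain ⟨c, hc, d, hd, hcd⟩ := Finset.one_lt_card.mp hc2
    have hmem := hG.2
    rw [mem_ind_iff (by norm_num)] at hmem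
    have hac : a ≠ c := fun h => Finset.disjoint_left.mp hG.1 ha (h ▸ hc)
    have had : a ≠ d := fun h => Finset.disjoint_left.mp hG.1 ha (h ▸ hd)
    have hbc : b ≠ c := fun h => Finset.disjoint_left.mp hG.1 hb (h ▸ hc)
    have hbd : b ≠ d := fun h => Finset.disjoint_left.mp hG.1 hb (h ▸ hd)
    have ma := Finset.mem_union_left F ha
    have mb := Finset.mem_union_left F hb
    have mc := Finset.mem_union_right G hc
    have md := Finset.mem_union_right G hd
    rcases (by decide : ∀ a b c d : ZMod 7, a ≠ b → c ≠ d → a ≠ c → a ≠ d → b ≠ c → b ≠ d →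
        (a - b = 1 ∨ b - a = 1 ∨ a - c = 1 ∨ c - a = 1 ∨ a - d = 1 ∨ d - a = 1 ∨
         b - c = 1 ∨ c - b = 1 ∨ b - d = 1 ∨ d - b = 1 ∨ c - d = 1 ∨ d - c = 1))
        a b c d hab hcd hac had hbc hbd with
      h | h | h | h | h | h | h | h | h | h | h | h
    · exact hmem _ ma _ mb h
    · exact hmem _ mb _ ma h
    · exact hmem _ ma _ mc h
    · exact hmem _ mc _ ma h
    · exact hmem _ ma _ md h
    · exact hmem _ md _ ma h
    · exact hmem _ mb _ mc h
    · exact hmem _ mc _ mb h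
    · exact hmem _ mb _ md h
    · exact hmem _ md _ mb h
    · exact hmem _ mc _ md h
    · exact hmem _ md _ mc h
  · by_cases hc1 : F.card = 1
    · obtain ⟨v, rfl⟩ := Finset.card_eq_one.mp hc1
      have e35 := link_edge (by norm_num) v 3 5 (by decide) (by decide) (by decide)
        (by decide) (by decide) (by decide) (by decide) (by decide) (by decide)
      have e52 := link_edge (by norm_num) v 5 2 (by decide) (by decide) (by decide)
        (by decide) (by decide) (by decide) (by decide) (by decide) (by decide)
      have e42 := link_edge (by norm_num) v 4 2 (by decide) (by decide) (by decide)
        (by decide) (by decide) (by decide) (by decide) (by decide) (by decide)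
      have hub : ∀ x : ZMod 7,
          ({x} : Finset (ZMod 7)) ∈ linkC (IndComplex (circulantGraph 7 ({1} : Set ℕ))) {v} →
          Relation.ReflTransGen
            (fun a b : ZMod 7 => a ≠ b ∧ ({a, b} : Finset (ZMod 7)) ∈
              linkC (IndComplex (circulantGraph 7 ({1} : Set ℕ))) {v}) x (v + 2) := by
        intro x hx
        have hxv : x ≠ v := fun h =>
          Finset.disjoint_left.mp hx.1 (Finset.mem_singleton_self x)
            (by rw [h]; exact Finset.mem_singleton_self v)
        have hmem := hx.2
        rw [mem_ind_iff (by norm_num)] at hmem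
        have hx1 : x - v ≠ 1 := hmem x (by simp) v (by simp)
        have hx2 : v - x ≠ 1 := hmem v (by simp) x (by simp)
        have hd0 : x - v ≠ 0 := fun h => hxv (by rw [show x = x - v + v from by ring, h, zero_add])
        have hxval : v + (x - v) = x := by ring
        rcases (by decide : ∀ d : ZMod 7, d ≠ 0 → d ≠ 1 → -d ≠ 1 →
            (d = 2 ∨ d = 3 ∨ d = 4 ∨ d = 5)) (x - v) hd0 hx1
            (by rw [show -(x - v) = v - x from by ring]; exact hx2) with h | h | h | h
        · rw [← hxval, h]
        · rw [← hxval, h]; exact Relation.ReflTransGen.tail (Relation.ReflTransGen.single e35) e52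
        · rw [← hxval, h]; exact Relation.ReflTransGen.single e42
        · rw [← hxval, h]; exact Relation.ReflTransGen.single e52
      exact (hub u hu).trans
        (@Std.Symm.symm _ _ (@Relation.ReflTransGen.stdSymm _ _ ⟨fun a b h => pair_symm_rel _ h⟩) _ _ (hub w hw))
    · have hFe : F = ∅ := Finset.card_eq_zero.mp (by omega)
      subst hFe
      simp only [linkC_empty] at hu hw ⊢
      have hstep : ∀ a : ZMod 7,
          Relation.ReflTransGen
            (fun a b : ZMod 7 => a ≠ b ∧ ({a, b} : Finset (ZMod 7)) ∈
              IndComplex (circulantGraph 7 ({1} : Set ℕ))) a (a + 2) := fun a =>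
        Relation.ReflTransGen.single
          (step_lemma (by norm_num) a 2 (by decide) (by decide) (by decide))
      have r2 := hstep u
      have r4 := r2.trans (hstep _)
      have r6 := r4.trans (hstep _)
      have r8 := r6.trans (hstep _)
      have r10 := r8.trans (hstep _)
      have r12 := r10.trans (hstep _)
      have hw0 : u + (w - u) = w := by ring
      rcases (by decide : ∀ d : ZMod 7, d = 0 ∨ d = 2 ∨ d = 2 + 2 ∨ d = 2 + 2 + 2 ∨
          d = 2 + 2 + 2 + 2 ∨ d = 2 + 2 + 2 + 2 + 2 ∨ d = 2 + 2 + 2 + 2 + 2 + 2) (w - u)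
        with h | h | h | h | h | h | h
      · rw [← hw0, h, add_zero]
      · rw [← hw0, h]; exact r2
      · rw [← hw0, h, show u + (2 + 2 : ZMod 7) = u + 2 + 2 from by ring]; exact r4
      · rw [← hw0, h, show u + (2 + 2 + 2 : ZMod 7) = u + 2 + 2 + 2 from by ring]; exact r6
      · rw [← hw0, h, show u + (2 + 2 + 2 + 2 : ZMod 7) = u + 2 + 2 + 2 + 2 from by ring]
        exact r8
      · rw [← hw0, h,
          show u + (2 + 2 + 2 + 2 + 2 : ZMod 7) = u + 2 + 2 + 2 + 2 + 2 from by ring]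
        exact r10
      · rw [← hw0, h,
          show u + (2 + 2 + 2 + 2 + 2 + 2 : ZMod 7) = u + 2 + 2 + 2 + 2 + 2 + 2 from by ring]
        exact r12

lemma not_s2_four : ¬ GraphS2 (circulantGraph 4 ({1} : Set ℕ)) := by
  intro h
  have hemp : (∅ : Finset (ZMod 4)) ∈ IndComplex (circulantGraph 4 ({1} : Set ℕ)) := by
    intro u hu; simp at hu
  have h0 : ({0} : Finset (ZMod 4)) ∈
      linkC (IndComplex (circulantGraph 4 ({1} : Set ℕ))) ∅ :=
    ⟨Finset.disjoint_empty_right _, by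
      rw [Finset.union_empty, mem_ind_iff (by norm_num)]; decide⟩
  have h1 : ({1} : Finset (ZMod 4)) ∈
      linkC (IndComplex (circulantGraph 4 ({1} : Set ℕ))) ∅ :=
    ⟨Finset.disjoint_empty_right _, by
      rw [Finset.union_empty, mem_ind_iff (by norm_num)]; decide⟩
  have hG : ({0, 2} : Finset (ZMod 4)) ∈
      linkC (IndComplex (circulantGraph 4 ({1} : Set ℕ))) ∅ :=
    ⟨Finset.disjoint_empty_right _, by
      rw [Finset.union_empty, mem_ind_iff (by norm_num)]; decide⟩
  have hpath := h ∅ hemp ⟨{0, 2}, hG, by decide⟩ 0 h0 1 h1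
  have key : ∀ w : ZMod 4,
      Relation.ReflTransGen (fun a b : ZMod 4 => a ≠ b ∧ ({a, b} : Finset (ZMod 4)) ∈
        linkC (IndComplex (circulantGraph 4 ({1} : Set ℕ))) ∅) 0 w → (w = 0 ∨ w = 2) := by
    intro w hw
    induction hw with
    | refl => exact Or.inl rfl
    | tail _ hrel ih =>
        obtain ⟨hne, hmem⟩ := hrel
        rw [linkC_empty, mem_ind_iff (by norm_num)] at hmem
        exact (by decide : ∀ b c : ZMod 4, b ≠ c → b - c ≠ 1 → c - b ≠ 1 →
            (b = 0 ∨ b = 2) → (c = 0 ∨ c = 2)) _ _ hne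
          (hmem _ (by simp) _ (by simp)) (hmem _ (by simp) _ (by simp)) ih
  rcases key 1 hpath with hq | hq <;> exact absurd hq (by decide)

lemma not_s2_big {n : ℕ} (h6 : 6 ≤ n) (h7 : n ≠ 7) :
    ¬ GraphS2 (circulantGraph n ({1} : Set ℕ)) := by
  intro hS2
  have hn2 : 2 ≤ n := by omega
  haveI : NeZero n := ⟨by omega⟩
  set k := (n - 6) / 2 with hk
  set s : Finset ℕ := insert (n - 3) ((Finset.range k).image fun i => 3 + 2 * i) with hs
  have hsmem : ∀ x ∈ s, 3 ≤ x ∧ x + 3 ≤ n := by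
    intro x hx
    simp only [hs, Finset.mem_insert, Finset.mem_image, Finset.mem_range] at hx
    rcases hx with rfl | ⟨i, hi, rfl⟩ <;> omega
  have hsgap : ∀ x ∈ s, ∀ y ∈ s, x + 1 ≠ y := by
    intro x hx y hy
    simp only [hs, Finset.mem_insert, Finset.mem_image, Finset.mem_range] at hx hy
    rcases hx with rfl | ⟨i, hi, rfl⟩ <;> rcases hy with rfl | ⟨j, hj, rfl⟩ <;> omega
  have hdom : ∀ v, 2 ≤ v → v + 2 ≤ n → ∃ x ∈ s, x = v ∨ x = v + 1 ∨ x + 1 = v := by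
    intro v h2 hv
    by_cases hbig : n - 4 ≤ v
    · exact ⟨n - 3, by simp [hs], by omega⟩
    · by_cases hodd : v % 2 = 1
      · refine ⟨3 + 2 * ((v - 3) / 2), ?_, by omega⟩
        simp only [hs, Finset.mem_insert, Finset.mem_image, Finset.mem_range]
        exact Or.inr ⟨(v - 3) / 2, by omega, rfl⟩
      · by_cases hlt : (v - 2) / 2 < k
        · refine ⟨3 + 2 * ((v - 2) / 2), ?_, by omega⟩
          simp only [hs, Finset.mem_insert, Finset.mem_image, Finset.mem_range]
          exact Or.inr ⟨(v - 2) / 2, hlt, rfl⟩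
        · refine ⟨3 + 2 * ((v - 4) / 2), ?_, by omega⟩
          simp only [hs, Finset.mem_insert, Finset.mem_image, Finset.mem_range]
          exact Or.inr ⟨(v - 4) / 2, by omega, rfl⟩
  -- transfer to `ZMod n`
  have master : ∀ x y : ℕ, x < n → y + 1 < n → x ≠ y + 1 →
      (x : ZMod n) - (y : ZMod n) ≠ 1 := by
    intro x y hx hy hne h
    have h' : ((y + 1 : ℕ) : ZMod n) = (x : ZMod n) := by
      push_cast
      rw [eq_add_of_sub_eq h]; ring
    exact hne (cast_injn hy hx h').symm
  have hsum : ((n - 1 : ℕ) : ZMod n) + 1 = 0 := by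
    have h1 : ((n - 1 : ℕ) : ZMod n) + 1 = ((n - 1 + 1 : ℕ) : ZMod n) := by push_cast; ring
    rw [h1, show n - 1 + 1 = n from by omega, ZMod.natCast_self]
  have master2 : ∀ x : ℕ, x + 1 < n → x ≠ 0 →
      (x : ZMod n) - ((n - 1 : ℕ) : ZMod n) ≠ 1 := by
    intro x hx hne h
    have h2 : ((x + 1 : ℕ) : ZMod n) = ((1 : ℕ) : ZMod n) := by
      push_cast
      rw [eq_add_of_sub_eq h, add_assoc, hsum, add_zero]
    have := cast_injn (by omega) (by omega) h2
    omega
  set F : Finset (ZMod n) := s.image (Nat.cast : ℕ → ZMod n) with hFdef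
  have f_ss : ∀ x ∈ s, ∀ y ∈ s, (x : ZMod n) - (y : ZMod n) ≠ 1 := by
    intro x hx y hy
    obtain ⟨hx3, hxn⟩ := hsmem x hx
    obtain ⟨hy3, hyn⟩ := hsmem y hy
    exact master x y (by omega) (by omega) (hsgap y hy x hx).symm
  have f_0x : ∀ x ∈ s, (0 : ZMod n) - (x : ZMod n) ≠ 1 := by
    intro x hx
    obtain ⟨hx3, hxn⟩ := hsmem x hx
    have := master 0 x (by omega) (by omega) (by omega)
    simpa using this
  have f_x0 : ∀ x ∈ s, (x : ZMod n) - (0 : ZMod n) ≠ 1 := by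
    intro x hx
    obtain ⟨hx3, hxn⟩ := hsmem x hx
    have := master x 0 (by omega) (by omega) (by omega)
    simpa using this
  have f_1x : ∀ x ∈ s, (1 : ZMod n) - (x : ZMod n) ≠ 1 := by
    intro x hx
    obtain ⟨hx3, hxn⟩ := hsmem x hx
    have := master 1 x (by omega) (by omega) (by omega)
    simpa using this
  have f_x1 : ∀ x ∈ s, (x : ZMod n) - (1 : ZMod n) ≠ 1 := by
    intro x hx
    obtain ⟨hx3, hxn⟩ := hsmem x hx
    have := master x 1 (by omega) (by omega) (by omega)
    simpa using this
  have f_lx : ∀ x ∈ s, ((n - 1 : ℕ) : ZMod n) - (x : ZMod n) ≠ 1 := by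
    intro x hx
    obtain ⟨hx3, hxn⟩ := hsmem x hx
    exact master (n - 1) x (by omega) (by omega) (by omega)
  have f_xl : ∀ x ∈ s, (x : ZMod n) - ((n - 1 : ℕ) : ZMod n) ≠ 1 := by
    intro x hx
    obtain ⟨hx3, hxn⟩ := hsmem x hx
    exact master2 x (by omega) (by omega)
  have f_1l : (1 : ZMod n) - ((n - 1 : ℕ) : ZMod n) ≠ 1 := by
    have := master2 1 (by omega) (by omega)
    simpa using this
  have f_l1 : ((n - 1 : ℕ) : ZMod n) - (1 : ZMod n) ≠ 1 := by
    have := master (n - 1) 1 (by omega) (by omega) (by omega)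
    simpa using this
  have hz := zero_ne_one' hn2
  have hself : ∀ a : ZMod n, a - a ≠ 1 := by intro a; rw [sub_self]; exact hz
  have hnotF : ∀ m : ℕ, m < 3 → ((m : ZMod n) ∉ F) := by
    intro m hm hmem
    rw [hFdef, Finset.mem_image] at hmem
    obtain ⟨x, hx, hxe⟩ := hmem
    obtain ⟨hx3, hxn⟩ := hsmem x hx
    have := cast_injn (by omega) (by omega) hxe
    omega
  have hlnotF : (((n - 1 : ℕ) : ZMod n) ∉ F) := by
    intro hmem
    rw [hFdef, Finset.mem_image] at hmem
    obtain ⟨x, hx, hxe⟩ := hmem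
    obtain ⟨hx3, hxn⟩ := hsmem x hx
    have := cast_injn (by omega) (by omega) hxe
    omega
  have hFmem : F ∈ IndComplex (circulantGraph n ({1} : Set ℕ)) := by
    rw [mem_ind_iff hn2]
    intro a ha b hb
    rw [hFdef, Finset.mem_image] at ha hb
    obtain ⟨x, hx, rfl⟩ := ha
    obtain ⟨y, hy, rfl⟩ := hb
    exact f_ss x hx y hy
  have h0link : ({(0 : ZMod n)} : Finset (ZMod n)) ∈
      linkC (IndComplex (circulantGraph n ({1} : Set ℕ))) F := by
    constructor
    · rw [Finset.disjoint_left]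
      intro a ha
      rw [Finset.mem_singleton] at ha
      subst ha
      simpa using hnotF 0 (by omega)
    · rw [mem_ind_iff hn2]
      intro a ha b hb
      rw [Finset.mem_union, Finset.mem_singleton] at ha hb
      rcases ha with rfl | ha <;> rcases hb with rfl | hb
      · exact hself _
      · rw [hFdef, Finset.mem_image] at hb; obtain ⟨y, hy, rfl⟩ := hb; exact f_0x y hy
      · rw [hFdef, Finset.mem_image] at ha; obtain ⟨x, hx, rfl⟩ := ha; exact f_x0 x hx
      · rw [hFdef, Finset.mem_image] at ha hb
        obtain ⟨x, hx, rfl⟩ := ha; obtain ⟨y, hy, rfl⟩ := hb; exact f_ss x hx y hy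
  have h1link : ({(1 : ZMod n)} : Finset (ZMod n)) ∈
      linkC (IndComplex (circulantGraph n ({1} : Set ℕ))) F := by
    constructor
    · rw [Finset.disjoint_left]
      intro a ha
      rw [Finset.mem_singleton] at ha
      subst ha
      simpa using hnotF 1 (by omega)
    · rw [mem_ind_iff hn2]
      intro a ha b hb
      rw [Finset.mem_union, Finset.mem_singleton] at ha hb
      rcases ha with rfl | ha <;> rcases hb with rfl | hb
      · exact hself _
      · rw [hFdef, Finset.mem_image] at hb; obtain ⟨y, hy, rfl⟩ := hb; exact f_1x y hy
      · rw [hFdef, Finset.mem_image] at ha; obtain ⟨x, hx, rfl⟩ := ha; exact f_x1 x hx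
      · rw [hFdef, Finset.mem_image] at ha hb
        obtain ⟨x, hx, rfl⟩ := ha; obtain ⟨y, hy, rfl⟩ := hb; exact f_ss x hx y hy
  have hne1l : (1 : ZMod n) ≠ ((n - 1 : ℕ) : ZMod n) := by
    intro h
    have h' : ((1 : ℕ) : ZMod n) = ((n - 1 : ℕ) : ZMod n) := by simpa using h
    have := cast_injn (by omega) (by omega) h'
    omega
  have hGlink : ({(1 : ZMod n), ((n - 1 : ℕ) : ZMod n)} : Finset (ZMod n)) ∈
      linkC (IndComplex (circulantGraph n ({1} : Set ℕ))) F := by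
    constructor
    · rw [Finset.disjoint_left]
      intro a ha
      rw [Finset.mem_insert, Finset.mem_singleton] at ha
      rcases ha with rfl | rfl
      · simpa using hnotF 1 (by omega)
      · exact hlnotF
    · rw [mem_ind_iff hn2]
      intro a ha b hb
      rw [Finset.mem_union, Finset.mem_insert, Finset.mem_singleton] at ha hb
      rcases ha with (rfl | rfl) | ha <;> rcases hb with (rfl | rfl) | hb
      · exact hself _
      · exact f_1l
      · rw [hFdef, Finset.mem_image] at hb; obtain ⟨y, hy, rfl⟩ := hb; exact f_1x y hy
      · exact f_l1
      · exact hself _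
      · rw [hFdef, Finset.mem_image] at hb; obtain ⟨y, hy, rfl⟩ := hb; exact f_lx y hy
      · rw [hFdef, Finset.mem_image] at ha; obtain ⟨x, hx, rfl⟩ := ha; exact f_x1 x hx
      · rw [hFdef, Finset.mem_image] at ha; obtain ⟨x, hx, rfl⟩ := ha; exact f_xl x hx
      · rw [hFdef, Finset.mem_image] at ha hb
        obtain ⟨x, hx, rfl⟩ := ha; obtain ⟨y, hy, rfl⟩ := hb; exact f_ss x hx y hy
  have hpath := hS2 F hFmem ⟨{(1 : ZMod n), ((n - 1 : ℕ) : ZMod n)}, hGlink,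
    le_of_eq (Finset.card_pair hne1l).symm⟩ 0 h0link 1 h1link
  rcases hpath.cases_head with heq | ⟨b, ⟨hb0, hbmem⟩, -⟩
  · exact hz heq
  · have hdisj := hbmem.1
    have hmem := hbmem.2
    rw [mem_ind_iff hn2] at hmem
    have hbv : ((b.val : ℕ) : ZMod n) = b := ZMod.natCast_rightInverse b
    have hvlt : b.val < n := ZMod.val_lt b
    have hv0 : b.val ≠ 0 := by
      intro h
      apply hb0
      rw [← hbv, h, Nat.cast_zero]
    by_cases hv1 : b.val = 1
    · apply hmem b (by simp) 0 (by simp)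
      rw [← hbv, hv1]
      simp
    · by_cases hvl : b.val = n - 1
      · apply hmem 0 (by simp) b (by simp)
        rw [← hbv, hvl, sub_eq_iff_eq_add, ← hsum]
        ring
      · obtain ⟨x, hxs, hxc⟩ := hdom b.val (by omega) (by omega)
        have hxF : (x : ZMod n) ∈ F := by
          rw [hFdef]
          exact Finset.mem_image_of_mem _ hxs
        rcases hxc with rfl | hx | hx
        · exact Finset.disjoint_left.mp hdisj (by rw [hbv]; simp) hxF
        · apply hmem (x : ZMod n) (Finset.mem_union_right _ hxF) b (by simp)
          rw [← hbv, hx]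
          push_cast
          ring
        · apply hmem b (by simp) (x : ZMod n) (Finset.mem_union_right _ hxF)
          rw [← hbv, ← hx]
          push_cast
          ring

end CycAux

/-- The cycle graph `C_n` (`n ≥ 3`) is `S₂` iff `n = 3, 5,` or `7`. -/
theorem cycle_S2_iff (n : ℕ) (hn : 3 ≤ n) :
    GraphS2 (circulantGraph n ({1} : Set ℕ)) ↔ n = 3 ∨ n = 5 ∨ n = 7 := by
  constructor
  · intro h
    by_contra hne
    push_neg at hne
    obtain ⟨h3, h5, h7⟩ := hne
    rcases (by omega : n = 4 ∨ (6 ≤ n ∧ n ≠ 7)) with rfl | ⟨h6, h7'⟩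
    · exact CycAux.not_s2_four h
    · exact CycAux.not_s2_big h6 h7' h
  · rintro (rfl | rfl | rfl)
    · exact CycAux.s2_three
    · exact CycAux.s2_five
    · exact CycAux.s2_seven
end

section
/- Let n and d be integers with n ≥ 2d+2 and d ≥ 1, and let G = C_n(d+1, d+2, ..., ⌊n/2⌋) be the circulant graph with generating set {d+1, d+2, ..., ⌊n/2⌋}. Then G satisfies Serre's condition S_2 if and only if n > 3d or n = 2d+2. -/
namespace CircS2Aux

def close (n d : ℕ) (v w : ZMod n) : Prop := (v - w).val ≤ d ∨ (w - v).val ≤ d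

lemma close_symm {n d : ℕ} {v w : ZMod n} (h : close n d v w) : close n d w v := h.symm

lemma close_refl (n d : ℕ) (v : ZMod n) : close n d v v := by
  left; simp [close]

lemma val_neg_eq {n : ℕ} [NeZero n] {a : ZMod n} (h : a ≠ 0) : (-a).val = n - a.val := by
  haveI : NeZero a := ⟨h⟩; exact ZMod.val_neg_of_ne_zero a

lemma not_adj_iff {n d : ℕ} [NeZero n] (h2 : 2*d+2 ≤ n) (v w : ZMod n) :
    ¬ (circulantGraph n (Set.Icc (d + 1) (n / 2))).Adj v w ↔ v = w ∨ close n d v w := by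
  by_cases hvw : v = w
  · subst hvw; simp [circulantGraph]
  · have hvw0 : v - w ≠ 0 := sub_ne_zero.mpr hvw
    have h1 : 1 ≤ (v-w).val := Nat.pos_of_ne_zero (fun h => hvw0 (by rwa [← ZMod.val_eq_zero]))
    have hlt : (v-w).val < n := ZMod.val_lt _
    have hneg : (w - v).val = n - (v-w).val := by
      rw [show w - v = -(v - w) by ring]; exact val_neg_eq hvw0
    have : (circulantGraph n (Set.Icc (d + 1) (n / 2))).Adj v w ↔
        (v-w).val ∈ Set.Icc (d+1) (n/2) ∨ (w-v).val ∈ Set.Icc (d+1) (n/2) := by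
      simp only [circulantGraph]
      exact and_iff_right hvw
    rw [this, hneg]
    simp only [Set.mem_Icc, close, hneg, eq_iff_iff]
    constructor
    · intro h
      right
      omega
    · rintro (h | h) hc
      · exact hvw h
      · omega

lemma mem_ind_iff {n d : ℕ} [NeZero n] (h2 : 2*d+2 ≤ n) (S : Finset (ZMod n)) :
    S ∈ IndComplex (circulantGraph n (Set.Icc (d + 1) (n / 2))) ↔
      ∀ v ∈ S, ∀ w ∈ S, v ≠ w → close n d v w := by
  constructor
  · intro hS v hv w hw hvw
    have := hS v hv w hw
    rw [not_adj_iff h2] at this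
    exact this.resolve_left hvw
  · intro h v hv w hw
    rw [not_adj_iff h2]
    by_cases hvw : v = w
    · exact Or.inl hvw
    · exact Or.inr (h v hv w hw hvw)

lemma ind_subset {V : Type*} {G : SimpleGraph V} {S T : Finset V}
    (hST : S ⊆ T) (hT : T ∈ IndComplex G) : S ∈ IndComplex G :=
  fun u hu v hv => hT u (hST hu) v (hST hv)


lemma val_cast_sub {n x y : ℕ} [NeZero n] (hx : x < n) (hy : y < n) :
    ((x : ZMod n) - (y : ZMod n)).val = if y ≤ x then x - y else x + n - y := by
  have key : (x : ZMod n) - (y : ZMod n) = ((x + (n - y) : ℕ) : ZMod n) := by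
    push_cast [Nat.cast_sub hy.le]
    rw [ZMod.natCast_self]
    ring
  rw [key, ZMod.val_natCast]
  rcases le_or_gt y x with h | h
  · rw [if_pos h, show x + (n - y) = (x - y) + n by omega, Nat.add_mod_right,
      Nat.mod_eq_of_lt (by omega)]
  · rw [if_neg (by omega), Nat.mod_eq_of_lt (by omega)]
    omega

/-- close for casts of naturals, fully in terms of ℕ arithmetic. -/
lemma close_cast_iff {n d x y : ℕ} [NeZero n] (hx : x < n) (hy : y < n) :
    close n d (x : ZMod n) (y : ZMod n) ↔
      ((y ≤ x ∧ (x - y ≤ d ∨ y + n - x ≤ d)) ∨ (x ≤ y ∧ (y - x ≤ d ∨ x + n - y ≤ d))) := by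
  unfold close
  rw [val_cast_sub hx hy, val_cast_sub hy hx]
  rcases le_or_gt y x with h | h
  · rw [if_pos h]
    rcases le_or_gt x y with h' | h'
    · rw [if_pos h']; omega
    · rw [if_neg (by omega)]; omega
  · rw [if_neg (by omega), if_pos h.le]; omega

/-- Integer coordinate of `v` relative to base point `u₀`. -/
def omap (n d : ℕ) (u₀ v : ZMod n) : ℤ :=
  if (v - u₀).val ≤ d then ((v - u₀).val : ℤ) else ((v - u₀).val : ℤ) - n

lemma omap_self (n d : ℕ) (u₀ : ZMod n) : omap n d u₀ u₀ = 0 := by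
  simp [omap]

lemma repr_omap (n d : ℕ) (u₀ v : ZMod n) [NeZero n] :
    v = u₀ + ((omap n d u₀ v : ℤ) : ZMod n) := by
  have h : ((((v - u₀).val : ℕ) : ℤ) : ZMod n) = v - u₀ := by
    push_cast
    rw [ZMod.natCast_val, ZMod.cast_id]
  unfold omap
  split_ifs
  · rw [h]; ring
  · push_cast
    rw [ZMod.natCast_val, ZMod.cast_id, ZMod.natCast_self]
    ring

lemma omap_inj {n d : ℕ} [NeZero n] {u₀ v w : ZMod n}
    (h : omap n d u₀ v = omap n d u₀ w) : v = w := by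
  rw [repr_omap n d u₀ v, repr_omap n d u₀ w, h]

lemma omap_bounds {n d : ℕ} [NeZero n] (h2 : 2*d+2 ≤ n) {u₀ v : ZMod n}
    (h : close n d v u₀) : -d ≤ omap n d u₀ v ∧ omap n d u₀ v ≤ d := by
  unfold omap
  have hlt : (v - u₀).val < n := ZMod.val_lt _
  split_ifs with hle
  · constructor
    · have : (0:ℤ) ≤ ((v - u₀).val : ℤ) := by positivity
      omega
    · exact_mod_cast hle
  · rcases h with h | h
    · omega
    · -- (u₀ - v).val ≤ d, and v ≠ u₀ since (v-u₀).val > d > 0... need (v-u₀).val ≥ n - d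
      have hne : v - u₀ ≠ 0 := by
        intro h0; rw [h0] at hle; simp at hle
      have : (u₀ - v).val = n - (v - u₀).val := by
        rw [show u₀ - v = -(v - u₀) by ring]
        haveI : NeZero (v - u₀) := ⟨hne⟩
        exact ZMod.val_neg_of_ne_zero _
      omega

/-- Coordinates of `u₀ + t` for `t ∈ [-d, d]`. -/
lemma omap_add_int {n d : ℕ} [NeZero n] (h2 : 2*d+2 ≤ n) (u₀ : ZMod n) {t : ℤ}
    (h1 : -d ≤ t) (h2' : t ≤ d) :
    omap n d u₀ (u₀ + (t : ZMod n)) = t ∧ close n d (u₀ + (t : ZMod n)) u₀ := by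
  have hsub : u₀ + (t : ZMod n) - u₀ = (t : ZMod n) := by ring
  rcases le_or_gt 0 t with ht | ht
  · have hcast : ((t : ℤ) : ZMod n) = ((t.toNat : ℕ) : ZMod n) := by
      rw [← Int.toNat_of_nonneg ht]; push_cast; rw [Int.toNat_of_nonneg ht]
    have hval : ((t : ℤ) : ZMod n).val = t.toNat := by
      rw [hcast, ZMod.val_cast_of_lt (by omega)]
    constructor
    · unfold omap
      rw [hsub, hval, if_pos (by omega)]
      omega
    · left; rw [hsub, hval]; omega
  · have hcast : ((t : ℤ) : ZMod n) = (((t + n).toNat : ℕ) : ZMod n) := by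
      have hh : (((t + n).toNat : ℕ) : ZMod n) = ((t + (n:ℤ) : ℤ) : ZMod n) := by
        rw [← Int.toNat_of_nonneg (by omega : (0:ℤ) ≤ t + n)]
        push_cast
        rfl
      rw [hh]
      push_cast
      rw [ZMod.natCast_self]
      ring
    have hval : ((t : ℤ) : ZMod n).val = (t + n).toNat := by
      rw [hcast, ZMod.val_cast_of_lt (by omega)]
    have hvneg : (u₀ - (u₀ + (t : ZMod n))).val = ((-t).toNat : ℕ) := by
      have : u₀ - (u₀ + (t : ZMod n)) = (((-t).toNat : ℕ) : ZMod n) := by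
        have hh : (((-t).toNat : ℕ) : ZMod n) = ((-t : ℤ) : ZMod n) := by
          rw [← Int.toNat_of_nonneg (by omega : (0:ℤ) ≤ -t)]
          push_cast
          rfl
        rw [hh]
        push_cast
        ring
      rw [this, ZMod.val_cast_of_lt (by omega)]
    constructor
    · unfold omap
      rw [hsub, hval, if_neg (by omega)]
      omega
    · right; rw [hvneg]; omega


lemma close_omap_iff_aux {n d : ℕ} [NeZero n] (h3 : 3*d+1 ≤ n) (hd : 1 ≤ d) {u₀ v w : ZMod n}
    (hv : close n d v u₀) (hw : close n d w u₀) (hq : omap n d u₀ w ≤ omap n d u₀ v) :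
    (close n d v w ↔ omap n d u₀ v - omap n d u₀ w ≤ d) := by
  obtain ⟨hv1, hv2⟩ := omap_bounds (by omega) hv
  obtain ⟨hw1, hw2⟩ := omap_bounds (by omega) hw
  set p := omap n d u₀ v with hp
  set q := omap n d u₀ w with hqdef
  have key : v - w = (((p - q).toNat : ℕ) : ZMod n) := by
    have k1 : v - w = ((p - q : ℤ) : ZMod n) := by
      conv_lhs => rw [repr_omap n d u₀ v, repr_omap n d u₀ w]
      push_cast
      ring
    have k2 : (((p - q).toNat : ℕ) : ZMod n) = ((p - q : ℤ) : ZMod n) := by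
      rw [← Int.toNat_of_nonneg (by omega : (0:ℤ) ≤ p - q)]
      push_cast
      rfl
    rw [k1, ← k2]
  rcases eq_or_lt_of_le hq with heq | hlt
  · have hvw : v = w := omap_inj heq.symm
    rw [hvw]
    simp only [close_refl, true_iff]
    omega
  · have hval : (v - w).val = (p - q).toNat := by
      rw [key, ZMod.val_cast_of_lt (by omega)]
    have hne : v - w ≠ 0 := by
      intro h0
      rw [h0, ZMod.val_zero] at hval
      omega
    have hneg : (w - v).val = n - (p - q).toNat := by
      rw [show w - v = -(v - w) by ring, val_neg_eq hne, hval]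
    unfold close
    rw [hval, hneg]
    omega

lemma close_omap_iff {n d : ℕ} [NeZero n] (h3 : 3*d+1 ≤ n) (hd : 1 ≤ d) {u₀ v w : ZMod n}
    (hv : close n d v u₀) (hw : close n d w u₀) :
    (close n d v w ↔
      (omap n d u₀ v - omap n d u₀ w ≤ d ∧ omap n d u₀ w - omap n d u₀ v ≤ d)) := by
  rcases le_total (omap n d u₀ w) (omap n d u₀ v) with h | h
  · rw [close_omap_iff_aux h3 hd hv hw h]
    constructor
    · intro h1; exact ⟨h1, by omega⟩
    · intro h1; exact h1.1
  · have haux := close_omap_iff_aux h3 hd hw hv h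
    constructor
    · intro hc
      have := haux.mp (close_symm hc)
      omega
    · intro hc
      exact close_symm (haux.mpr (by omega))


lemma close_of_val_le {n d : ℕ} [NeZero n] {v w : ZMod n} (hv : v.val ≤ d) (hw : w.val ≤ d) :
    close n d v w := by
  rcases le_total w.val v.val with h | h
  · left; rw [ZMod.val_sub h]; omega
  · right; rw [ZMod.val_sub h]; omega

lemma not_S2 {n d : ℕ} [NeZero n] (hd : 1 ≤ d) (hn : 2*d+3 ≤ n) (hn2 : n ≤ 3*d) :
    ¬ GraphS2 (circulantGraph n (Set.Icc (d + 1) (n / 2))) := by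
  intro hS2
  set Gg := circulantGraph n (Set.Icc (d + 1) (n / 2)) with hGg
  set k := 3*d - n with hk
  have hkd : k + 3 ≤ d := by omega
  have hkn : k + n = 3*d := by omega
  set F : Finset (ZMod n) := Finset.univ.filter (fun v : ZMod n => v.val ≤ k ∨ v.val = d)
    with hFdef
  have hmemF : ∀ v : ZMod n, v ∈ F ↔ (v.val ≤ k ∨ v.val = d) := by
    intro v; simp [hFdef]
  have hF : F ∈ IndComplex Gg := by
    rw [mem_ind_iff (by omega)]
    intro v hv w hw _
    rw [hmemF] at hv hw
    exact close_of_val_le (by omega) (by omega)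
  set u : ZMod n := ((k+1 : ℕ) : ZMod n) with hu
  set w : ZMod n := ((2*d : ℕ) : ZMod n) with hwdef
  set G₀ : Finset (ZMod n) := {((k+1 : ℕ) : ZMod n), ((k+2 : ℕ) : ZMod n)} with hG₀
  have hvalk1 : ((k+1 : ℕ) : ZMod n).val = k+1 := ZMod.val_cast_of_lt (by omega)
  have hvalk2 : ((k+2 : ℕ) : ZMod n).val = k+2 := ZMod.val_cast_of_lt (by omega)
  have hval2d : ((2*d : ℕ) : ZMod n).val = 2*d := ZMod.val_cast_of_lt (by omega)
  have hG₀link : G₀ ∈ linkC (IndComplex Gg) F := by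
    constructor
    · rw [Finset.disjoint_left]
      intro a ha haF
      rw [hmemF] at haF
      rw [hG₀, Finset.mem_insert, Finset.mem_singleton] at ha
      rcases ha with rfl | rfl <;> omega
    · rw [mem_ind_iff (by omega)]
      intro v hv w' hw' _
      have hval : ∀ z : ZMod n, z ∈ G₀ ∪ F → z.val ≤ d := by
        intro z hz
        rw [Finset.mem_union, hG₀, Finset.mem_insert, Finset.mem_singleton] at hz
        rcases hz with (rfl | rfl) | hz
        · omega
        · omega
        · rw [hmemF] at hz; omega
      exact close_of_val_le (hval _ hv) (hval _ hw')
  have hG₀card : 2 ≤ G₀.card := by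
    rw [hG₀, Finset.card_insert_of_notMem, Finset.card_singleton]
    rw [Finset.mem_singleton]
    intro h
    have := congrArg ZMod.val h
    rw [hvalk1, hvalk2] at this
    omega
  have hulink : ({u} : Finset (ZMod n)) ∈ linkC (IndComplex Gg) F := by
    constructor
    · rw [Finset.disjoint_left]
      intro a ha haF
      rw [Finset.mem_singleton] at ha
      subst ha
      rw [hmemF] at haF
      rw [hu, hvalk1] at haF
      omega
    · rw [mem_ind_iff (by omega)]
      intro v hv w' hw' _
      have hval : ∀ z : ZMod n, z ∈ {u} ∪ F → z.val ≤ d := by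
        intro z hz
        rw [Finset.mem_union, Finset.mem_singleton] at hz
        rcases hz with rfl | hz
        · rw [hu, hvalk1]; omega
        · rw [hmemF] at hz; omega
      exact close_of_val_le (hval _ hv) (hval _ hw')
  have hcastF : ∀ y : ℕ, y ≤ k ∨ y = d → (y : ZMod n) ∈ F := by
    intro y hy
    rw [hmemF, ZMod.val_cast_of_lt (by omega)]
    exact hy
  have hwlink : ({w} : Finset (ZMod n)) ∈ linkC (IndComplex Gg) F := by
    constructor
    · rw [Finset.disjoint_left]
      intro a ha haF
      rw [Finset.mem_singleton] at ha
      subst ha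
      rw [hmemF, hwdef, hval2d] at haF
      omega
    · rw [mem_ind_iff (by omega)]
      intro v hv w' hw' hne
      rw [Finset.mem_union, Finset.mem_singleton] at hv hw'
      have key : ∀ z : ZMod n, z ∈ F → close n d w z := by
        intro z hz
        have hz' : ((z.val : ℕ) : ZMod n) = z := ZMod.natCast_rightInverse z
        rw [hmemF] at hz
        rw [hwdef, ← hz']
        rw [close_cast_iff (by omega) (ZMod.val_lt z)]
        omega
      rcases hv with rfl | hv
      · rcases hw' with rfl | hw'
        · exact absurd rfl hne
        · exact key _ hw'
      · rcases hw' with rfl | hw'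
        · exact close_symm (key _ hv)
        · have hvF := (hmemF _).mp hv
          have hwF := (hmemF _).mp hw'
          exact close_of_val_le (by omega) (by omega)
  -- w is isolated in the link
  have hiso : ∀ a : ZMod n, ¬(a ≠ w ∧ ({a, w} : Finset (ZMod n)) ∈ linkC (IndComplex Gg) F) := by
    rintro a ⟨hne, hdisj, hmem⟩
    rw [mem_ind_iff (by omega)] at hmem
    have haG : a ∈ ({a, w} : Finset (ZMod n)) ∪ F :=
      Finset.mem_union_left _ (Finset.mem_insert_self _ _)
    have hanF : a ∉ F := by
      intro h
      exact (Finset.disjoint_left.mp hdisj (Finset.mem_insert_self _ _)) h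
    have hclof : ∀ z : ZMod n, z ∈ F → close n d a z := by
      intro z hz
      exact hmem a haG z (Finset.mem_union_right _ hz)
        (fun h => hanF (h ▸ hz))
    have hax : ((a.val : ℕ) : ZMod n) = a := ZMod.natCast_rightInverse a
    set x := a.val with hxdef
    have hxn : x < n := ZMod.val_lt a
    have hclo' : ∀ y : ℕ, y ≤ k ∨ y = d → close n d ((x:ℕ) : ZMod n) ((y:ℕ) : ZMod n) := by
      intro y hy
      rw [hax]
      exact hclof _ (hcastF y hy)
    have C0 := (close_cast_iff (n := n) (d := d) hxn (by omega)).mp (hclo' 0 (by omega))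
    have Cd := (close_cast_iff (n := n) (d := d) hxn (by omega)).mp (hclo' d (by omega))
    have hclow : close n d ((x:ℕ) : ZMod n) ((2*d : ℕ) : ZMod n) := by
      rw [hax]
      exact hmem a haG w (Finset.mem_union_left _ (Finset.mem_insert_of_mem
        (Finset.mem_singleton_self _))) hne
    have C2d := (close_cast_iff (n := n) (d := d) hxn (by omega)).mp hclow
    have hxne2d : x ≠ 2*d := by
      intro h
      apply hne
      rw [← hax, h, hwdef]
    have hxnotF : ¬(x ≤ k ∨ x = d) := by
      intro h
      exact hanF ((hmemF a).mpr h)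
    have hrange : 2*d - k ≤ x ∧ x ≤ 2*d - 1 := by omega
    set i := x + k + 1 - 2*d with hidef
    have hik : 1 ≤ i ∧ i ≤ k := by omega
    have Ci := (close_cast_iff (n := n) (d := d) hxn (by omega)).mp (hclo' i (by omega))
    omega
  have hconn := hS2 F hF ⟨G₀, hG₀link, hG₀card⟩
  have hpath := hconn u hulink w hwlink
  rcases hpath.cases_tail with heq | ⟨c, _, hc⟩
  · rw [hu, hwdef] at heq
    have := congrArg ZMod.val heq
    rw [hvalk1, hval2d] at this
    omega
  · exact hiso c hc

lemma link_mono {V : Type*} [DecidableEq V] {G : SimpleGraph V} {F S T : Finset V}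
    (hST : S ⊆ T) (hT : T ∈ linkC (IndComplex G) F) : S ∈ linkC (IndComplex G) F :=
  ⟨by
    rw [Finset.disjoint_left]
    intro a ha haF
    exact Finset.disjoint_left.mp hT.1 (hST ha) haF,
    ind_subset (Finset.union_subset_union_left hST) hT.2⟩

lemma pair_link {V : Type*} [DecidableEq V] {G : SimpleGraph V} {F : Finset V} {u w : V}
    (hu : ({u} : Finset V) ∈ linkC (IndComplex G) F)
    (hw : ({w} : Finset V) ∈ linkC (IndComplex G) F)
    (hadj : ¬ G.Adj u w) : ({u, w} : Finset V) ∈ linkC (IndComplex G) F := by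
  constructor
  · rw [Finset.disjoint_left]
    intro a ha haF
    rw [Finset.mem_insert, Finset.mem_singleton] at ha
    rcases ha with rfl | rfl
    · exact Finset.disjoint_left.mp hu.1 (Finset.mem_singleton_self _) haF
    · exact Finset.disjoint_left.mp hw.1 (Finset.mem_singleton_self _) haF
  · intro z1 h1 z2 h2
    rw [Finset.mem_union, Finset.mem_insert, Finset.mem_singleton] at h1 h2
    have hmu : ∀ z ∈ ({u} : Finset V) ∪ F, ∀ z' ∈ ({u} : Finset V) ∪ F, ¬ G.Adj z z' := hu.2
    have hmw : ∀ z ∈ ({w} : Finset V) ∪ F, ∀ z' ∈ ({w} : Finset V) ∪ F, ¬ G.Adj z z' := hw.2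
    have mu : u ∈ ({u} : Finset V) ∪ F := Finset.mem_union_left _ (Finset.mem_singleton_self _)
    have mw : w ∈ ({w} : Finset V) ∪ F := Finset.mem_union_left _ (Finset.mem_singleton_self _)
    rcases h1 with (rfl | rfl) | h1 <;> rcases h2 with (rfl | rfl) | h2
    · exact G.irrefl
    · exact hadj
    · exact hmu _ mu _ (Finset.mem_union_right _ h2)
    · exact fun h => hadj h.symm
    · exact G.irrefl
    · exact hmw _ mw _ (Finset.mem_union_right _ h2)
    · exact hmu _ (Finset.mem_union_right _ h1) _ mu
    · exact hmw _ (Finset.mem_union_right _ h1) _ mw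
    · exact hu.2 _ (Finset.mem_union_right _ h1) _ (Finset.mem_union_right _ h2)

lemma S2_matching {n d : ℕ} [NeZero n] (hd : 1 ≤ d) (hn : n = 2*d+2) :
    GraphS2 (circulantGraph n (Set.Icc (d + 1) (n / 2))) := by
  set Gg := circulantGraph n (Set.Icc (d + 1) (n / 2)) with hGg
  set c : ZMod n := ((d+1 : ℕ) : ZMod n) with hcdef
  have hvalc : c.val = d+1 := ZMod.val_cast_of_lt (by omega)
  have hcc : c + c = 0 := by
    rw [hcdef, show ((d+1 : ℕ) : ZMod n) + ((d+1 : ℕ) : ZMod n) = ((2*d+2 : ℕ) : ZMod n) by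
      push_cast; ring, ← hn, ZMod.natCast_self]
  have hnegc : -c = c := by
    rw [neg_eq_iff_add_eq_zero, hcc]
  have hadj : ∀ v w : ZMod n, Gg.Adj v w ↔ v - w = c := by
    intro v w
    have hIcc : ∀ m : ℕ, m ∈ Set.Icc (d+1) (n/2) ↔ m = d + 1 := by
      intro m
      rw [Set.mem_Icc]
      omega
    show v ≠ w ∧ ((v - w).val ∈ Set.Icc (d+1) (n/2) ∨ (w - v).val ∈ Set.Icc (d+1) (n/2)) ↔ v - w = c
    constructor
    · rintro ⟨hne, h | h⟩
      · rw [hIcc] at h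
        rw [← (ZMod.natCast_rightInverse (v - w) : (((v-w).val : ℕ) : ZMod n) = v - w), h]
      · rw [hIcc] at h
        have : w - v = c := by
          rw [← (ZMod.natCast_rightInverse (w - v) : (((w-v).val : ℕ) : ZMod n) = w - v), h]
        rw [show v - w = -(w - v) by ring, this, hnegc]
    · intro h
      have hne : v ≠ w := by
        intro h0
        rw [h0, sub_self] at h
        have := congrArg ZMod.val h
        rw [ZMod.val_zero, hvalc] at this
        omega
      refine ⟨hne, Or.inl ?_⟩
      rw [h, hIcc, hvalc]
  intro F hF hEx u hu w hw
  by_cases huw : u = w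
  · exact huw ▸ Relation.ReflTransGen.refl
  by_cases hadjuw : Gg.Adj u w
  · -- u and w are antipodal; go through a third vertex from the witness face
    obtain ⟨G, hG, hGcard⟩ := hEx
    obtain ⟨g1, hg1, g2, hg2, hgne⟩ := Finset.one_lt_card.mp (show 1 < G.card by omega)
    have hnotboth : ¬ (u ∈ G ∧ w ∈ G) := by
      rintro ⟨huG, hwG⟩
      exact hG.2 u (Finset.mem_union_left _ huG) w (Finset.mem_union_left _ hwG) hadjuw
    have hz : ∃ z ∈ G, z ≠ u ∧ z ≠ w := by
      by_cases h1 : g1 ≠ u ∧ g1 ≠ w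
      · exact ⟨g1, hg1, h1⟩
      · rcases not_and_or.mp h1 with h | h
        · push_neg at h
          subst h
          refine ⟨g2, hg2, hgne.symm, fun hgw => hnotboth ⟨hg1, hgw ▸ hg2⟩⟩
        · push_neg at h
          subst h
          refine ⟨g2, hg2, fun hgu => hnotboth ⟨hgu ▸ hg2, hg1⟩, hgne.symm⟩
    obtain ⟨z, hzG, hzu, hzw⟩ := hz
    have hzlink : ({z} : Finset (ZMod n)) ∈ linkC (IndComplex Gg) F :=
      link_mono (Finset.singleton_subset_iff.mpr hzG) hG
    have hwadj : w - u = c := (hadj u w).mp hadjuw |> fun h => by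
      rw [show w - u = -(u - w) by ring, h, hnegc]
    have hnadj1 : ¬ Gg.Adj u z := by
      rw [hadj]
      intro h
      apply hzw
      have : z = u - c := by rw [← h]; ring
      rw [this, ← hnegc]
      rw [show u - -c = u + c by ring]
      have : w = u + c := by rw [← hwadj]; ring
      rw [← this]
    have hnadj2 : ¬ Gg.Adj z w := by
      rw [hadj]
      intro h
      apply hzu
      have : z = w + c := by rw [← h]; ring
      rw [this]
      have hw' : w = u + c := by rw [← hwadj]; ring
      rw [hw', add_assoc, hcc, add_zero]
    exact Relation.ReflTransGen.head ⟨hzu.symm, pair_link hu hzlink hnadj1⟩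
      (Relation.ReflTransGen.single ⟨hzw, pair_link hzlink hw hnadj2⟩)
  · exact Relation.ReflTransGen.single ⟨huw, pair_link hu hw hadjuw⟩

lemma S2_large {n d : ℕ} [NeZero n] (hd : 1 ≤ d) (h3 : 3*d+1 ≤ n) :
    GraphS2 (circulantGraph n (Set.Icc (d + 1) (n / 2))) := by
  have h2 : 2*d+2 ≤ n := by omega
  set Gg := circulantGraph n (Set.Icc (d + 1) (n / 2)) with hGg
  intro F hF hEx u hu w hw
  rcases Finset.eq_empty_or_nonempty F with rfl | ⟨u₀, hu₀⟩
  · -- F = ∅ : walk around the cycle by unit steps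
    have hone : ((1 : ZMod n)).val = 1 := by
      rw [show (1 : ZMod n) = ((1:ℕ) : ZMod n) by push_cast; rfl]
      exact ZMod.val_cast_of_lt (by omega)
    have hstep : ∀ v : ZMod n,
        (v ≠ v + 1 ∧ ({v, v+1} : Finset (ZMod n)) ∈ linkC (IndComplex Gg) ∅) := by
      intro v
      have hne : v ≠ v + 1 := by
        intro h
        have h1 := left_eq_add.mp h
        have h2' := congrArg ZMod.val h1
        rw [hone, ZMod.val_zero] at h2'
        omega
      refine ⟨hne, Finset.disjoint_empty_right _, ?_⟩
      rw [Finset.union_empty, mem_ind_iff h2]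
      intro z1 h1 z2 h2' hne'
      have hc1 : close n d v (v+1) := by
        right
        rw [show v + 1 - v = (1 : ZMod n) by ring, hone]
        omega
      rw [Finset.mem_insert, Finset.mem_singleton] at h1 h2'
      rcases h1 with rfl | rfl <;> rcases h2' with rfl | rfl
      · exact absurd rfl hne'
      · exact hc1
      · exact close_symm hc1
      · exact absurd rfl hne'
    have hiter : ∀ m : ℕ, Relation.ReflTransGen
        (fun a b => a ≠ b ∧ ({a, b} : Finset (ZMod n)) ∈ linkC (IndComplex Gg) ∅)
        u (u + (m : ZMod n)) := by
      intro m
      induction m with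
      | zero => simpa using Relation.ReflTransGen.refl
      | succ m ih =>
        have hrw : u + ((m+1 : ℕ) : ZMod n) = (u + (m : ZMod n)) + 1 := by push_cast; ring
        rw [hrw]
        exact ih.tail (hstep _)
    have hweq : w = u + (((w - u).val : ℕ) : ZMod n) := by
      rw [(ZMod.natCast_rightInverse (w - u) : (((w - u).val : ℕ) : ZMod n) = w - u)]
      ring
    rw [hweq]
    exact hiter _
  · -- F nonempty, with base point u₀
    have hInd := (mem_ind_iff (n := n) (d := d) h2 F).mp hF
    have hclF : ∀ f ∈ F, close n d f u₀ := by
      intro f hf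
      by_cases h : f = u₀
      · exact h ▸ close_refl n d u₀
      · exact hInd f hf u₀ hu₀ h
    have hIne : (F.image (omap n d u₀)).Nonempty := ⟨omap n d u₀ u₀, Finset.mem_image_of_mem _ hu₀⟩
    set a := (F.image (omap n d u₀)).min' hIne with ha
    set b := (F.image (omap n d u₀)).max' hIne with hb
    have hOb : ∀ f ∈ F, a ≤ omap n d u₀ f ∧ omap n d u₀ f ≤ b := by
      intro f hf
      exact ⟨Finset.min'_le _ _ (Finset.mem_image_of_mem _ hf),
        Finset.le_max' _ _ (Finset.mem_image_of_mem _ hf)⟩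
    have ha0 : a ≤ 0 ∧ 0 ≤ b := by
      have := hOb u₀ hu₀
      rw [omap_self] at this
      exact this
    obtain ⟨fa, hfa, hOfa⟩ := Finset.mem_image.mp ((F.image (omap n d u₀)).min'_mem hIne)
    obtain ⟨fb, hfb, hOfb⟩ := Finset.mem_image.mp ((F.image (omap n d u₀)).max'_mem hIne)
    rw [← ha] at hOfa
    rw [← hb] at hOfb
    have hba : b - a ≤ d := by
      rcases eq_or_ne fa fb with h | h
      · rw [← hOfa, ← hOfb, h]; omega
      · have hc := hInd fb hfb fa hfa (Ne.symm h)
        have := (close_omap_iff h3 hd (hclF fb hfb) (hclF fa hfa)).mp hc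
        omega
    -- facts about a link vertex
    have hLV : ∀ z : ZMod n, ({z} : Finset (ZMod n)) ∈ linkC (IndComplex Gg) F →
        close n d z u₀ ∧ z ∉ F ∧
          (b - d ≤ omap n d u₀ z ∧ omap n d u₀ z ≤ a + d ∧
            omap n d u₀ z ∉ F.image (omap n d u₀)) := by
      intro z hz
      have hzF : z ∉ F := fun h =>
        Finset.disjoint_left.mp hz.1 (Finset.mem_singleton_self _) h
      have hzInd := (mem_ind_iff (n := n) (d := d) h2 _).mp hz.2
      have hzf : ∀ f ∈ F, close n d z f := by
        intro f hf
        exact hzInd z (Finset.mem_union_left _ (Finset.mem_singleton_self _)) f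
          (Finset.mem_union_right _ hf) (fun h => hzF (h ▸ hf))
      have hzu₀ : close n d z u₀ := hzf u₀ hu₀
      refine ⟨hzu₀, hzF, ?_, ?_, ?_⟩
      · have := (close_omap_iff h3 hd hzu₀ (hclF fb hfb)).mp (hzf fb hfb)
        rw [hOfb] at this
        omega
      · have := (close_omap_iff h3 hd hzu₀ (hclF fa hfa)).mp (hzf fa hfa)
        rw [hOfa] at this
        omega
      · intro hmem
        obtain ⟨f, hf, hOf⟩ := Finset.mem_image.mp hmem
        exact hzF (omap_inj hOf ▸ hf)
    -- construction of a link vertex from an admissible coordinate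
    have hvt : ∀ t : ℤ, b - d ≤ t → t ≤ a + d → t ∉ F.image (omap n d u₀) →
        ({u₀ + (t : ZMod n)} : Finset (ZMod n)) ∈ linkC (IndComplex Gg) F ∧
          omap n d u₀ (u₀ + (t : ZMod n)) = t := by
      intro t ht1 ht2 htI
      have htd : -(d:ℤ) ≤ t ∧ t ≤ d := by omega
      obtain ⟨hOt, hct⟩ := omap_add_int h2 u₀ htd.1 htd.2
      have hzF : u₀ + (t : ZMod n) ∉ F := by
        intro h
        exact htI (by rw [← hOt]; exact Finset.mem_image_of_mem _ h)
      refine ⟨⟨Finset.disjoint_singleton_left.mpr hzF, ?_⟩, hOt⟩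
      rw [mem_ind_iff h2]
      intro z1 h1 z2 h2' hne'
      rw [Finset.mem_union, Finset.mem_singleton] at h1 h2'
      have key : ∀ f ∈ F, close n d (u₀ + (t : ZMod n)) f := by
        intro f hf
        rw [close_omap_iff h3 hd hct (hclF f hf), hOt]
        have := hOb f hf
        omega
      rcases h1 with rfl | h1
      · rcases h2' with rfl | h2'
        · exact absurd rfl hne'
        · exact key _ h2'
      · rcases h2' with rfl | h2'
        · exact close_symm (key _ h1)
        · exact hInd z1 h1 z2 h2' hne'
    -- edges of the link
    have hedge : ∀ z1 z2 : ZMod n,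
        ({z1} : Finset (ZMod n)) ∈ linkC (IndComplex Gg) F →
        ({z2} : Finset (ZMod n)) ∈ linkC (IndComplex Gg) F →
        z1 ≠ z2 → omap n d u₀ z1 - omap n d u₀ z2 ≤ d → omap n d u₀ z2 - omap n d u₀ z1 ≤ d →
        (z1 ≠ z2 ∧ ({z1, z2} : Finset (ZMod n)) ∈ linkC (IndComplex Gg) F) := by
      intro z1 z2 h1 h2' hne hd1 hd2
      refine ⟨hne, pair_link h1 h2' ?_⟩
      rw [not_adj_iff h2]
      right
      rw [close_omap_iff h3 hd (hLV z1 h1).1 (hLV z2 h2').1]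
      exact ⟨hd1, hd2⟩
    obtain ⟨hcu, huF, hxb1, hxb2, hxI⟩ := hLV u hu
    obtain ⟨hcw, hwF, hyb1, hyb2, hyI⟩ := hLV w hw
    by_cases huw : u = w
    · exact huw ▸ Relation.ReflTransGen.refl
    by_cases hnear : omap n d u₀ u - omap n d u₀ w ≤ d ∧ omap n d u₀ w - omap n d u₀ u ≤ d
    · exact Relation.ReflTransGen.single (hedge u w hu hw huw hnear.1 hnear.2)
    · have hband : b - a ≤ d - 1 := by omega
      by_cases hmid : ∃ t ∈ Finset.Icc a b, t ∉ F.image (omap n d u₀)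
      · obtain ⟨t, htab, htI⟩ := hmid
        rw [Finset.mem_Icc] at htab
        obtain ⟨hzlink, hOz⟩ := hvt t (by omega) (by omega) htI
        have p1 : Relation.ReflTransGen
            (fun a' b' => a' ≠ b' ∧ ({a', b'} : Finset (ZMod n)) ∈ linkC (IndComplex Gg) F)
            u (u₀ + (t : ZMod n)) := by
          by_cases hxt : omap n d u₀ u = t
          · have : u = u₀ + (t : ZMod n) := by
              rw [repr_omap n d u₀ u, hxt]
            exact this ▸ Relation.ReflTransGen.refl
          · exact Relation.ReflTransGen.single (hedge u _ hu hzlink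
              (fun h => hxt (by rw [h, hOz])) (by rw [hOz]; omega) (by rw [hOz]; omega))
        have p2 : Relation.ReflTransGen
            (fun a' b' => a' ≠ b' ∧ ({a', b'} : Finset (ZMod n)) ∈ linkC (IndComplex Gg) F)
            (u₀ + (t : ZMod n)) w := by
          by_cases hyt : omap n d u₀ w = t
          · have : w = u₀ + (t : ZMod n) := by
              rw [repr_omap n d u₀ w, hyt]
            exact this ▸ Relation.ReflTransGen.refl
          · exact Relation.ReflTransGen.single (hedge _ w hzlink hw
              (fun h => hyt (by rw [← h, hOz])) (by rw [hOz]; omega) (by rw [hOz]; omega))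
        exact p1.trans p2
      · push_neg at hmid
        have hxout : omap n d u₀ u < a ∨ b < omap n d u₀ u := by
          by_contra h
          push_neg at h
          exact hxI (hmid _ (Finset.mem_Icc.mpr ⟨h.1, h.2⟩))
        have hyout : omap n d u₀ w < a ∨ b < omap n d u₀ w := by
          by_contra h
          push_neg at h
          exact hyI (hmid _ (Finset.mem_Icc.mpr ⟨h.1, h.2⟩))
        by_cases hgap : b - a ≤ d - 2
        · -- go through the two vertices just outside the span of F
          have ht1I : (a - 1) ∉ F.image (omap n d u₀) := by
            intro h
            obtain ⟨f, hf, hOf⟩ := Finset.mem_image.mp h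
            have := (hOb f hf).1
            omega
          have ht2I : (b + 1) ∉ F.image (omap n d u₀) := by
            intro h
            obtain ⟨f, hf, hOf⟩ := Finset.mem_image.mp h
            have := (hOb f hf).2
            omega
          obtain ⟨hz1link, hOz1⟩ := hvt (a - 1) (by omega) (by omega) ht1I
          obtain ⟨hz2link, hOz2⟩ := hvt (b + 1) (by omega) (by omega) ht2I
          have hmide : (u₀ + ((a - 1 : ℤ) : ZMod n)) ≠ (u₀ + ((b + 1 : ℤ) : ZMod n)) ∧
              ({u₀ + ((a - 1 : ℤ) : ZMod n), u₀ + ((b + 1 : ℤ) : ZMod n)} : Finset (ZMod n)) ∈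
                linkC (IndComplex Gg) F :=
            hedge _ _ hz1link hz2link
              (fun h => by
                have := congrArg (omap n d u₀) h
                rw [hOz1, hOz2] at this
                omega)
              (by rw [hOz1, hOz2]; omega) (by rw [hOz1, hOz2]; omega)
          have hto : ∀ z : ZMod n, ({z} : Finset (ZMod n)) ∈ linkC (IndComplex Gg) F →
              omap n d u₀ z < a → b - d ≤ omap n d u₀ z →
              Relation.ReflTransGen
                (fun a' b' => a' ≠ b' ∧ ({a', b'} : Finset (ZMod n)) ∈ linkC (IndComplex Gg) F)
                z (u₀ + ((a - 1 : ℤ) : ZMod n)) := by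
            intro z hz hza hzb
            by_cases hzt : omap n d u₀ z = a - 1
            · have : z = u₀ + ((a - 1 : ℤ) : ZMod n) := by
                rw [repr_omap n d u₀ z, hzt]
              exact this ▸ Relation.ReflTransGen.refl
            · exact Relation.ReflTransGen.single (hedge z _ hz hz1link
                (fun h => hzt (by rw [h, hOz1])) (by rw [hOz1]; omega) (by rw [hOz1]; omega))
          have hto2 : ∀ z : ZMod n, ({z} : Finset (ZMod n)) ∈ linkC (IndComplex Gg) F →
              b < omap n d u₀ z → omap n d u₀ z ≤ a + d →
              Relation.ReflTransGen
                (fun a' b' => a' ≠ b' ∧ ({a', b'} : Finset (ZMod n)) ∈ linkC (IndComplex Gg) F)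
                z (u₀ + ((b + 1 : ℤ) : ZMod n)) := by
            intro z hz hza hzb
            by_cases hzt : omap n d u₀ z = b + 1
            · have : z = u₀ + ((b + 1 : ℤ) : ZMod n) := by
                rw [repr_omap n d u₀ z, hzt]
              exact this ▸ Relation.ReflTransGen.refl
            · exact Relation.ReflTransGen.single (hedge z _ hz hz2link
                (fun h => hzt (by rw [h, hOz2])) (by rw [hOz2]; omega) (by rw [hOz2]; omega))
          have hsymmRel : ∀ a' b' : ZMod n,
              (a' ≠ b' ∧ ({a', b'} : Finset (ZMod n)) ∈ linkC (IndComplex Gg) F) →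
              (b' ≠ a' ∧ ({b', a'} : Finset (ZMod n)) ∈ linkC (IndComplex Gg) F) := by
            intro a' b' h
            exact ⟨h.1.symm, by rw [Finset.pair_comm]; exact h.2⟩
          have hrev : ∀ {p q : ZMod n}, Relation.ReflTransGen
              (fun a' b' => a' ≠ b' ∧ ({a', b'} : Finset (ZMod n)) ∈ linkC (IndComplex Gg) F) p q →
              Relation.ReflTransGen
              (fun a' b' => a' ≠ b' ∧ ({a', b'} : Finset (ZMod n)) ∈ linkC (IndComplex Gg) F) q p :=
            fun h => by
                induction h with
                | refl => exact Relation.ReflTransGen.refl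
                | tail _ hab ih => exact ih.head (hsymmRel _ _ hab)
          rcases hxout with hx | hx
          · rcases hyout with hy | hy
            · -- both below a : directly adjacent, contradiction with hnear
              omega
            · exact ((hto u hu hx hxb1).trans
                (Relation.ReflTransGen.single hmide)).trans
                (hrev (hto2 w hw hy hyb2))
          · rcases hyout with hy | hy
            · exact ((hto2 u hu hx hxb2).trans
                (Relation.ReflTransGen.single (hsymmRel _ _ hmide))).trans
                (hrev (hto w hw hy hyb1))
            · omega
        · -- b - a = d - 1 : the link has only two, non-adjacent, vertices;
          -- the existence of a 1-dimensional face gives a contradiction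
          obtain ⟨G, hG, hGcard⟩ := hEx
          obtain ⟨g1, hg1, g2, hg2, hgne⟩ := Finset.one_lt_card.mp (show 1 < G.card by omega)
          have hgl1 : ({g1} : Finset (ZMod n)) ∈ linkC (IndComplex Gg) F :=
            link_mono (Finset.singleton_subset_iff.mpr hg1) hG
          have hgl2 : ({g2} : Finset (ZMod n)) ∈ linkC (IndComplex Gg) F :=
            link_mono (Finset.singleton_subset_iff.mpr hg2) hG
          obtain ⟨hcg1, hg1F, hg1b1, hg1b2, hg1I⟩ := hLV g1 hgl1
          obtain ⟨hcg2, hg2F, hg2b1, hg2b2, hg2I⟩ := hLV g2 hgl2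
          have hg1out : omap n d u₀ g1 < a ∨ b < omap n d u₀ g1 := by
            by_contra h
            push_neg at h
            exact hg1I (hmid _ (Finset.mem_Icc.mpr ⟨h.1, h.2⟩))
          have hg2out : omap n d u₀ g2 < a ∨ b < omap n d u₀ g2 := by
            by_contra h
            push_neg at h
            exact hg2I (hmid _ (Finset.mem_Icc.mpr ⟨h.1, h.2⟩))
          have hOne : omap n d u₀ g1 ≠ omap n d u₀ g2 := fun h => hgne (omap_inj h)
          have hcg : close n d g1 g2 := by
            have := (mem_ind_iff (n := n) (d := d) h2 _).mp hG.2
            exact this g1 (Finset.mem_union_left _ hg1) g2 (Finset.mem_union_left _ hg2) hgne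
          have := (close_omap_iff h3 hd hcg1 hcg2).mp hcg
          omega

end CircS2Aux
/-- Let `n ≥ 2d+2` and `d ≥ 1`. The circulant graph `C_n(d+1, d+2, …, ⌊n/2⌋)` is `S₂`
iff `n > 3d` or `n = 2d+2`. -/
theorem circulant_upper_S2_iff (n d : ℕ) (hd : 1 ≤ d) (hn : 2 * d + 2 ≤ n) :
    GraphS2 (circulantGraph n (Set.Icc (d + 1) (n / 2))) ↔ 3 * d < n ∨ n = 2 * d + 2 := by
  haveI : NeZero n := ⟨by omega⟩
  constructor
  · intro hS2
    by_contra h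
    push_neg at h
    obtain ⟨h1, h2⟩ := h
    exact CircS2Aux.not_S2 hd (by omega) (by omega) hS2
  · rintro (h | h)
    · exact CircS2Aux.S2_large hd (by omega)
    · exact CircS2Aux.S2_matching hd h
end

section
/- Let n and d be integers with n > 3d and d > 1, let G = C_n(d+1, d+2, ..., ⌊n/2⌋), and let Δ = Ind(G). Then for every non-empty face F of Δ, the link link_Δ(F) is shellable. -/
/-- For `n > 3d`, `d > 1`, and `Δ = Ind(C_n(d+1, …, ⌊n/2⌋))`, the link of every
non-empty face of `Δ` is shellable. -/
theorem circulant_upper_links_shellable (n d : ℕ) (hd : 1 < d) (hn : 3 * d < n)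
    (Δ : Set (Finset (ZMod n)))
    (hΔ : Δ = IndComplex (circulantGraph n (Set.Icc (d + 1) (n / 2)))) :
    ∀ F ∈ Δ, F ≠ ∅ → IsShellable (linkC Δ F) := by
  subst hΔ
  haveI : NeZero n := ⟨by omega⟩
  intro F hF hFne
  obtain ⟨a, haF⟩ := Finset.nonempty_iff_ne_empty.mpr hFne
  set Gr := circulantGraph n (Set.Icc (d + 1) (n / 2)) with hGr
  set ι : ℕ → ZMod n := fun t => a + (t : ZMod n) - (d : ZMod n) with hι
  set lf : ZMod n → ℕ := fun v => (v - a + (d : ZMod n)).val with hlf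
  have hvlt : ∀ v : ZMod n, lf v < n := fun v => ZMod.val_lt _
  have hlfι : ∀ t, t < n → lf (ι t) = t := by
    intro t ht
    show (a + (t : ZMod n) - d - a + d).val = t
    rw [show a + (t : ZMod n) - d - a + d = (t : ZMod n) from by ring]
    exact ZMod.val_natCast_of_lt ht
  have hιlf : ∀ v, ι (lf v) = v := by
    intro v
    show a + ((v - a + (d : ZMod n)).val : ZMod n) - d = v
    rw [ZMod.natCast_rightInverse (v - a + (d : ZMod n))]
    ring
  have subval : ∀ p q, p < n → q < n →
      (ι p - ι q).val = if q ≤ p then p - q else n - (q - p) := by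
    intro p q hp hq
    have h : ι p - ι q = (p : ZMod n) - (q : ZMod n) := by simp only [hι]; ring
    rw [h]
    rcases le_or_gt q p with hle | hlt
    · rw [if_pos hle, ← Nat.cast_sub hle]
      exact ZMod.val_natCast_of_lt (by omega)
    · rw [if_neg (by omega)]
      have e : ((n - (q - p) : ℕ) : ZMod n) = (p : ZMod n) - q := by
        rw [Nat.cast_sub (by omega : q - p ≤ n), Nat.cast_sub hlt.le, ZMod.natCast_self]
        ring
      rw [← e]
      exact ZMod.val_natCast_of_lt (by omega)
  have hinj : ∀ p q, p < n → q < n → ι p = ι q → p = q := by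
    intro p q hp hq h
    have := congrArg lf h
    rwa [hlfι p hp, hlfι q hq] at this
  have nad : ∀ p q, p < n → q < n →
      (¬ Gr.Adj (ι p) (ι q) ↔ ((p - q ≤ d ∧ q - p ≤ d) ∨ n ≤ p - q + d ∨ n ≤ q - p + d)) := by
    intro p q hp hq
    have h1 := subval p q hp hq
    have h2 := subval q p hq hp
    have hpq : ι p = ι q ↔ p = q := ⟨hinj p q hp hq, fun h => by rw [h]⟩
    have hadj : Gr.Adj (ι p) (ι q) ↔ (ι p ≠ ι q ∧
        ((ι p - ι q).val ∈ Set.Icc (d+1) (n/2) ∨ (ι q - ι p).val ∈ Set.Icc (d+1) (n/2))) :=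
      Iff.rfl
    rw [hadj, h1, h2, ne_eq, hpq]
    simp only [Set.mem_Icc]
    split_ifs <;> omega
  have nad' : ∀ p q, p ≤ 2*d → q ≤ 2*d →
      (¬ Gr.Adj (ι p) (ι q) ↔ (p - q ≤ d ∧ q - p ≤ d)) := by
    intro p q hp hq
    rw [nad p q (by omega) (by omega)]
    omega
  have hιd : ι d = a := by show a + (d : ZMod n) - d = a; ring
  have nadA : ∀ p, p < n → (¬ Gr.Adj (ι p) a ↔ p ≤ 2*d) := by
    intro p hp
    rw [← hιd, nad p d hp (by omega)]
    omega
  -- independence of F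
  have hFind : ∀ u ∈ F, ∀ v ∈ F, ¬ Gr.Adj u v := hF
  have hFim : (F.image lf).Nonempty := ⟨lf a, Finset.mem_image_of_mem lf haF⟩
  set m := (F.image lf).min' hFim with hm
  set M := (F.image lf).max' hFim with hM
  have hlfa : lf a = d := by
    show (a - a + (d : ZMod n)).val = d
    rw [show a - a + (d : ZMod n) = (d : ZMod n) from by ring]
    exact ZMod.val_natCast_of_lt (by omega)
  have hbound : ∀ x ∈ F, lf x ≤ 2*d := by
    intro x hx
    have h := hFind x hx a haF
    rw [← hιlf x] at h
    exact (nadA (lf x) (hvlt x)).mp h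
  have hmd : m ≤ d := by
    have := Finset.min'_le (F.image lf) (lf a) (Finset.mem_image_of_mem lf haF)
    omega
  have hdM : d ≤ M := by
    have := Finset.le_max' (F.image lf) (lf a) (Finset.mem_image_of_mem lf haF)
    omega
  have hmle : ∀ x ∈ F, m ≤ lf x ∧ lf x ≤ M := fun x hx =>
    ⟨Finset.min'_le _ _ (Finset.mem_image_of_mem lf hx),
     Finset.le_max' _ _ (Finset.mem_image_of_mem lf hx)⟩
  have hMm : M ≤ m + d := by
    obtain ⟨u, hu, hum⟩ := Finset.mem_image.mp (Finset.min'_mem (F.image lf) hFim)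
    obtain ⟨v, hv, hvM⟩ := Finset.mem_image.mp (Finset.max'_mem (F.image lf) hFim)
    rw [← hm] at hum
    rw [← hM] at hvM
    have hbu := hbound u hu
    have hbv := hbound v hv
    have h := hFind v hv u hu
    rw [← hιlf v, ← hιlf u, hvM, hum] at h
    have := (nad' M m (by omega) (by omega)).mp h
    omega
  -- the windows
  set W : ℕ → Finset (ZMod n) := fun x => (Finset.Icc x (x + d)).image ι \ F with hW
  -- membership in the independence complex of full windows
  have hWuF : ∀ x, M ≤ x + d → x ≤ m → W x ∪ F = (Finset.Icc x (x + d)).image ι := by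
    intro x hx1 hx2
    apply Finset.sdiff_union_of_subset
    intro v hv
    rw [Finset.mem_image]
    exact ⟨lf v, Finset.mem_Icc.mpr (by have := hmle v hv; omega), hιlf v⟩
  have hWind : ∀ x, x ≤ m → (Finset.Icc x (x + d)).image ι ∈ IndComplex Gr := by
    intro x hx2 u hu v hv
    obtain ⟨p, hp, rfl⟩ := Finset.mem_image.mp hu
    obtain ⟨q, hq, rfl⟩ := Finset.mem_image.mp hv
    rw [Finset.mem_Icc] at hp hq
    exact (nad' p q (by omega) (by omega)).mpr (by omega)
  have hWlink : ∀ x, M ≤ x + d → x ≤ m → W x ∈ linkC (IndComplex Gr) F := by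
    intro x hx1 hx2
    exact ⟨Finset.sdiff_disjoint, by rw [hWuF x hx1 hx2]; exact hWind x hx2⟩
  have hWmax : ∀ x, M ≤ x + d → x ≤ m →
      ∀ G ∈ linkC (IndComplex Gr) F, W x ⊆ G → W x = G := by
    intro x hx1 hx2 G hG hWG
    obtain ⟨hdisj, hGF⟩ := hG
    refine Finset.Subset.antisymm hWG (fun v hv => ?_)
    have hva : ¬ Gr.Adj v a := hGF v (Finset.mem_union_left _ hv) a (Finset.mem_union_right _ haF)
    rw [← hιlf v] at hva
    have hv2d : lf v ≤ 2 * d := (nadA (lf v) (hvlt v)).mp hva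
    have hxmem : ι x ∈ G ∪ F := by
      have : ι x ∈ W x ∪ F := by
        rw [hWuF x hx1 hx2]
        exact Finset.mem_image_of_mem ι (Finset.mem_Icc.mpr (by omega))
      rcases Finset.mem_union.mp this with h | h
      · exact Finset.mem_union_left _ (hWG h)
      · exact Finset.mem_union_right _ h
    have hxdmem : ι (x + d) ∈ G ∪ F := by
      have : ι (x + d) ∈ W x ∪ F := by
        rw [hWuF x hx1 hx2]
        exact Finset.mem_image_of_mem ι (Finset.mem_Icc.mpr (by omega))
      rcases Finset.mem_union.mp this with h | h
      · exact Finset.mem_union_left _ (hWG h)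
      · exact Finset.mem_union_right _ h
    have h1 : ¬ Gr.Adj v (ι x) := hGF v (Finset.mem_union_left _ hv) _ hxmem
    have h2 : ¬ Gr.Adj v (ι (x + d)) := hGF v (Finset.mem_union_left _ hv) _ hxdmem
    rw [← hιlf v] at h1 h2
    have e1 := (nad' (lf v) x hv2d (by omega)).mp h1
    have e2 := (nad' (lf v) (x + d) hv2d (by omega)).mp h2
    rw [Finset.mem_sdiff]
    refine ⟨?_, fun hvF => (Finset.disjoint_left.mp hdisj hv) hvF⟩
    rw [← hιlf v]
    exact Finset.mem_image_of_mem ι (Finset.mem_Icc.mpr (by omega))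
  have hnotF : ∀ t, t < n → M < t → ι t ∉ F := by
    intro t ht hMt hc
    have := (hmle (ι t) hc).2
    rw [hlfι t ht] at this
    omega
  have hnotim : ∀ x t, x ≤ m → t < n → x + d < t → ι t ∉ (Finset.Icc x (x + d)).image ι := by
    intro x t hx ht hxt hc
    obtain ⟨s, hs, hst⟩ := Finset.mem_image.mp hc
    rw [Finset.mem_Icc] at hs
    have := hinj s t (by omega) ht hst
    omega
  have hne : ∀ x y, M ≤ x + d → x < y → y ≤ m → ι (y + d) ∈ W y ∧ ι (y + d) ∉ W x := by
    intro x y hx1 hxy hym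
    have hyd : y + d < n := by omega
    constructor
    · rw [Finset.mem_sdiff]
      exact ⟨Finset.mem_image_of_mem ι (Finset.mem_Icc.mpr (by omega)),
        hnotF (y + d) hyd (by omega)⟩
    · intro hc
      exact hnotim x (y + d) (by omega) hyd (by omega) (Finset.mem_sdiff.mp hc).1
  have hdiff : ∀ y, 1 ≤ y → M < y + d → y ≤ m → W y \ W (y - 1) = {ι (y + d)} := by
    intro y hy1 hMy hym
    ext u
    rw [Finset.mem_sdiff, Finset.mem_singleton]
    constructor
    · rintro ⟨hu1, hu2⟩
      obtain ⟨hu_im, hu_nF⟩ := Finset.mem_sdiff.mp hu1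
      obtain ⟨t, ht, rfl⟩ := Finset.mem_image.mp hu_im
      rw [Finset.mem_Icc] at ht
      have hty : t = y + d := by
        by_contra hne'
        exact hu2 (Finset.mem_sdiff.mpr
          ⟨Finset.mem_image_of_mem ι (Finset.mem_Icc.mpr (by omega)), hu_nF⟩)
      rw [hty]
    · rintro rfl
      have hyd : y + d < n := by omega
      refine ⟨Finset.mem_sdiff.mpr ⟨Finset.mem_image_of_mem ι (Finset.mem_Icc.mpr (by omega)),
        hnotF (y + d) hyd (by omega)⟩, fun hc => ?_⟩
      exact hnotim (y - 1) (y + d) (by omega) hyd (by omega) (Finset.mem_sdiff.mp hc).1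
  -- facet characterization
  have hfacet1 : ∀ x, M ≤ x + d → x ≤ m → W x ∈ facetsOf (linkC (IndComplex Gr) F) :=
    fun x hx1 hx2 => ⟨hWlink x hx1 hx2, hWmax x hx1 hx2⟩
  have hfacet2 : ∀ F', F' ∈ facetsOf (linkC (IndComplex Gr) F) →
      ∃ x, M ≤ x + d ∧ x ≤ m ∧ F' = W x := by
    intro F' hF'
    obtain ⟨⟨hdisj, hind⟩, hmax⟩ := hF'
    have haU : a ∈ F' ∪ F := Finset.mem_union_right _ haF
    have hT2d : ∀ v ∈ F' ∪ F, lf v ≤ 2 * d := by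
      intro v hv
      have h := hind v hv a haU
      rw [← hιlf v] at h
      exact (nadA (lf v) (hvlt v)).mp h
    have hTne : ((F' ∪ F).image lf).Nonempty := ⟨lf a, Finset.mem_image_of_mem lf haU⟩
    set lo := ((F' ∪ F).image lf).min' hTne with hlo
    set hi := ((F' ∪ F).image lf).max' hTne with hhi
    have hlohi : hi ≤ lo + d ∧ lo ≤ hi := by
      obtain ⟨u, hu, hum⟩ := Finset.mem_image.mp (Finset.min'_mem ((F' ∪ F).image lf) hTne)
      obtain ⟨v, hv, hvM⟩ := Finset.mem_image.mp (Finset.max'_mem ((F' ∪ F).image lf) hTne)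
      rw [← hlo] at hum
      rw [← hhi] at hvM
      have hbu := hT2d u hu
      have hbv := hT2d v hv
      have h := hind v hv u hu
      rw [← hιlf v, ← hιlf u, hvM, hum] at h
      have := (nad' hi lo (by omega) (by omega)).mp h
      constructor
      · omega
      · have := Finset.min'_le ((F' ∪ F).image lf) (lf v) (Finset.mem_image_of_mem lf hv)
        omega
    have hMhi : M ≤ hi ∧ lo ≤ m := by
      obtain ⟨u, hu, hum⟩ := Finset.mem_image.mp (Finset.min'_mem (F.image lf) hFim)
      obtain ⟨v, hv, hvM⟩ := Finset.mem_image.mp (Finset.max'_mem (F.image lf) hFim)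
      rw [← hm] at hum
      rw [← hM] at hvM
      constructor
      · have := Finset.le_max' ((F' ∪ F).image lf) (lf v)
          (Finset.mem_image_of_mem lf (Finset.mem_union_right _ hv))
        omega
      · have := Finset.min'_le ((F' ∪ F).image lf) (lf u)
          (Finset.mem_image_of_mem lf (Finset.mem_union_right _ hu))
        omega
    refine ⟨hi - d, by omega, by omega, ?_⟩
    have hsub : F' ⊆ W (hi - d) := by
      intro v hv
      have h1 := Finset.min'_le ((F' ∪ F).image lf) (lf v)
        (Finset.mem_image_of_mem lf (Finset.mem_union_left _ hv))
      have h2 := Finset.le_max' ((F' ∪ F).image lf) (lf v)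
        (Finset.mem_image_of_mem lf (Finset.mem_union_left _ hv))
      rw [Finset.mem_sdiff]
      refine ⟨?_, fun hc => Finset.disjoint_left.mp hdisj hv hc⟩
      rw [← hιlf v]
      exact Finset.mem_image_of_mem ι (Finset.mem_Icc.mpr (by omega))
    exact hmax (W (hi - d)) (hWlink (hi - d) (by omega) (by omega)) hsub
  -- assemble the shelling order
  set s := m + d + 1 - M with hs
  refine ⟨(List.range s).map (fun i => W (M - d + i)), ?_, ?_, ?_⟩
  · refine List.Nodup.map_on ?_ List.nodup_range
    intro i hi j hj hij
    rw [List.mem_range] at hi hj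
    by_contra hne'
    rcases Nat.lt_or_ge i j with h | h
    · have hx := hne (M - d + i) (M - d + j) (by omega) (by omega) (by omega)
      rw [← hij] at hx
      exact hx.2 hx.1
    · have hx := hne (M - d + j) (M - d + i) (by omega) (by omega) (by omega)
      rw [hij] at hx
      exact hx.2 hx.1
  · intro F'
    rw [List.mem_map]
    constructor
    · intro hF'
      obtain ⟨x, hx1, hx2, rfl⟩ := hfacet2 F' hF'
      exact ⟨x + d - M, List.mem_range.mpr (by omega),
        congrArg W (by omega)⟩
    · rintro ⟨i, hi, rfl⟩
      rw [List.mem_range] at hi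
      exact hfacet1 (M - d + i) (by omega) (by omega)
  · intro i j hij
    have hjs : (j : ℕ) < s := by
      have := j.isLt
      simpa using this
    have hij' : (i : ℕ) < (j : ℕ) := hij
    have hget : ∀ k : Fin ((List.range s).map (fun i => W (M - d + i))).length,
        ((List.range s).map (fun i => W (M - d + i))).get k = W (M - d + (k : ℕ)) := by
      intro k
      simp
    have h1 := hne (M - d + (i : ℕ)) (M - d + (j : ℕ)) (by omega) (by omega) (by omega)
    refine ⟨ι (M - d + (j : ℕ) + d), ?_,
      ⟨(j : ℕ) - 1, by simp only [List.length_map, List.length_range]; omega⟩, ?_, ?_⟩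
    · rw [hget j, hget i, Finset.mem_sdiff]
      exact ⟨h1.1, h1.2⟩
    · rw [Fin.lt_def]
      simp only []
      omega
    · rw [hget j, hget ⟨(j : ℕ) - 1, by simp only [List.length_map, List.length_range]; omega⟩]
      rw [show M - d + ((j : ℕ) - 1) = (M - d + (j : ℕ)) - 1 from by omega]
      exact hdiff (M - d + (j : ℕ)) (by omega) (by omega) (by omega)
end

section
/- Let n and d be integers with n ≥ 2d+2 and d ≥ 1, let G = C_n(d+1, d+2, ..., ⌊n/2⌋) and Δ = Ind(G). The following are equivalent: (i) G is S_2; (ii) G is well-covered; (iii) n > 3d or n = 2d+2; (iv) link_Δ(F) is strongly connected for all faces F ∈ Δ with 0 < dim link_Δ(F) ≤ d. -/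
section GeneralAux
variable {V : Type*} [DecidableEq V]

lemma myInd_isComplex (G : SimpleGraph V) : IsComplex (IndComplex G) :=
  fun _F hF G' hG' u hu v hv => hF u (hG' hu) v (hG' hv)

lemma myLink_isComplex {Δ : Set (Finset V)} (h : IsComplex Δ) (F : Finset V) :
    IsComplex (linkC Δ F) := by
  rintro G ⟨hdisj, hmem⟩ G' hsub
  exact ⟨Finset.disjoint_of_subset_left hsub hdisj,
    h _ hmem _ (Finset.union_subset_union_left hsub)⟩

lemma myLink_vertex {Δ : Set (Finset V)} (h : IsComplex Δ) {F H : Finset V}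
    (hH : H ∈ linkC Δ F) {v : V} (hv : v ∈ H) : ({v} : Finset V) ∈ linkC Δ F :=
  myLink_isComplex h F H hH {v} (Finset.singleton_subset_iff.2 hv)

lemma myExists_facet [Fintype V] {Δ : Set (Finset V)} {F : Finset V} (hF : F ∈ Δ) :
    ∃ K ∈ facetsOf Δ, F ⊆ K := by
  obtain ⟨K, ⟨hK, hFK⟩, hmax⟩ := Set.Finite.exists_maximalFor Finset.card
    {G | G ∈ Δ ∧ F ⊆ G} (Set.toFinite _) ⟨F, hF, Finset.Subset.refl F⟩
  refine ⟨K, ⟨hK, ?_⟩, hFK⟩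
  intro H hH hKH
  exact Finset.eq_of_subset_of_card_le hKH
    (hmax ⟨hH, hFK.trans hKH⟩ (Finset.card_le_card hKH)).ge

lemma myLink_facet_iff {Δ : Set (Finset V)} {F G : Finset V} :
    G ∈ facetsOf (linkC Δ F) ↔ Disjoint G F ∧ G ∪ F ∈ facetsOf Δ := by
  constructor
  · rintro ⟨⟨hdisj, hmem⟩, hmax⟩
    refine ⟨hdisj, hmem, ?_⟩
    intro H hH hsub
    have hFH : F ⊆ H := (Finset.subset_union_right).trans hsub
    have hHF : H \ F ∈ linkC Δ F :=
      ⟨Finset.sdiff_disjoint, by rwa [Finset.sdiff_union_of_subset hFH]⟩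
    have hGsub : G ⊆ H \ F := fun x hx => Finset.mem_sdiff.2
      ⟨hsub (Finset.mem_union_left _ hx), fun hxF => (Finset.disjoint_left.1 hdisj hx) hxF⟩
    have hGeq : G = H \ F := hmax _ hHF hGsub
    calc G ∪ F = (H \ F) ∪ F := by rw [hGeq]
    _ = H := Finset.sdiff_union_of_subset hFH
  · rintro ⟨hdisj, hf, hfmax⟩
    refine ⟨⟨hdisj, hf⟩, ?_⟩
    intro H hH hsub
    have hequ : G ∪ F = H ∪ F := hfmax _ hH.2 (Finset.union_subset_union_left hsub)
    apply Finset.Subset.antisymm hsub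
    intro x hx
    have hxGF : x ∈ G ∪ F := hequ ▸ Finset.mem_union_left _ hx
    rcases Finset.mem_union.1 hxGF with h | h
    · exact h
    · exact absurd h (Finset.disjoint_left.1 hH.1 hx)

lemma myStrong_connected [Fintype V] {Δ : Set (Finset V)} (hdc : IsComplex Δ)
    (hSC : StronglyConnectedComplex Δ) (hcard : ∀ K ∈ facetsOf Δ, 2 ≤ K.card) :
    ComplexConnected Δ := by
  have pair : ∀ K ∈ Δ, ∀ a ∈ K, ∀ b ∈ K,
      Relation.ReflTransGen (fun a b => a ≠ b ∧ ({a, b} : Finset V) ∈ Δ) a b := by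
    intro K hK a ha b hb
    rcases eq_or_ne a b with rfl | hne
    · exact Relation.ReflTransGen.refl
    · exact Relation.ReflTransGen.single
        ⟨hne, hdc K hK _ (Finset.insert_subset ha (Finset.singleton_subset_iff.2 hb))⟩
  intro u hu w hw
  obtain ⟨A, hA, hAu⟩ := myExists_facet hu
  obtain ⟨B, hB, hBw⟩ := myExists_facet hw
  have hu' : u ∈ A := hAu (Finset.mem_singleton_self u)
  have hw' : w ∈ B := hBw (Finset.mem_singleton_self w)
  have key : ∀ X, Relation.ReflTransGen
      (fun A B => A ∈ facetsOf Δ ∧ B ∈ facetsOf Δ ∧ (A ∩ B).card = A.card - 1) A X →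
      ∀ x ∈ X, Relation.ReflTransGen (fun a b => a ≠ b ∧ ({a, b} : Finset V) ∈ Δ) u x := by
    intro X hX
    induction hX with
    | refl => exact fun x hx => pair A hA.1 u hu' x hx
    | @tail X Y hAX hstep ih =>
        obtain ⟨hXf, hYf, hcardXY⟩ := hstep
        have h2 : 2 ≤ X.card := hcard X hXf
        have hne : (X ∩ Y).Nonempty := Finset.card_pos.1 (by omega)
        obtain ⟨z, hz⟩ := hne
        intro y hy
        exact (ih z (Finset.mem_of_mem_inter_left hz)).trans
          (pair Y hYf.1 z (Finset.mem_of_mem_inter_right hz) y hy)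
  exact key B (hSC A hA B hB) w hw'

end GeneralAux
section ValAux

/-- Arithmetic (truncated-subtraction–free) circular nearness predicate. -/
def natNear (n d p q : ℕ) : Prop :=
  (p ≤ q + d ∧ q ≤ p + d) ∨ n + q ≤ d + p ∨ n + p ≤ d + q

lemma myVal_sub₂ {n : ℕ} [NeZero n] (x y : ZMod n) :
    ((x - y).val + y.val = x.val ∨ (x - y).val + y.val = x.val + n) ∧ (x - y).val < n := by
  have hx := ZMod.val_lt x
  have hy := ZMod.val_lt y
  have hkey : ((x.val + (n - y.val) : ℕ) : ZMod n) = x - y := by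
    rw [Nat.cast_add, Nat.cast_sub hy.le, ZMod.natCast_zmod_val, ZMod.natCast_zmod_val,
      ZMod.natCast_self]
    ring
  have hval : (x - y).val = (x.val + (n - y.val)) % n := by
    rw [← hkey, ZMod.val_natCast]
  refine ⟨?_, ZMod.val_lt _⟩
  rcases le_or_gt y.val x.val with h | h
  · left
    have h2 : x.val + (n - y.val) = (x.val - y.val) + n := by omega
    rw [hval, h2, Nat.add_mod_right, Nat.mod_eq_of_lt (by omega)]
    omega
  · right
    rw [hval, Nat.mod_eq_of_lt (by omega)]
    omega

lemma myVal_eq {n : ℕ} [NeZero n] {x y : ZMod n} : x = y ↔ x.val = y.val := by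
  constructor
  · rintro rfl; rfl
  · intro h; exact ZMod.val_injective n h

lemma myAdj_def {n : ℕ} (S : Set ℕ) (x y : ZMod n) :
    (circulantGraph n S).Adj x y ↔ x ≠ y ∧ ((x - y).val ∈ S ∨ (y - x).val ∈ S) :=
  Iff.rfl

lemma myNear_iff {n d : ℕ} (hn : 2 * d + 2 ≤ n) (x y : ZMod n) :
    ¬ (circulantGraph n (Set.Icc (d + 1) (n / 2))).Adj x y ↔ natNear n d x.val y.val := by
  haveI : NeZero n := ⟨by omega⟩
  rw [myAdj_def]
  obtain ⟨e1, b1⟩ := myVal_sub₂ x y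
  obtain ⟨e2, b2⟩ := myVal_sub₂ y x
  have hx := ZMod.val_lt x
  have hy := ZMod.val_lt y
  rcases eq_or_ne x y with rfl | hxy
  · exact iff_of_true (fun h => h.1 rfl) (Or.inl ⟨by omega, by omega⟩)
  · have hv : x.val ≠ y.val := fun h => hxy (ZMod.val_injective n h)
    simp only [hxy, ne_eq, not_false_iff, true_and, Set.mem_Icc, natNear]
    omega

lemma myMem_ind_iff {n d : ℕ} (hn : 2 * d + 2 ≤ n) (F : Finset (ZMod n)) :
    F ∈ IndComplex (circulantGraph n (Set.Icc (d + 1) (n / 2))) ↔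
      ∀ u ∈ F, ∀ v ∈ F, natNear n d u.val v.val := by
  simp only [IndComplex, Set.mem_setOf_eq]
  constructor <;> intro h u hu v hv
  · exact (myNear_iff hn u v).1 (h u hu v hv)
  · exact (myNear_iff hn u v).2 (h u hu v hv)

lemma myMem_offset_image {n : ℕ} [NeZero n] {s : Finset ℕ} (hs : ∀ i ∈ s, i < n)
    (a x : ZMod n) :
    x ∈ s.image (fun i : ℕ => a + (i : ZMod n)) ↔ (x - a).val ∈ s := by
  simp only [Finset.mem_image]
  constructor
  · rintro ⟨i, hi, rfl⟩
    have h2 : (a + (i : ZMod n) - a) = (i : ZMod n) := by ring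
    rw [h2, ZMod.val_cast_of_lt (hs i hi)]
    exact hi
  · intro h
    refine ⟨(x - a).val, h, ?_⟩
    rw [ZMod.natCast_zmod_val]
    ring

lemma myCard_offset_image {n : ℕ} [NeZero n] {s : Finset ℕ} (hs : ∀ i ∈ s, i < n)
    (a : ZMod n) :
    (s.image (fun i : ℕ => a + (i : ZMod n))).card = s.card := by
  apply Finset.card_image_of_injOn
  intro i hi j hj hij
  have h2 : ((i : ℕ) : ZMod n) = ((j : ℕ) : ZMod n) := by
    have := hij
    simpa using this
  have := congrArg ZMod.val h2
  rwa [ZMod.val_cast_of_lt (hs i hi), ZMod.val_cast_of_lt (hs j hj)] at this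

lemma myMem_image_cast {n : ℕ} [NeZero n] {s : Finset ℕ} (hs : ∀ i ∈ s, i < n)
    (x : ZMod n) :
    x ∈ s.image (Nat.cast : ℕ → ZMod n) ↔ x.val ∈ s := by
  simp only [Finset.mem_image]
  constructor
  · rintro ⟨i, hi, rfl⟩
    rwa [ZMod.val_cast_of_lt (hs i hi)]
  · intro h
    exact ⟨x.val, h, ZMod.natCast_zmod_val x⟩

/-- The arc of length `d` starting at `a`. -/
def arcF (n d : ℕ) (a : ZMod n) : Finset (ZMod n) :=
  (Finset.range (d + 1)).image (fun i : ℕ => a + (i : ZMod n))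

lemma myMem_arc {n d : ℕ} [NeZero n] (hdn : d < n) {a x : ZMod n} :
    x ∈ arcF n d a ↔ (x - a).val ≤ d := by
  rw [arcF, myMem_offset_image (fun i hi => by simp only [Finset.mem_range] at hi; omega)]
  simp [Nat.lt_succ_iff]

lemma myCard_arc {n d : ℕ} [NeZero n] (hdn : d < n) (a : ZMod n) :
    (arcF n d a).card = d + 1 := by
  rw [arcF, myCard_offset_image (fun i hi => by simp only [Finset.mem_range] at hi; omega)]
  simp

lemma myArc_indep {n d : ℕ} (hn : 2 * d + 2 ≤ n) (a : ZMod n) :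
    arcF n d a ∈ IndComplex (circulantGraph n (Set.Icc (d + 1) (n / 2))) := by
  haveI : NeZero n := ⟨by omega⟩
  rw [myMem_ind_iff hn]
  intro u hu v hv
  rw [myMem_arc (by omega)] at hu hv
  obtain ⟨e1, b1⟩ := myVal_sub₂ u a
  obtain ⟨e2, b2⟩ := myVal_sub₂ v a
  have hu' := ZMod.val_lt u
  have hv' := ZMod.val_lt v
  have ha := ZMod.val_lt a
  simp only [natNear]
  omega

lemma myWindow {n d : ℕ} (hn : 2 * d + 2 ≤ n) (hn3 : 3 * d < n) {F : Finset (ZMod n)}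
    (hF : ∀ u ∈ F, ∀ v ∈ F, natNear n d u.val v.val) :
    ∃ a : ZMod n, ∀ x ∈ F, (x - a).val ≤ d := by
  haveI : NeZero n := ⟨by omega⟩
  rcases F.eq_empty_or_nonempty with rfl | ⟨u₀, hu₀⟩
  · exact ⟨0, by simp⟩
  by_cases hB : ∀ x ∈ F, (x - u₀).val ≤ d
  · exact ⟨u₀, hB⟩
  push_neg at hB
  obtain ⟨x₁, hx₁F, hx₁⟩ := hB
  have hBne : (F.filter (fun x => d < (x - u₀).val)).Nonempty :=
    ⟨x₁, Finset.mem_filter.2 ⟨hx₁F, hx₁⟩⟩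
  obtain ⟨u, hu, humin⟩ := Finset.exists_min_image _ (fun x => (x - u₀).val) hBne
  have huF : u ∈ F := (Finset.mem_filter.1 hu).1
  have hud : d < (u - u₀).val := (Finset.mem_filter.1 hu).2
  refine ⟨u, ?_⟩
  intro x hx
  have hnear := hF x hx u huF
  have hnear0x := hF x hx u₀ hu₀
  have hnear0u := hF u huF u₀ hu₀
  obtain ⟨e1, b1⟩ := myVal_sub₂ x u₀
  obtain ⟨e2, b2⟩ := myVal_sub₂ u u₀
  obtain ⟨e3, b3⟩ := myVal_sub₂ x u
  obtain ⟨e4, b4⟩ := myVal_sub₂ u x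
  have hx' := ZMod.val_lt x
  have hu' := ZMod.val_lt u
  have hu0' := ZMod.val_lt u₀
  by_cases hxB : d < (x - u₀).val
  · have hmin := humin x (Finset.mem_filter.2 ⟨hx, hxB⟩)
    simp only [natNear] at hnear hnear0x hnear0u ⊢
    omega
  · simp only [natNear] at hnear hnear0x hnear0u ⊢
    omega

end ValAux
section RegimeA

/-- Abbreviation for the independence complex of our circulant graph. -/
def ΔC (n d : ℕ) : Set (Finset (ZMod n)) :=
  IndComplex (circulantGraph n (Set.Icc (d + 1) (n / 2)))

/-- The strong-connectivity step relation between facets. -/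
def linkRel {V : Type*} [DecidableEq V] (Δ' : Set (Finset V)) :
    Finset V → Finset V → Prop :=
  fun A B => A ∈ facetsOf Δ' ∧ B ∈ facetsOf Δ' ∧ (A ∩ B).card = A.card - 1

lemma mySCC_iff {V : Type*} [DecidableEq V] (Δ' : Set (Finset V)) :
    StronglyConnectedComplex Δ' ↔
      ∀ F ∈ facetsOf Δ', ∀ F' ∈ facetsOf Δ',
        Relation.ReflTransGen (linkRel Δ') F F' := Iff.rfl

lemma myArc_facet {n d : ℕ} (hn : 2 * d + 2 ≤ n) (hn3 : 3 * d < n) (a : ZMod n) :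
    arcF n d a ∈ facetsOf (ΔC n d) := by
  haveI : NeZero n := ⟨by omega⟩
  refine ⟨myArc_indep hn a, ?_⟩
  intro H hH hsub
  obtain ⟨b, hb⟩ := myWindow hn hn3 ((myMem_ind_iff hn H).1 hH)
  have hsub2 : H ⊆ arcF n d b := fun x hx => (myMem_arc (by omega)).2 (hb x hx)
  have hab : arcF n d a = arcF n d b := by
    apply Finset.eq_of_subset_of_card_le (hsub.trans hsub2)
    rw [myCard_arc (by omega), myCard_arc (by omega)]
  exact Finset.Subset.antisymm hsub (hab ▸ hsub2)

lemma myFacetA {n d : ℕ} (hn : 2 * d + 2 ≤ n) (hn3 : 3 * d < n) {H : Finset (ZMod n)}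
    (hH : H ∈ facetsOf (ΔC n d)) : ∃ a, H = arcF n d a := by
  haveI : NeZero n := ⟨by omega⟩
  obtain ⟨a, ha⟩ := myWindow hn hn3 ((myMem_ind_iff hn H).1 hH.1)
  have hsub : H ⊆ arcF n d a := fun x hx => (myMem_arc (by omega)).2 (ha x hx)
  exact ⟨a, hH.2 _ (myArc_indep hn a) hsub⟩

lemma myArcDiff_facet {n d : ℕ} (hn : 2 * d + 2 ≤ n) (hn3 : 3 * d < n)
    {F : Finset (ZMod n)} {c : ZMod n} (h1 : F ⊆ arcF n d c) :
    arcF n d c \ F ∈ facetsOf (linkC (ΔC n d) F) :=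
  myLink_facet_iff.2 ⟨Finset.sdiff_disjoint,
    by rw [Finset.sdiff_union_of_subset h1]; exact myArc_facet hn hn3 c⟩

lemma myArcStep {n d : ℕ} (hn : 2 * d + 2 ≤ n) (hn3 : 3 * d < n)
    {F : Finset (ZMod n)} {c : ZMod n} (h1 : F ⊆ arcF n d c) (h2 : F ⊆ arcF n d (c + 1)) :
    linkRel (linkC (ΔC n d) F) (arcF n d c \ F) (arcF n d (c + 1) \ F) ∧
      linkRel (linkC (ΔC n d) F) (arcF n d (c + 1) \ F) (arcF n d c \ F) := by
  haveI : NeZero n := ⟨by omega⟩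
  have hv1 : (1 : ZMod n).val = 1 := by
    rw [← Nat.cast_one, ZMod.val_cast_of_lt (by omega)]
  have hiic : arcF n d c ∩ arcF n d (c + 1) =
      (Finset.Icc 1 d).image (fun i : ℕ => c + (i : ZMod n)) := by
    ext x
    rw [Finset.mem_inter, myMem_arc (show d < n by omega), myMem_arc (show d < n by omega),
      myMem_offset_image (fun i hi => by simp only [Finset.mem_Icc] at hi; omega)]
    have hxc : x - (c + 1) = (x - c) - 1 := by ring
    rw [hxc]
    obtain ⟨e, b⟩ := myVal_sub₂ (x - c) (1 : ZMod n)
    rw [hv1] at e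
    have hb2 := ZMod.val_lt (x - c)
    simp only [Finset.mem_Icc]
    omega
  have hFsub : F ⊆ arcF n d c ∩ arcF n d (c + 1) := Finset.subset_inter h1 h2
  have hFd : F.card ≤ d := by
    have := Finset.card_le_card hFsub
    rwa [hiic, myCard_offset_image (fun i hi => by simp only [Finset.mem_Icc] at hi; omega),
      Nat.card_Icc] at this
  have hint : (arcF n d c \ F) ∩ (arcF n d (c + 1) \ F) = (arcF n d c ∩ arcF n d (c + 1)) \ F := by
    ext x
    simp only [Finset.mem_sdiff, Finset.mem_inter]
    tauto
  have hcardint : ((arcF n d c \ F) ∩ (arcF n d (c + 1) \ F)).card = d - F.card := by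
    rw [hint, Finset.card_sdiff_of_subset hFsub, hiic,
      myCard_offset_image (fun i hi => by simp only [Finset.mem_Icc] at hi; omega), Nat.card_Icc]
    omega
  have hcard1 : (arcF n d c \ F).card = d + 1 - F.card := by
    rw [Finset.card_sdiff_of_subset h1, myCard_arc (by omega)]
  have hcard2 : (arcF n d (c + 1) \ F).card = d + 1 - F.card := by
    rw [Finset.card_sdiff_of_subset h2, myCard_arc (by omega)]
  have hintcomm : ((arcF n d (c + 1) \ F) ∩ (arcF n d c \ F)).card = d - F.card := by
    rw [Finset.inter_comm]; exact hcardint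
  exact ⟨⟨myArcDiff_facet hn hn3 h1, myArcDiff_facet hn hn3 h2, by omega⟩,
    ⟨myArcDiff_facet hn hn3 h2, myArcDiff_facet hn hn3 h1, by omega⟩⟩

lemma myChainA {n d : ℕ} (hn : 2 * d + 2 ≤ n) (hn3 : 3 * d < n) {F : Finset (ZMod n)}
    (j : ℕ) (c : ZMod n) (h : ∀ i : ℕ, i ≤ j → F ⊆ arcF n d (c + (i : ZMod n))) :
    Relation.ReflTransGen (linkRel (linkC (ΔC n d) F))
        (arcF n d c \ F) (arcF n d (c + (j : ZMod n)) \ F) ∧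
      Relation.ReflTransGen (linkRel (linkC (ΔC n d) F))
        (arcF n d (c + (j : ZMod n)) \ F) (arcF n d c \ F) := by
  induction j with
  | zero => simp only [Nat.cast_zero, add_zero]; exact ⟨.refl, .refl⟩
  | succ j ih =>
      obtain ⟨ih1, ih2⟩ := ih (fun i hi => h i (le_trans hi (Nat.le_succ j)))
      have hco : c + ((j + 1 : ℕ) : ZMod n) = (c + (j : ℕ)) + 1 := by push_cast; ring
      have hj1 : F ⊆ arcF n d (c + (j : ZMod n)) := h j (Nat.le_succ j)
      have hj2 : F ⊆ arcF n d ((c + (j : ZMod n)) + 1) := by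
        rw [← hco]; exact h (j + 1) le_rfl
      obtain ⟨s1, s2⟩ := myArcStep hn hn3 hj1 hj2
      rw [hco]
      exact ⟨ih1.tail s1, Relation.ReflTransGen.head s2 ih2⟩

lemma mySC_A {n d : ℕ} (hn : 2 * d + 2 ≤ n) (hn3 : 3 * d < n) (F : Finset (ZMod n)) :
    StronglyConnectedComplex (linkC (ΔC n d) F) := by
  haveI : NeZero n := ⟨by omega⟩
  rw [mySCC_iff]
  intro A hA B hB
  obtain ⟨hdisjA, hfA⟩ := myLink_facet_iff.1 hA
  obtain ⟨hdisjB, hfB⟩ := myLink_facet_iff.1 hB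
  obtain ⟨a, ha⟩ := myFacetA hn hn3 hfA
  obtain ⟨b, hb⟩ := myFacetA hn hn3 hfB
  have hFa : F ⊆ arcF n d a := ha ▸ Finset.subset_union_right
  have hFb : F ⊆ arcF n d b := hb ▸ Finset.subset_union_right
  have hAeq : A = arcF n d a \ F := by
    rw [← ha, Finset.union_sdiff_cancel_right hdisjA]
  have hBeq : B = arcF n d b \ F := by
    rw [← hb, Finset.union_sdiff_cancel_right hdisjB]
  rw [hAeq, hBeq]
  rcases F.eq_empty_or_nonempty with rfl | ⟨x₀, hx₀⟩
  · have hkey := myChainA hn hn3 (F := ∅) (b - a).val a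
      (fun i _ => Finset.empty_subset _)
    have hba : a + (((b - a).val : ℕ) : ZMod n) = b := by
      rw [ZMod.natCast_zmod_val]; ring
    rw [hba] at hkey
    exact hkey.1
  · have hta : (x₀ - a).val ≤ d := (myMem_arc (by omega)).1 (hFa hx₀)
    have htb : (x₀ - b).val ≤ d := (myMem_arc (by omega)).1 (hFb hx₀)
    -- generic: if t' ≥ t then the arcs from the "later" offset to the "earlier" one
    have key : ∀ (u v : ZMod n), F ⊆ arcF n d u → F ⊆ arcF n d v →
        (x₀ - u).val ≤ d → (x₀ - v).val ≤ d → (x₀ - u).val ≤ (x₀ - v).val →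
        Relation.ReflTransGen (linkRel (linkC (ΔC n d) F)) (arcF n d v \ F) (arcF n d u \ F) ∧
        Relation.ReflTransGen (linkRel (linkC (ΔC n d) F)) (arcF n d u \ F) (arcF n d v \ F) := by
      intro u v hFu hFv htu htv hle
      set t := (x₀ - u).val with htdef
      set t' := (x₀ - v).val with htdef'
      have hvu : v + ((t' - t : ℕ) : ZMod n) = u := by
        have h1 : ((t' : ℕ) : ZMod n) = x₀ - v := ZMod.natCast_zmod_val _
        have h2 : ((t : ℕ) : ZMod n) = x₀ - u := ZMod.natCast_zmod_val _
        have h3 : ((t' - t : ℕ) : ZMod n) = ((t' : ℕ) : ZMod n) - ((t : ℕ) : ZMod n) := by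
          rw [Nat.cast_sub hle]
        rw [h3, h1, h2]; ring
      have hmid : ∀ i : ℕ, i ≤ t' - t → F ⊆ arcF n d (v + (i : ZMod n)) := by
        intro i hi x hx
        have hxv : (x - v).val ≤ d := (myMem_arc (by omega)).1 (hFv hx)
        have hxu : (x - u).val ≤ d := (myMem_arc (by omega)).1 (hFu hx)
        rw [myMem_arc (by omega)]
        have hrw : x - (v + (i : ZMod n)) = (x - v) - ((i : ℕ) : ZMod n) := by ring
        have hrw2 : x - u = (x - v) - ((t' - t : ℕ) : ZMod n) := by
          rw [← hvu]; ring
        rw [hrw]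
        obtain ⟨e1, b1⟩ := myVal_sub₂ (x - v) ((i : ℕ) : ZMod n)
        obtain ⟨e2, b2⟩ := myVal_sub₂ (x - v) ((t' - t : ℕ) : ZMod n)
        rw [← hrw2] at e2
        have hvi : ((i : ℕ) : ZMod n).val = i := ZMod.val_cast_of_lt (by omega)
        have hvtt : ((t' - t : ℕ) : ZMod n).val = t' - t := ZMod.val_cast_of_lt (by omega)
        rw [hvi] at e1
        rw [hvtt] at e2
        have hbv := ZMod.val_lt (x - v)
        omega
      have hchain := myChainA hn hn3 (t' - t) v hmid
      rw [hvu] at hchain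
      exact hchain
    rcases le_or_gt (x₀ - a).val (x₀ - b).val with hle | hlt
    · exact (key a b hFa hFb hta htb hle).2
    · exact (key b a hFb hFa htb hta hlt.le).1

lemma myWC_A {n d : ℕ} (hn : 2 * d + 2 ≤ n) (hn3 : 3 * d < n) :
    WellCovered (circulantGraph n (Set.Icc (d + 1) (n / 2))) := by
  haveI : NeZero n := ⟨by omega⟩
  intro A hA B hB
  obtain ⟨a, rfl⟩ := myFacetA hn hn3 hA
  obtain ⟨b, rfl⟩ := myFacetA hn hn3 hB
  rw [myCard_arc (by omega), myCard_arc (by omega)]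

lemma myLinkFacetCard_A {n d : ℕ} (hn : 2 * d + 2 ≤ n) (hn3 : 3 * d < n)
    {F K : Finset (ZMod n)} (hK : K ∈ facetsOf (linkC (ΔC n d) F)) :
    K.card = d + 1 - F.card := by
  haveI : NeZero n := ⟨by omega⟩
  obtain ⟨hdisj, hf⟩ := myLink_facet_iff.1 hK
  obtain ⟨a, ha⟩ := myFacetA hn hn3 hf
  have := congrArg Finset.card ha
  rw [Finset.card_union_of_disjoint hdisj, myCard_arc (by omega)] at this
  omega

lemma myS2_A {n d : ℕ} (hn : 2 * d + 2 ≤ n) (hn3 : 3 * d < n) :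
    GraphS2 (circulantGraph n (Set.Icc (d + 1) (n / 2))) := by
  haveI : NeZero n := ⟨by omega⟩
  intro F hF hex
  apply myStrong_connected
    (myLink_isComplex (myInd_isComplex _) F) (mySC_A hn hn3 F)
  intro K hK
  obtain ⟨H, hH, h2⟩ := hex
  obtain ⟨K₀, hK₀, hHK₀⟩ := myExists_facet hH
  have hc0 : H.card ≤ K₀.card := Finset.card_le_card hHK₀
  rw [myLinkFacetCard_A hn hn3 hK₀] at hc0
  rw [myLinkFacetCard_A hn hn3 hK]
  omega

end RegimeA
section RegimeB

lemma myAdjB {n d : ℕ} (hB : n = 2 * d + 2) (x y : ZMod n) :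
    (circulantGraph n (Set.Icc (d + 1) (n / 2))).Adj x y ↔ x = y + ((d + 1 : ℕ) : ZMod n) := by
  haveI : NeZero n := ⟨by omega⟩
  have hcv : ((d + 1 : ℕ) : ZMod n).val = d + 1 := ZMod.val_cast_of_lt (by omega)
  rw [myAdj_def]
  obtain ⟨e1, b1⟩ := myVal_sub₂ x y
  obtain ⟨e2, b2⟩ := myVal_sub₂ y x
  have hx := ZMod.val_lt x
  have hy := ZMod.val_lt y
  constructor
  · rintro ⟨hne, h⟩
    have hv : x.val ≠ y.val := fun hc => hne (ZMod.val_injective n hc)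
    simp only [Set.mem_Icc] at h
    have hval : (x - y).val = d + 1 := by omega
    have hxy : x - y = ((d + 1 : ℕ) : ZMod n) := by
      rw [← ZMod.natCast_zmod_val (x - y), hval]
    rw [← hxy]; ring
  · rintro rfl
    have hsub : y + ((d + 1 : ℕ) : ZMod n) - y = ((d + 1 : ℕ) : ZMod n) := by ring
    have hv1 : (y + ((d + 1 : ℕ) : ZMod n) - y).val = d + 1 := by rw [hsub, hcv]
    refine ⟨?_, Or.inl ?_⟩
    · intro hc
      rw [hc] at hv1
      simp [ZMod.val_zero] at hv1
    · simp only [Set.mem_Icc]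
      omega

lemma myCB_val {n d : ℕ} (hB : n = 2 * d + 2) : ((d + 1 : ℕ) : ZMod n).val = d + 1 := by
  haveI : NeZero n := ⟨by omega⟩
  exact ZMod.val_cast_of_lt (by omega)

lemma myCB_add {n d : ℕ} (hB : n = 2 * d + 2) :
    ((d + 1 : ℕ) : ZMod n) + ((d + 1 : ℕ) : ZMod n) = 0 := by
  have h1 : ((d + 1 : ℕ) : ZMod n) + ((d + 1 : ℕ) : ZMod n) = ((2 * d + 2 : ℕ) : ZMod n) := by
    push_cast; ring
  rw [h1, ← hB, ZMod.natCast_self]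

lemma myCB_ne {n d : ℕ} (hB : n = 2 * d + 2) (x : ZMod n) :
    x + ((d + 1 : ℕ) : ZMod n) ≠ x := by
  haveI : NeZero n := ⟨by omega⟩
  intro h
  have h2 : ((d + 1 : ℕ) : ZMod n) = 0 := by
    have := congrArg (fun z => z - x) h
    simpa using this
  have := congrArg ZMod.val h2
  rw [myCB_val hB] at this
  simp [ZMod.val_zero] at this

lemma myFacetB_iff {n d : ℕ} (hB : n = 2 * d + 2) {F : Finset (ZMod n)} :
    F ∈ facetsOf (ΔC n d) ↔
      ((∀ u ∈ F, u + ((d + 1 : ℕ) : ZMod n) ∉ F) ∧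
        ∀ v : ZMod n, v ∈ F ∨ v + ((d + 1 : ℕ) : ZMod n) ∈ F) := by
  haveI : NeZero n := ⟨by omega⟩
  set c := ((d + 1 : ℕ) : ZMod n) with hcdef
  have hcc : c + c = 0 := myCB_add hB
  have hmem : ∀ (H : Finset (ZMod n)), H ∈ ΔC n d ↔
      ∀ u ∈ H, ∀ v ∈ H, ¬ (circulantGraph n (Set.Icc (d + 1) (n / 2))).Adj u v := by
    intro H; exact Iff.rfl
  constructor
  · rintro ⟨hind, hmax⟩
    rw [hmem] at hind
    constructor
    · intro u hu hcu
      exact hind (u + c) hcu u hu ((myAdjB hB _ _).2 rfl)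
    · intro v
      by_contra hcon
      push_neg at hcon
      obtain ⟨hv, hvc⟩ := hcon
      have hins : insert v F ∈ ΔC n d := by
        rw [hmem]
        intro u hu w hw hA
        have he := (myAdjB hB u w).1 hA
        rcases Finset.mem_insert.1 hu with rfl | hu' <;>
          rcases Finset.mem_insert.1 hw with rfl | hw'
        · exact (myCB_ne hB w) he.symm
        · have hw2 : w = u + c := by rw [he, add_assoc, hcc, add_zero]
          exact hvc (hw2 ▸ hw')
        · exact hvc (he ▸ hu')
        · exact hind u hu' w hw' hA
      have := hmax _ hins (Finset.subset_insert v F)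
      exact hv (this ▸ Finset.mem_insert_self v F)
  · rintro ⟨hind', htrans⟩
    constructor
    · rw [hmem]
      intro u hu w hw hA
      have he := (myAdjB hB u w).1 hA
      exact hind' w hw (he ▸ hu)
    · intro H hH hFH
      apply Finset.Subset.antisymm hFH
      intro x hx
      by_contra hxF
      have hxcF : x + c ∈ F := (htrans x).resolve_left hxF
      rw [hmem] at hH
      exact hH x hx (x + c) (hFH hxcF) ((myAdjB hB _ _).2 (by rw [add_assoc, hcc, add_zero]))

lemma myFacetCardB {n d : ℕ} (hB : n = 2 * d + 2) {F : Finset (ZMod n)}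
    (hF : F ∈ facetsOf (ΔC n d)) : F.card = d + 1 := by
  haveI : NeZero n := ⟨by omega⟩
  set c := ((d + 1 : ℕ) : ZMod n) with hcdef
  obtain ⟨h1, h2⟩ := (myFacetB_iff hB).1 hF
  have hdisj : Disjoint F (F.image (· + c)) := by
    rw [Finset.disjoint_left]
    intro x hxF hxI
    obtain ⟨u, hu, rfl⟩ := Finset.mem_image.1 hxI
    exact h1 u hu hxF
  have huniv : F ∪ F.image (· + c) = Finset.univ := by
    apply Finset.eq_univ_of_forall
    intro v
    rcases h2 v with h | h
    · exact Finset.mem_union_left _ h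
    · refine Finset.mem_union_right _ (Finset.mem_image.2 ⟨v + c, h, ?_⟩)
      rw [add_assoc, myCB_add hB, add_zero]
  have hcards := congrArg Finset.card huniv
  rw [Finset.card_union_of_disjoint hdisj,
    Finset.card_image_of_injective F (add_left_injective c), Finset.card_univ,
    ZMod.card n] at hcards
  omega

lemma myWC_B {n d : ℕ} (hB : n = 2 * d + 2) :
    WellCovered (circulantGraph n (Set.Icc (d + 1) (n / 2))) := by
  intro A hA B hB'
  rw [myFacetCardB hB hA, myFacetCardB hB hB']

lemma mySwapB {n d : ℕ} (hB : n = 2 * d + 2) {K : Finset (ZMod n)}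
    (hK : K ∈ facetsOf (ΔC n d)) {x : ZMod n} (hx : x ∈ K) :
    insert (x + ((d + 1 : ℕ) : ZMod n)) (K.erase x) ∈ facetsOf (ΔC n d) := by
  haveI : NeZero n := ⟨by omega⟩
  set c := ((d + 1 : ℕ) : ZMod n) with hcdef
  have hcc : c + c = 0 := myCB_add hB
  obtain ⟨h1, h2⟩ := (myFacetB_iff hB).1 hK
  rw [myFacetB_iff hB]
  constructor
  · intro u hu hcu
    rcases Finset.mem_insert.1 hu with rfl | hu'
    · have hux : x + c + c = x := by rw [add_assoc, hcc, add_zero]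
      rw [hux] at hcu
      rcases Finset.mem_insert.1 hcu with h | h
      · exact (myCB_ne hB x) h.symm
      · exact (Finset.mem_erase.1 h).1 rfl
    · have huK : u ∈ K := Finset.mem_of_mem_erase hu'
      rcases Finset.mem_insert.1 hcu with h | h
      · exact (Finset.mem_erase.1 hu').1 (add_right_cancel h)
      · exact h1 u huK (Finset.mem_of_mem_erase h)
  · intro v
    rcases h2 v with h | h
    · rcases eq_or_ne v x with rfl | hne
      · right
        exact Finset.mem_insert_self _ _
      · left
        exact Finset.mem_insert_of_mem (Finset.mem_erase.2 ⟨hne, h⟩)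
    · rcases eq_or_ne (v + c) x with he | hne
      · left
        have hvx : v = x + c := by
          have h2 : v + (c + c) = x + c := by rw [← add_assoc, he]
          rw [hcc, add_zero] at h2
          exact h2
        rw [hvx]
        exact Finset.mem_insert_self _ _
      · right
        exact Finset.mem_insert_of_mem (Finset.mem_erase.2 ⟨hne, h⟩)

lemma mySC_B {n d : ℕ} (hB : n = 2 * d + 2) (F : Finset (ZMod n)) :
    StronglyConnectedComplex (linkC (ΔC n d) F) := by
  haveI : NeZero n := ⟨by omega⟩
  set c := ((d + 1 : ℕ) : ZMod n) with hcdef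
  have hcc : c + c = 0 := myCB_add hB
  rw [mySCC_iff]
  have main : ∀ (m : ℕ) (A B : Finset (ZMod n)), (A \ B).card = m →
      A ∈ facetsOf (linkC (ΔC n d) F) → B ∈ facetsOf (linkC (ΔC n d) F) →
      Relation.ReflTransGen (linkRel (linkC (ΔC n d) F)) A B := by
    intro m
    induction m with
    | zero =>
        intro A B hcard hA hB'
        have hAB : A ⊆ B := by
          intro x hx
          by_contra hxB
          have : x ∈ A \ B := Finset.mem_sdiff.2 ⟨hx, hxB⟩
          rw [Finset.card_eq_zero.1 hcard] at this
          exact absurd this (Finset.notMem_empty x)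
        rw [hA.2 B hB'.1 hAB]
    | succ m ih =>
        intro A B hcard hA hB'
        have hne : (A \ B).Nonempty := Finset.card_pos.1 (by omega)
        obtain ⟨x, hxAB⟩ := hne
        obtain ⟨hxA, hxB⟩ := Finset.mem_sdiff.1 hxAB
        obtain ⟨hdisjA, hfA⟩ := myLink_facet_iff.1 hA
        obtain ⟨hdisjB, hfB⟩ := myLink_facet_iff.1 hB'
        obtain ⟨hiA, htA⟩ := (myFacetB_iff hB).1 hfA
        obtain ⟨hiB, htB⟩ := (myFacetB_iff hB).1 hfB
        have hxF : x ∉ F := Finset.disjoint_left.1 hdisjA hxA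
        have hxcAF : x + c ∉ A ∪ F := hiA x (Finset.mem_union_left F hxA)
        have hxcA : x + c ∉ A := fun h => hxcAF (Finset.mem_union_left F h)
        have hxcF : x + c ∉ F := fun h => hxcAF (Finset.mem_union_right A h)
        have hxcB : x + c ∈ B := by
          rcases htB x with h | h
          · rcases Finset.mem_union.1 h with h' | h'
            · exact absurd h' hxB
            · exact absurd h' hxF
          · rcases Finset.mem_union.1 h with h' | h'
            · exact h'
            · exact absurd h' hxcF
        set G₁ : Finset (ZMod n) := insert (x + c) (A.erase x) with hG₁def
        have hKerase : (A ∪ F).erase x = (A.erase x) ∪ F := by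
          rw [Finset.erase_union_distrib, Finset.erase_eq_of_notMem hxF]
        have hGunion : G₁ ∪ F = insert (x + c) ((A ∪ F).erase x) := by
          rw [hKerase, hG₁def]
          ext y
          simp only [Finset.mem_union, Finset.mem_insert]
          tauto
        have hG₁facet : G₁ ∈ facetsOf (linkC (ΔC n d) F) := by
          rw [myLink_facet_iff]
          constructor
          · rw [Finset.disjoint_left]
            intro y hy hyF
            rcases Finset.mem_insert.1 hy with rfl | hy'
            · exact hxcF hyF
            · exact Finset.disjoint_left.1 hdisjA (Finset.mem_of_mem_erase hy') hyF
          · rw [hGunion]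
            exact mySwapB hB hfA (Finset.mem_union_left F hxA)
        have hRel : linkRel (linkC (ΔC n d) F) A G₁ := by
          refine ⟨hA, hG₁facet, ?_⟩
          have hint : A ∩ G₁ = A.erase x := by
            ext y
            simp only [Finset.mem_inter, hG₁def, Finset.mem_insert, Finset.mem_erase]
            constructor
            · rintro ⟨hyA, rfl | ⟨hyx, _⟩⟩
              · exact absurd hyA hxcA
              · exact ⟨hyx, hyA⟩
            · rintro ⟨hyx, hyA⟩
              exact ⟨hyA, Or.inr ⟨hyx, hyA⟩⟩
          rw [hint, Finset.card_erase_of_mem hxA]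
        have hdrop : (G₁ \ B).card = m := by
          have hGB : G₁ \ B = (A \ B).erase x := by
            ext y
            simp only [Finset.mem_sdiff, hG₁def, Finset.mem_insert, Finset.mem_erase]
            constructor
            · rintro ⟨rfl | ⟨hyx, hyA⟩, hyB⟩
              · exact absurd hxcB hyB
              · exact ⟨hyx, hyA, hyB⟩
            · rintro ⟨hyx, hyA, hyB⟩
              exact ⟨Or.inr ⟨hyx, hyA⟩, hyB⟩
          rw [hGB, Finset.card_erase_of_mem hxAB, hcard]
          omega
        exact Relation.ReflTransGen.head hRel (ih G₁ B hdrop hG₁facet hB')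
  intro A hA B hB'
  exact main (A \ B).card A B rfl hA hB'

lemma myLinkFacetCard_B {n d : ℕ} (hB : n = 2 * d + 2)
    {F K : Finset (ZMod n)} (hK : K ∈ facetsOf (linkC (ΔC n d) F)) :
    K.card = d + 1 - F.card := by
  obtain ⟨hdisj, hf⟩ := myLink_facet_iff.1 hK
  have := myFacetCardB hB hf
  rw [Finset.card_union_of_disjoint hdisj] at this
  omega

lemma myS2_B {n d : ℕ} (hB : n = 2 * d + 2) :
    GraphS2 (circulantGraph n (Set.Icc (d + 1) (n / 2))) := by
  haveI : NeZero n := ⟨by omega⟩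
  intro F hF hex
  apply myStrong_connected
    (myLink_isComplex (myInd_isComplex _) F) (mySC_B hB F)
  intro K hK
  obtain ⟨H, hH, h2⟩ := hex
  obtain ⟨K₀, hK₀, hHK₀⟩ := myExists_facet hH
  have hc0 : H.card ≤ K₀.card := Finset.card_le_card hHK₀
  rw [myLinkFacetCard_B hB hK₀] at hc0
  rw [myLinkFacetCard_B hB hK]
  omega

end RegimeB
section RegimeC

/-- Vals of the small face `F₀ = {0,…,3d-n} ∪ {d}`. -/
def S0 (n d : ℕ) : Finset ℕ := insert d (Finset.range (3 * d - n + 1))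

/-- The face `F₀` whose link is disconnected (regime `2d+2 < n ≤ 3d`). -/
def F0 (n d : ℕ) : Finset (ZMod n) := (S0 n d).image (Nat.cast : ℕ → ZMod n)

/-- Vals of the small maximal face `M = F₀ ∪ {2d}`. -/
def SM (n d : ℕ) : Finset ℕ := insert (2 * d) (S0 n d)

/-- Vals of the big component `B = {3d-n+1, …, d-1}` of the link of `F₀`. -/
def SBc (n d : ℕ) : Finset ℕ := Finset.Icc (3 * d - n + 1) (d - 1)

lemma myNearOf {n d : ℕ} (hn : 2 * d + 2 ≤ n) {H : Finset (ZMod n)} (hH : H ∈ ΔC n d)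
    {u v : ZMod n} (hu : u ∈ H) (hv : v ∈ H) : natNear n d u.val v.val :=
  (myMem_ind_iff hn H).1 hH u hu v hv

lemma myCard_image_cast {n : ℕ} [NeZero n] {s : Finset ℕ} (hs : ∀ i ∈ s, i < n) :
    (s.image (Nat.cast : ℕ → ZMod n)).card = s.card := by
  apply Finset.card_image_of_injOn
  intro i hi j hj hij
  have := congrArg ZMod.val hij
  rwa [ZMod.val_cast_of_lt (hs i hi), ZMod.val_cast_of_lt (hs j hj)] at this

lemma myS0_lt {n d : ℕ} (hR1 : 2 * d + 3 ≤ n) (hR2 : n ≤ 3 * d) :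
    ∀ i ∈ S0 n d, i < n := by
  intro i hi
  simp only [S0, Finset.mem_insert, Finset.mem_range] at hi
  omega

lemma mySM_lt {n d : ℕ} (hR1 : 2 * d + 3 ≤ n) (hR2 : n ≤ 3 * d) :
    ∀ i ∈ SM n d, i < n := by
  intro i hi
  simp only [SM, S0, Finset.mem_insert, Finset.mem_range] at hi
  omega

lemma mySB_lt {n d : ℕ} (hR1 : 2 * d + 3 ≤ n) (hR2 : n ≤ 3 * d) :
    ∀ i ∈ SBc n d, i < n := by
  intro i hi
  simp only [SBc, Finset.mem_Icc] at hi
  omega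

lemma myMemF0 {n d : ℕ} (hR1 : 2 * d + 3 ≤ n) (hR2 : n ≤ 3 * d) {x : ZMod n} :
    x ∈ F0 n d ↔ (x.val ≤ 3 * d - n ∨ x.val = d) := by
  haveI : NeZero n := ⟨by omega⟩
  rw [F0, myMem_image_cast (myS0_lt hR1 hR2)]
  simp only [S0, Finset.mem_insert, Finset.mem_range]
  omega

lemma myCastMemF0 {n d : ℕ} (hR1 : 2 * d + 3 ≤ n) (hR2 : n ≤ 3 * d) {j : ℕ}
    (hj : j ≤ 3 * d - n ∨ j = d) : ((j : ℕ) : ZMod n) ∈ F0 n d := by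
  haveI : NeZero n := ⟨by omega⟩
  rw [myMemF0 hR1 hR2, ZMod.val_cast_of_lt (by omega)]
  exact hj

/-- The maximal independent set `M` (vals `{0,…,3d-n} ∪ {d, 2d}`) is a facet. -/
lemma myM_facet {n d : ℕ} (hd : 1 ≤ d) (hR1 : 2 * d + 3 ≤ n) (hR2 : n ≤ 3 * d) :
    (SM n d).image (Nat.cast : ℕ → ZMod n) ∈ facetsOf (ΔC n d) := by
  haveI : NeZero n := ⟨by omega⟩
  have hn : 2 * d + 2 ≤ n := by omega
  have hmem : ∀ x : ZMod n, x ∈ (SM n d).image (Nat.cast : ℕ → ZMod n) ↔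
      (x.val ≤ 3 * d - n ∨ x.val = d ∨ x.val = 2 * d) := by
    intro x
    rw [myMem_image_cast (mySM_lt hR1 hR2)]
    simp only [SM, S0, Finset.mem_insert, Finset.mem_range]
    omega
  constructor
  · rw [show (ΔC n d) = IndComplex (circulantGraph n (Set.Icc (d + 1) (n / 2))) from rfl,
      myMem_ind_iff hn]
    intro u hu v hv
    rw [hmem] at hu hv
    simp only [natNear]
    omega
  · intro H hH hsub
    apply Finset.Subset.antisymm hsub
    intro v hv
    have hnear : ∀ j : ℕ, (j ≤ 3 * d - n ∨ j = d ∨ j = 2 * d) →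
        natNear n d v.val j := by
      intro j hj
      have hjmem : ((j : ℕ) : ZMod n) ∈ H := hsub (by
        rw [hmem, ZMod.val_cast_of_lt (by omega)]; exact hj)
      have := myNearOf hn hH hv hjmem
      rwa [ZMod.val_cast_of_lt (by omega)] at this
    have h0 := hnear 0 (by omega)
    have hd' := hnear d (by omega)
    have h2d := hnear (2 * d) (by omega)
    have hvlt := ZMod.val_lt v
    rw [hmem]
    rcases le_or_gt (n - d) v.val with hge | hlt
    · rcases le_or_gt (2 * d) v.val with h2 | h2
      · simp only [natNear] at h0 hd' h2d
        omega
      · have hj := hnear (v.val + d + 1 - n) (by omega)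
        simp only [natNear] at h0 hd' h2d hj
        omega
    · simp only [natNear] at h0 hd' h2d
      omega

/-- The arc `{0,…,d}` is a facet (for every `n ≥ 2d+2`). -/
lemma myArc0_facet {n d : ℕ} (hn : 2 * d + 2 ≤ n) :
    arcF n d 0 ∈ facetsOf (ΔC n d) := by
  haveI : NeZero n := ⟨by omega⟩
  have harc : ∀ x : ZMod n, x ∈ arcF n d 0 ↔ x.val ≤ d := by
    intro x
    rw [myMem_arc (show d < n by omega), sub_zero]
  constructor
  · exact myArc_indep hn 0
  · intro H hH hsub
    apply Finset.Subset.antisymm hsub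
    intro v hv
    have hnear : ∀ j : ℕ, j ≤ d → natNear n d v.val j := by
      intro j hj
      have hjmem : ((j : ℕ) : ZMod n) ∈ H := hsub (by
        rw [harc, ZMod.val_cast_of_lt (by omega)]; exact hj)
      have := myNearOf hn hH hv hjmem
      rwa [ZMod.val_cast_of_lt (by omega)] at this
    have h0 := hnear 0 (by omega)
    have hvlt := ZMod.val_lt v
    rw [harc]
    rcases le_or_gt (n - d) v.val with hge | hlt
    · have hj := hnear (v.val + d + 1 - n) (by omega)
      simp only [natNear] at h0 hj
      omega
    · simp only [natNear] at h0
      omega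

lemma myF0_in {n d : ℕ} (hd : 1 ≤ d) (hR1 : 2 * d + 3 ≤ n) (hR2 : n ≤ 3 * d) :
    F0 n d ∈ ΔC n d := by
  haveI : NeZero n := ⟨by omega⟩
  apply myInd_isComplex _ _ (myM_facet hd hR1 hR2).1
  exact Finset.image_subset_image (Finset.subset_insert _ _)

/-- Classification of the link vertices of `F₀`. -/
lemma myLinkVertC {n d : ℕ} (hd : 1 ≤ d) (hR1 : 2 * d + 3 ≤ n) (hR2 : n ≤ 3 * d)
    {v : ZMod n} (hv : ({v} : Finset (ZMod n)) ∈ linkC (ΔC n d) (F0 n d)) :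
    (3 * d - n + 1 ≤ v.val ∧ v.val ≤ d - 1) ∨ v.val = 2 * d := by
  haveI : NeZero n := ⟨by omega⟩
  have hn : 2 * d + 2 ≤ n := by omega
  obtain ⟨hdisj, hmem⟩ := hv
  have hvF0 : v ∉ F0 n d := Finset.disjoint_singleton_left.1 hdisj
  rw [myMemF0 hR1 hR2] at hvF0
  have hnear : ∀ j : ℕ, (j ≤ 3 * d - n ∨ j = d) → natNear n d v.val j := by
    intro j hj
    have hjm : ((j : ℕ) : ZMod n) ∈ ({v} : Finset (ZMod n)) ∪ F0 n d :=
      Finset.mem_union_right _ (myCastMemF0 hR1 hR2 hj)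
    have := myNearOf hn hmem (Finset.mem_union_left _ (Finset.mem_singleton_self v)) hjm
    rwa [ZMod.val_cast_of_lt (by omega)] at this
  have h0 := hnear 0 (by omega)
  have hd' := hnear d (by omega)
  have hvlt := ZMod.val_lt v
  rcases le_or_gt (n - d) v.val with hge | hlt
  · rcases le_or_gt (2 * d) v.val with h2 | h2
    · simp only [natNear] at h0 hd'
      omega
    · have hj := hnear (v.val + d + 1 - n) (by omega)
      simp only [natNear] at h0 hd' hj
      omega
  · simp only [natNear] at h0 hd'
    omega

/-- The vertex `2d` is not near any vertex in the middle interval. -/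
lemma my2dFar {n d : ℕ} (hR1 : 2 * d + 3 ≤ n) (hR2 : n ≤ 3 * d) {p : ℕ}
    (h1 : 3 * d - n + 1 ≤ p) (h2 : p ≤ d - 1) : ¬ natNear n d (2 * d) p := by
  simp only [natNear]
  omega

lemma myB_union {n d : ℕ} (hd : 1 ≤ d) (hR1 : 2 * d + 3 ≤ n) (hR2 : n ≤ 3 * d) :
    (SBc n d).image (Nat.cast : ℕ → ZMod n) ∪ F0 n d = arcF n d 0 := by
  haveI : NeZero n := ⟨by omega⟩
  ext x
  rw [Finset.mem_union, myMem_image_cast (mySB_lt hR1 hR2), myMemF0 hR1 hR2,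
    myMem_arc (show d < n by omega), sub_zero]
  simp only [SBc, Finset.mem_Icc]
  omega

lemma myB_facet {n d : ℕ} (hd : 1 ≤ d) (hR1 : 2 * d + 3 ≤ n) (hR2 : n ≤ 3 * d) :
    (SBc n d).image (Nat.cast : ℕ → ZMod n) ∈ facetsOf (linkC (ΔC n d) (F0 n d)) := by
  haveI : NeZero n := ⟨by omega⟩
  rw [myLink_facet_iff]
  constructor
  · rw [Finset.disjoint_left]
    intro x hx hxF
    rw [myMem_image_cast (mySB_lt hR1 hR2)] at hx
    rw [myMemF0 hR1 hR2] at hxF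
    simp only [SBc, Finset.mem_Icc] at hx
    omega
  · rw [myB_union hd hR1 hR2]
    exact myArc0_facet (by omega)

lemma myA_facet {n d : ℕ} (hd : 1 ≤ d) (hR1 : 2 * d + 3 ≤ n) (hR2 : n ≤ 3 * d) :
    ({((2 * d : ℕ) : ZMod n)} : Finset (ZMod n)) ∈ facetsOf (linkC (ΔC n d) (F0 n d)) := by
  haveI : NeZero n := ⟨by omega⟩
  rw [myLink_facet_iff]
  constructor
  · rw [Finset.disjoint_singleton_left, myMemF0 hR1 hR2, ZMod.val_cast_of_lt (by omega)]
    omega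
  · have : ({((2 * d : ℕ) : ZMod n)} : Finset (ZMod n)) ∪ F0 n d =
        (SM n d).image (Nat.cast : ℕ → ZMod n) := by
      rw [SM, Finset.image_insert, F0, ← Finset.insert_eq]
    rw [this]
    exact myM_facet hd hR1 hR2

/-- Any facet of the link of `F₀` is `{2d}` or the middle interval. -/
lemma myLinkFacetsC {n d : ℕ} (hd : 1 ≤ d) (hR1 : 2 * d + 3 ≤ n) (hR2 : n ≤ 3 * d)
    {K : Finset (ZMod n)} (hK : K ∈ facetsOf (linkC (ΔC n d) (F0 n d))) :
    K = ({((2 * d : ℕ) : ZMod n)} : Finset (ZMod n)) ∨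
      K = (SBc n d).image (Nat.cast : ℕ → ZMod n) := by
  haveI : NeZero n := ⟨by omega⟩
  have hn : 2 * d + 2 ≤ n := by omega
  have hdc : IsComplex (ΔC n d) := myInd_isComplex _
  have hldc : IsComplex (linkC (ΔC n d) (F0 n d)) := myLink_isComplex hdc _
  by_cases h2d : ((2 * d : ℕ) : ZMod n) ∈ K
  · left
    have hsub : K ⊆ ({((2 * d : ℕ) : ZMod n)} : Finset (ZMod n)) := by
      intro y hy
      have hyv := myLinkVertC hd hR1 hR2 (myLink_vertex hdc hK.1 hy)
      rcases hyv with ⟨hy1, hy2⟩ | hy3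
      · exfalso
        have hpair : ({((2 * d : ℕ) : ZMod n), y} : Finset (ZMod n)) ∈
            linkC (ΔC n d) (F0 n d) :=
          hldc K hK.1 _ (Finset.insert_subset h2d (Finset.singleton_subset_iff.2 hy))
        have := myNearOf hn hpair.2
          (Finset.mem_union_left _ (Finset.mem_insert_self _ _))
          (Finset.mem_union_left _ (Finset.mem_insert_of_mem (Finset.mem_singleton_self y)))
        rw [ZMod.val_cast_of_lt (by omega)] at this
        exact my2dFar hR1 hR2 hy1 hy2 this
      · rw [Finset.mem_singleton, myVal_eq, ZMod.val_cast_of_lt (by omega), hy3]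
    exact hK.2 _ (myA_facet hd hR1 hR2).1 hsub
  · right
    have hsub : K ⊆ (SBc n d).image (Nat.cast : ℕ → ZMod n) := by
      intro y hy
      have hyv := myLinkVertC hd hR1 hR2 (myLink_vertex hdc hK.1 hy)
      rcases hyv with ⟨hy1, hy2⟩ | hy3
      · rw [myMem_image_cast (mySB_lt hR1 hR2)]
        simp only [SBc, Finset.mem_Icc]
        exact ⟨hy1, hy2⟩
      · exfalso
        apply h2d
        have : y = ((2 * d : ℕ) : ZMod n) := by
          rw [myVal_eq, ZMod.val_cast_of_lt (by omega), hy3]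
        exact this ▸ hy
    exact hK.2 _ (myB_facet hd hR1 hR2).1 hsub

lemma myCardB {n d : ℕ} (hd : 1 ≤ d) (hR1 : 2 * d + 3 ≤ n) (hR2 : n ≤ 3 * d) :
    ((SBc n d).image (Nat.cast : ℕ → ZMod n)).card = d - 1 - (3 * d - n) := by
  haveI : NeZero n := ⟨by omega⟩
  rw [myCard_image_cast (mySB_lt hR1 hR2), SBc, Nat.card_Icc]
  omega

lemma myNotSC_C {n d : ℕ} (hd : 1 ≤ d) (hR1 : 2 * d + 3 ≤ n) (hR2 : n ≤ 3 * d) :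
    ¬ StronglyConnectedComplex (linkC (ΔC n d) (F0 n d)) := by
  haveI : NeZero n := ⟨by omega⟩
  intro hSC
  have hcardB : ((SBc n d).image (Nat.cast : ℕ → ZMod n)).card = d - 1 - (3 * d - n) :=
    myCardB hd hR1 hR2
  have hcardB2 : 2 ≤ ((SBc n d).image (Nat.cast : ℕ → ZMod n)).card := by omega
  have h2dB : ((2 * d : ℕ) : ZMod n) ∉ (SBc n d).image (Nat.cast : ℕ → ZMod n) := by
    rw [myMem_image_cast (mySB_lt hR1 hR2), ZMod.val_cast_of_lt (by omega)]
    simp only [SBc, Finset.mem_Icc]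
    omega
  have hAB : ({((2 * d : ℕ) : ZMod n)} : Finset (ZMod n)) ≠
      (SBc n d).image (Nat.cast : ℕ → ZMod n) := by
    intro h
    exact h2dB (h ▸ Finset.mem_singleton_self _)
  have hrtg := hSC _ (myB_facet hd hR1 hR2) _ (myA_facet hd hR1 hR2)
  have hstuck : ∀ X, Relation.ReflTransGen
      (fun A' B' => A' ∈ facetsOf (linkC (ΔC n d) (F0 n d)) ∧
        B' ∈ facetsOf (linkC (ΔC n d) (F0 n d)) ∧ (A' ∩ B').card = A'.card - 1)
      ((SBc n d).image (Nat.cast : ℕ → ZMod n)) X →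
      X = (SBc n d).image (Nat.cast : ℕ → ZMod n) := by
    intro X hX
    induction hX with
    | refl => rfl
    | @tail Y Z hBY hstep ih =>
        subst ih
        obtain ⟨hBf, hZf, hcard⟩ := hstep
        rcases myLinkFacetsC hd hR1 hR2 hZf with rfl | rfl
        · exfalso
          rw [Finset.inter_singleton_of_notMem h2dB] at hcard
          simp only [Finset.card_empty] at hcard
          omega
        · exfalso
          rw [Finset.inter_self] at hcard
          omega
  exact hAB (hstuck _ hrtg)

end RegimeC
section Finale

lemma myNotWC_C {n d : ℕ} (hd : 1 ≤ d) (hR1 : 2 * d + 3 ≤ n) (hR2 : n ≤ 3 * d) :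
    ¬ WellCovered (circulantGraph n (Set.Icc (d + 1) (n / 2))) := by
  haveI : NeZero n := ⟨by omega⟩
  intro hWC
  have h := hWC _ (myM_facet hd hR1 hR2) _ (myArc0_facet (show 2 * d + 2 ≤ n by omega))
  rw [myCard_image_cast (mySM_lt hR1 hR2), myCard_arc (show d < n by omega)] at h
  have h1 : (d : ℕ) ∉ Finset.range (3 * d - n + 1) := by
    simp only [Finset.mem_range]
    omega
  have h2 : 2 * d ∉ S0 n d := by
    simp only [S0, Finset.mem_insert, Finset.mem_range]
    omega
  rw [SM, Finset.card_insert_of_notMem h2, S0, Finset.card_insert_of_notMem h1,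
    Finset.card_range] at h
  omega

lemma myHypPair_C {n d : ℕ} (hd : 1 ≤ d) (hR1 : 2 * d + 3 ≤ n) (hR2 : n ≤ 3 * d) :
    (∃ H ∈ linkC (ΔC n d) (F0 n d), 2 ≤ H.card) ∧
      (∀ H ∈ linkC (ΔC n d) (F0 n d), H.card ≤ d + 1) := by
  haveI : NeZero n := ⟨by omega⟩
  constructor
  · refine ⟨(SBc n d).image (Nat.cast : ℕ → ZMod n), (myB_facet hd hR1 hR2).1, ?_⟩
    rw [myCardB hd hR1 hR2]
    omega
  · intro H hH
    have hsub : H ⊆ (insert (2 * d) (SBc n d)).image (Nat.cast : ℕ → ZMod n) := by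
      intro y hy
      have hyv := myLinkVertC hd hR1 hR2 (myLink_vertex (myInd_isComplex _) hH hy)
      rw [myMem_image_cast (by
        intro i hi
        simp only [Finset.mem_insert, SBc, Finset.mem_Icc] at hi
        omega)]
      simp only [Finset.mem_insert, SBc, Finset.mem_Icc]
      rcases hyv with ⟨h1, h2⟩ | h3
      · exact Or.inr ⟨h1, h2⟩
      · exact Or.inl h3
    have hc1 := Finset.card_le_card hsub
    have hc2 := Finset.card_image_le (f := (Nat.cast : ℕ → ZMod n)) (s := insert (2 * d) (SBc n d))
    have hc3 := Finset.card_insert_le (2 * d) (SBc n d)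
    have hc4 : (SBc n d).card = d - 1 + 1 - (3 * d - n + 1) := by
      rw [SBc, Nat.card_Icc]
    omega

lemma myNotS2_C {n d : ℕ} (hd : 1 ≤ d) (hR1 : 2 * d + 3 ≤ n) (hR2 : n ≤ 3 * d) :
    ¬ GraphS2 (circulantGraph n (Set.Icc (d + 1) (n / 2))) := by
  haveI : NeZero n := ⟨by omega⟩
  have hn : 2 * d + 2 ≤ n := by omega
  intro hS2
  have hconn := hS2 (F0 n d) (myF0_in hd hR1 hR2) (myHypPair_C hd hR1 hR2).1
  have h2dlink : ({((2 * d : ℕ) : ZMod n)} : Finset (ZMod n)) ∈ linkC (ΔC n d) (F0 n d) :=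
    (myA_facet hd hR1 hR2).1
  have hk1link : ({((3 * d - n + 1 : ℕ) : ZMod n)} : Finset (ZMod n)) ∈
      linkC (ΔC n d) (F0 n d) := by
    apply myLink_vertex (myInd_isComplex _) (myB_facet hd hR1 hR2).1
    rw [myMem_image_cast (mySB_lt hR1 hR2), ZMod.val_cast_of_lt (by omega)]
    simp only [SBc, Finset.mem_Icc]
    omega
  have hpath := hconn _ h2dlink _ hk1link
  rcases Relation.ReflTransGen.cases_head hpath with heq | ⟨c, ⟨hne, hpair⟩, _⟩
  · have := congrArg ZMod.val heq
    rw [ZMod.val_cast_of_lt (by omega), ZMod.val_cast_of_lt (by omega)] at this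
    omega
  · have hc : ({c} : Finset (ZMod n)) ∈ linkC (ΔC n d) (F0 n d) :=
      myLink_vertex (myInd_isComplex _) hpair
        (Finset.mem_insert_of_mem (Finset.mem_singleton_self c))
    rcases myLinkVertC hd hR1 hR2 hc with ⟨h1, h2⟩ | h3
    · have hnear := myNearOf hn hpair.2
        (Finset.mem_union_left _ (Finset.mem_insert_self _ _))
        (Finset.mem_union_left _ (Finset.mem_insert_of_mem (Finset.mem_singleton_self c)))
      rw [ZMod.val_cast_of_lt (by omega)] at hnear
      exact my2dFar hR1 hR2 h1 h2 hnear
    · apply hne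
      rw [myVal_eq, ZMod.val_cast_of_lt (by omega), h3]

end Finale
/-- For `n ≥ 2d+2`, `d ≥ 1`, `G = C_n(d+1,…,⌊n/2⌋)` and `Δ = Ind(G)`, the following
are equivalent: (i) `G` is `S₂`; (ii) `G` is well-covered; (iii) `n > 3d` or `n = 2d+2`;
(iv) `link_Δ(F)` is strongly connected for all `F ∈ Δ` with `0 < dim link_Δ(F) ≤ d`. -/
theorem circulant_upper_S2_tfae (n d : ℕ) (hd : 1 ≤ d) (hn : 2 * d + 2 ≤ n)
    (G : SimpleGraph (ZMod n)) (hG : G = circulantGraph n (Set.Icc (d + 1) (n / 2)))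
    (Δ : Set (Finset (ZMod n))) (hΔ : Δ = IndComplex G) :
    List.TFAE
      [GraphS2 G,
       WellCovered G,
       3 * d < n ∨ n = 2 * d + 2,
       ∀ F ∈ Δ,
         ((∃ H ∈ linkC Δ F, 2 ≤ H.card) ∧ (∀ H ∈ linkC Δ F, H.card ≤ d + 1)) →
           StronglyConnectedComplex (linkC Δ F)] := by
  subst hG
  subst hΔ
  tfae_have 3 → 1 := by
    rintro (h3 | h3)
    · exact myS2_A hn h3
    · exact myS2_B h3
  tfae_have 1 → 3 := by
    intro h1
    by_contra h3
    push_neg at h3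
    obtain ⟨h3a, h3b⟩ := h3
    exact myNotS2_C hd (by omega) (by omega) h1
  tfae_have 3 → 2 := by
    rintro (h3 | h3)
    · exact myWC_A hn h3
    · exact myWC_B h3
  tfae_have 2 → 3 := by
    intro h2
    by_contra h3
    push_neg at h3
    obtain ⟨h3a, h3b⟩ := h3
    exact myNotWC_C hd (by omega) (by omega) h2
  tfae_have 3 → 4 := by
    rintro (h3 | h3) F _hF _hyp
    · exact mySC_A hn h3 F
    · exact mySC_B h3 F
  tfae_have 4 → 3 := by
    intro h4
    by_contra h3
    push_neg at h3
    obtain ⟨h3a, h3b⟩ := h3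
    have hR1 : 2 * d + 3 ≤ n := by omega
    have hR2 : n ≤ 3 * d := by omega
    exact myNotSC_C hd hR1 hR2
      (h4 (F0 n d) (myF0_in hd hR1 hR2) (myHypPair_C hd hR1 hR2))
  tfae_finish
end
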